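/- arXiv:2111.06651 — 7 statements merged into one kernel-verified Lean document; each statement's English description precedes it below -/
import Mathlib

section
/- Let E ⊆ ℕ with d̄(E) > 0. Then there exist an infinite subset 𝔫 ⊆ ℕ and a set F ⊆ ℕ with ∂F ⊆ E such that: (i) the sequences d_n(F_(n)) and d_n((E∩F)_(n)) converge along n ∈ 𝔫, the second limit equals d̄(E), and the first limit is ≥ d̄(E); (ii) limsup_{𝔫∋n} d_n((∂F)_(n)) = 0 (F is Følner along 𝔫); (iii) lim_{M→∞} limsup_{𝔫∋n} d_n((F∖E_M)_(n)) = 0 (E is dense in F along 𝔫). -/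
open Filter

/-- `dens E n = #(E ∩ {1,…,n}) / n`, the frequency of `E` in `⟦1,n⟧`. -/
noncomputable def dens (E : Set ℕ) (n : ℕ) : ℝ := ((E ∩ Set.Icc 1 n).ncard : ℝ) / n

/-- Upper asymptotic density of a set of natural numbers. -/
noncomputable def upperDensity (E : Set ℕ) : ℝ := limsup (fun n => dens E n) atTop

/-- Boundary of a set of integers: elements `n ∈ E` with `n-1 ∉ E` or `n+1 ∉ E`. -/
def natBd (E : Set ℕ) : Set ℕ := {n | n ∈ E ∧ ((n - 1) ∉ E ∨ (n + 1) ∉ E)}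

/-- `thick E M` = `E_M`: union of all integer intervals `⟦a,b⟧` with `a,b ∈ E`, `b - a ≤ M`. -/
def thick (E : Set ℕ) (M : ℕ) : Set ℕ :=
  {k | ∃ a b, a ∈ E ∧ b ∈ E ∧ b ≤ a + M ∧ a ≤ k ∧ k ≤ b}

open Topology

lemma finite_slice (A : Set ℕ) (n : ℕ) : (A ∩ Set.Icc 1 n).Finite :=
  (Set.finite_Icc 1 n).inter_of_right A

lemma ncard_Icc_one (n : ℕ) : (Set.Icc 1 n).ncard = n := by
  rw [← Finset.coe_Icc, Set.ncard_coe_finset, Nat.card_Icc]; omega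

lemma ncard_slice_le (A : Set ℕ) (n : ℕ) : (A ∩ Set.Icc 1 n).ncard ≤ n := by
  calc (A ∩ Set.Icc 1 n).ncard ≤ (Set.Icc 1 n).ncard :=
        Set.ncard_le_ncard Set.inter_subset_right (Set.finite_Icc 1 n)
    _ = n := ncard_Icc_one n

lemma dens_nonneg (A : Set ℕ) (n : ℕ) : 0 ≤ dens A n := by
  unfold dens; positivity

lemma dens_le_one (A : Set ℕ) (n : ℕ) : dens A n ≤ 1 := by
  unfold dens
  rcases Nat.eq_zero_or_pos n with h | h
  · simp [h]
  · rw [div_le_one (by exact_mod_cast h)]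
    exact_mod_cast ncard_slice_le A n

lemma dens_mono {A B : Set ℕ} (h : A ⊆ B) (n : ℕ) : dens A n ≤ dens B n := by
  unfold dens
  gcongr (?_ : ℝ) / n
  exact_mod_cast Set.ncard_le_ncard (Set.inter_subset_inter_left _ h) (finite_slice B n)

lemma thick_mono (E : Set ℕ) {M M' : ℕ} (h : M ≤ M') : thick E M ⊆ thick E M' := by
  rintro x ⟨a, b, ha, hb, hab, hax, hxb⟩
  exact ⟨a, b, ha, hb, hab.trans (by omega), hax, hxb⟩

lemma subset_thick (E : Set ℕ) (M : ℕ) : E ⊆ thick E M :=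
  fun x hx => ⟨x, x, hx, hx, by omega, le_rfl, le_rfl⟩

/-- If the slice of `A` is covered by slices of `B` and `C`, then `dens A ≤ dens B + dens C`. -/
lemma dens_le_add {A B C : Set ℕ} (n : ℕ)
    (h : A ∩ Set.Icc 1 n ⊆ (B ∩ Set.Icc 1 n) ∪ (C ∩ Set.Icc 1 n)) :
    dens A n ≤ dens B n + dens C n := by
  unfold dens
  rw [← add_div]
  gcongr (?_ : ℝ) / n
  calc ((A ∩ Set.Icc 1 n).ncard : ℝ) ≤ ((B ∩ Set.Icc 1 n) ∪ (C ∩ Set.Icc 1 n)).ncard := by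
        exact_mod_cast Set.ncard_le_ncard h ((finite_slice B n).union (finite_slice C n))
    _ ≤ ((B ∩ Set.Icc 1 n).ncard + (C ∩ Set.Icc 1 n).ncard : ℕ) := by
        exact_mod_cast Set.ncard_union_le _ _
    _ = _ := by push_cast; ring

lemma dens_diff_eq {A B : Set ℕ} (h : B ⊆ A) (n : ℕ) :
    dens (A \ B) n = dens A n - dens B n := by
  unfold dens
  rw [div_sub_div_same]
  congr 1
  have hsub : B ∩ Set.Icc 1 n ⊆ A ∩ Set.Icc 1 n := Set.inter_subset_inter_left _ h
  have : (A \ B) ∩ Set.Icc 1 n = (A ∩ Set.Icc 1 n) \ (B ∩ Set.Icc 1 n) := by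
    ext x; simp only [Set.mem_inter_iff, Set.mem_diff, Set.mem_Icc]; tauto
  rw [this, Set.ncard_diff hsub (finite_slice B n)]
  have := Set.ncard_le_ncard hsub (finite_slice A n)
  push_cast [Nat.cast_sub this]
  ring

/-- `dens` of a set whose slice has at most `m` elements. -/
lemma dens_le_of_ncard_le {A : Set ℕ} {n m : ℕ} (h : (A ∩ Set.Icc 1 n).ncard ≤ m) :
    dens A n ≤ (m : ℝ) / n := by
  unfold dens
  gcongr (?_ : ℝ) / n
  exact_mod_cast h

/-- counting lemma: a `d`-separated subset of `Ioc p q` has at most `q / d + 1` elements. -/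
lemma sep_ncard {S : Set ℕ} {p q d : ℕ} (hd : 0 < d) (hS : S ⊆ Set.Ioc p q)
    (hsep : ∀ x ∈ S, ∀ y ∈ S, x < y → x + d ≤ y) : S.ncard ≤ q / d + 1 := by
  have key : ∀ x ∈ S, ∀ y ∈ S, x < y → (x - (p+1)) / d < (y - (p+1)) / d := by
    intro x hx y hy hxy
    have h1 : x + d ≤ y := hsep x hx y hy hxy
    have h2 : p + 1 ≤ x := (hS hx).1
    have h3 : (x - (p+1)) + d ≤ y - (p+1) := by omega
    calc (x - (p+1)) / d < (x - (p+1)) / d + 1 := Nat.lt_succ_self _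
      _ = ((x - (p+1)) + d) / d := (Nat.add_div_right _ hd).symm
      _ ≤ (y - (p+1)) / d := Nat.div_le_div_right h3
  have hmap : ∀ x ∈ S, (x - (p+1)) / d ∈ (Finset.Iic (q / d) : Set ℕ) := by
    intro x hx
    simp only [Finset.coe_Iic, Set.mem_Iic]
    exact Nat.div_le_div_right (by have := (hS hx).2; omega)
  have hinj : Set.InjOn (fun x => (x - (p+1)) / d) S := by
    intro x hx y hy hxy
    by_contra hne
    rcases Nat.lt_or_ge x y with h | h
    · exact absurd hxy (Nat.ne_of_lt (key x hx y hy h))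
    · rcases Nat.lt_or_ge y x with h' | h'
      · exact absurd hxy.symm (Nat.ne_of_lt (key y hy x hx h'))
      · omega
  calc S.ncard ≤ (Finset.Iic (q / d) : Set ℕ).ncard :=
        Set.ncard_le_ncard_of_injOn _ hmap hinj (Set.toFinite _)
    _ = q / d + 1 := by rw [Set.ncard_coe_finset]; simp

/-- The set `F`: union over blocks `(n j, n (j+1)]` of intervals `[a,b]` with endpoints
in `E`, of length at most `j+1`, contained in the block. -/
def Fset (E : Set ℕ) (n : ℕ → ℕ) : Set ℕ :=
  {x | ∃ j a b, a ∈ E ∧ b ∈ E ∧ b ≤ a + (j+1) ∧ n j < a ∧ b ≤ n (j+1) ∧ a ≤ x ∧ x ≤ b}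

lemma Fset_right_mem_E {E : Set ℕ} {n : ℕ → ℕ} {x : ℕ}
    (hx : x ∈ Fset E n) (hx1 : x + 1 ∉ Fset E n) : x ∈ E := by
  obtain ⟨j, a, b, haE, hbE, hab, hna, hbn, hax, hxb⟩ := hx
  rcases Nat.lt_or_ge x b with h | h
  · exact absurd ⟨j, a, b, haE, hbE, hab, hna, hbn, by omega, by omega⟩ hx1
  · have : x = b := le_antisymm hxb h
    exact this ▸ hbE

lemma Fset_left_mem_E {E : Set ℕ} {n : ℕ → ℕ} {x : ℕ}
    (hx : x ∈ Fset E n) (hx1 : x - 1 ∉ Fset E n) : x ∈ E := by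
  obtain ⟨j, a, b, haE, hbE, hab, hna, hbn, hax, hxb⟩ := hx
  rcases Nat.lt_or_ge (x - 1) a with h | h
  · have : a = x := by omega
    exact this ▸ haE
  · exact absurd ⟨j, a, b, haE, hbE, hab, hna, hbn, h, by omega⟩ hx1

lemma natBd_Fset_subset (E : Set ℕ) (n : ℕ → ℕ) : natBd (Fset E n) ⊆ E := by
  rintro x ⟨hx, h | h⟩
  · exact Fset_left_mem_E hx h
  · exact Fset_right_mem_E hx h

lemma Fset_gt {E : Set ℕ} {n : ℕ → ℕ} (hn : StrictMono n) {x : ℕ}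
    (hx : x ∈ Fset E n) : n 0 < x := by
  obtain ⟨j, a, b, _, _, _, hna, _, hax, _⟩ := hx
  exact lt_of_le_of_lt (hn.monotone (Nat.zero_le j)) (lt_of_lt_of_le hna hax)

lemma mem_Fset_of_mem_E {E : Set ℕ} {n : ℕ → ℕ} (hn : StrictMono n) {x : ℕ}
    (hxE : x ∈ E) (hx : n 0 < x) : x ∈ Fset E n := by
  have hex : ∃ j, x ≤ n j := ⟨x, hn.le_apply⟩
  classical
  let j0 := Nat.find hex
  have hj0 : x ≤ n j0 := Nat.find_spec hex
  have hj0pos : j0 ≠ 0 := by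
    intro h
    rw [h] at hj0; omega
  refine ⟨j0 - 1, x, x, hxE, hxE, by omega, ?_, ?_, le_rfl, le_rfl⟩
  · have := Nat.find_min hex (m := j0 - 1) (by omega)
    omega
  · have : j0 - 1 + 1 = j0 := by omega
    rw [this]; exact hj0

lemma Fset_block {E : Set ℕ} {n : ℕ → ℕ} (hn : StrictMono n) {j x : ℕ}
    (hx : x ∈ Fset E n) (h1 : n j < x) (h2 : x ≤ n (j+1)) : x ∈ thick E (j+1) := by
  obtain ⟨j', a, b, haE, hbE, hab, hna, hbn, hax, hxb⟩ := hx
  have hj : j' = j := by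
    rcases Nat.lt_trichotomy j' j with h | h | h
    · have : n (j'+1) ≤ n j := hn.monotone (by omega)
      omega
    · exact h
    · have : n (j+1) ≤ n j' := hn.monotone (by omega)
      omega
  subst hj
  exact ⟨a, b, haE, hbE, hab, hax, hxb⟩

lemma natBd_Fset_block_count {E : Set ℕ} {n : ℕ → ℕ} (hn : StrictMono n) (j : ℕ) :
    (natBd (Fset E n) ∩ Set.Ioc (n j) (n (j+1))).ncard ≤ 2 * (n (j+1) / (j+2) + 1) := by
  set F := Fset E n
  set R : Set ℕ := {x | x ∈ Set.Ioc (n j) (n (j+1)) ∧ x ∈ F ∧ x + 1 ∉ F} with hRdef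
  set L : Set ℕ := {x | x ∈ Set.Ioc (n j) (n (j+1)) ∧ x ∈ F ∧ x - 1 ∉ F} with hLdef
  have hsub : natBd F ∩ Set.Ioc (n j) (n (j+1)) ⊆ R ∪ L := by
    rintro x ⟨⟨hxF, h | h⟩, hIoc⟩
    · exact Or.inr ⟨hIoc, hxF, h⟩
    · exact Or.inl ⟨hIoc, hxF, h⟩
  have hRcount : R.ncard ≤ n (j+1) / (j+2) + 1 := by
    refine sep_ncard (by omega) (fun x hx => hx.1) ?_
    intro x hx y hy hxy
    by_contra hc
    push_neg at hc
    have hxE : x ∈ E := Fset_right_mem_E hx.2.1 hx.2.2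
    have hyE : y ∈ E := Fset_right_mem_E hy.2.1 hy.2.2
    exact hx.2.2 ⟨j, x, y, hxE, hyE, by omega, hx.1.1, hy.1.2, by omega, by omega⟩
  have hLcount : L.ncard ≤ n (j+1) / (j+2) + 1 := by
    refine sep_ncard (by omega) (fun x hx => hx.1) ?_
    intro x hx y hy hxy
    by_contra hc
    push_neg at hc
    have hxE : x ∈ E := Fset_left_mem_E hx.2.1 hx.2.2
    have hyE : y ∈ E := Fset_left_mem_E hy.2.1 hy.2.2
    exact hy.2.2 ⟨j, x, y, hxE, hyE, by omega, hx.1.1, hy.1.2, by omega, by omega⟩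
  calc (natBd F ∩ Set.Ioc (n j) (n (j+1))).ncard ≤ (R ∪ L).ncard := by
        refine Set.ncard_le_ncard hsub ?_
        have hRfin : R.Finite := (Set.finite_Ioc (n j) (n (j+1))).subset (fun x hx => hx.1)
        have hLfin : L.Finite := (Set.finite_Ioc (n j) (n (j+1))).subset (fun x hx => hx.1)
        exact hRfin.union hLfin
    _ ≤ R.ncard + L.ncard := Set.ncard_union_le _ _
    _ ≤ 2 * (n (j+1) / (j+2) + 1) := by omega

lemma tendsto_const_div_add (c : ℝ) : Tendsto (fun k : ℕ => c / ((k:ℝ)+1)) atTop (𝓝 0) := by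
  have := tendsto_one_div_add_atTop_nhds_zero_nat.const_mul c
  rw [mul_zero] at this
  simpa [div_eq_mul_inv] using this

lemma tendsto_of_eventually_abs_le {f : ℕ → ℝ} {a : ℝ}
    (h : ∀ᶠ k in atTop, |f k - a| ≤ 1/((k:ℝ)+1)) : Tendsto f atTop (𝓝 a) := by
  rw [← tendsto_sub_nhds_zero_iff]
  refine squeeze_zero_norm' ?_ tendsto_one_div_add_atTop_nhds_zero_nat
  simpa [Real.norm_eq_abs] using h

lemma eventually_abs_lt_of_tendsto {f : ℕ → ℝ} {a ε : ℝ} (hε : 0 < ε)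
    (h : Tendsto f atTop (𝓝 a)) : ∀ᶠ k in atTop, |f k - a| < ε := by
  have := Metric.tendsto_nhds.mp h ε hε
  simpa [Real.dist_eq] using this

lemma nat_div_le_real {a b c d : ℕ} (hd : 0 < d) (h : d * a ≤ c * b) (hb : 0 < b) :
    (a:ℝ)/b ≤ (c:ℝ)/d := by
  rw [div_le_div_iff₀ (by exact_mod_cast hb) (by exact_mod_cast hd)]
  rw [mul_comm d a] at h
  exact_mod_cast h

/-- For any `E ⊆ ℕ` with positive upper density there are a subsequence `𝔫` and a set `F`
with `∂F ⊆ E` such that `d^𝔫(F) ≥ d^𝔫(E ∩ F) = d̄(E)`, `F` is Følner along `𝔫`, and `E` is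
dense in `F` along `𝔫`. -/
theorem stmt0 (E : Set ℕ) (hE : 0 < upperDensity E) :
    ∃ (𝔫 : ℕ → ℕ) (F : Set ℕ), StrictMono 𝔫 ∧ natBd F ⊆ E ∧
      (∃ L : ℝ, upperDensity E ≤ L ∧
        Tendsto (fun k => dens F (𝔫 k)) atTop (nhds L)) ∧
      Tendsto (fun k => dens (E ∩ F) (𝔫 k)) atTop (nhds (upperDensity E)) ∧
      limsup (fun k => dens (natBd F) (𝔫 k)) atTop = 0 ∧
      Tendsto (fun M => limsup (fun k => dens (F \ thick E M) (𝔫 k)) atTop)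
        atTop (nhds 0) := by
  classical
  set δ := upperDensity E with hδdef
  have hud : δ = limsup (fun n => dens E n) atTop := rfl
  have hbddE : IsBoundedUnder (· ≤ ·) atTop (fun n => dens E n) :=
    isBoundedUnder_of ⟨1, fun n => dens_le_one E n⟩
  have hcbddE : IsCoboundedUnder (· ≤ ·) atTop (fun n => dens E n) :=
    isCoboundedUnder_le_of_le atTop (fun n => dens_nonneg E n)
  -- Step B: a subsequence realizing the upper density
  have key : ∀ (N : ℕ) (ε : ℝ), 0 < ε → ∃ m, N < m ∧ |dens E m - δ| < ε := by
    intro N ε hε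
    have h1 : ∀ᶠ m in atTop, dens E m < δ + ε :=
      eventually_lt_of_limsup_lt (by rw [← hud]; linarith) hbddE
    have h2 : ∃ᶠ m in atTop, δ - ε < dens E m :=
      frequently_lt_of_lt_limsup hcbddE (by rw [← hud]; linarith)
    obtain ⟨m, hm2, hm1, hmN⟩ := (h2.and_eventually (h1.and (eventually_gt_atTop N))).exists
    exact ⟨m, hmN, abs_sub_lt_iff.mpr ⟨by linarith, by linarith⟩⟩
  let g1 : ℕ → ℕ := fun k => Nat.rec (motive := fun _ => ℕ)
    (Classical.choose (key 0 1 one_pos))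
    (fun k prev => Classical.choose (key prev (1/((k:ℝ)+2)) (by positivity))) k
  have hg1s : ∀ k, g1 (k+1) = Classical.choose (key (g1 k) (1/((k:ℝ)+2)) (by positivity)) :=
    fun k => rfl
  have hg1mono : StrictMono g1 := strictMono_nat_of_lt_succ (fun k => by
    rw [hg1s k]; exact (Classical.choose_spec (key (g1 k) (1/((k:ℝ)+2)) (by positivity))).1)
  have hg1acc : ∀ k, |dens E (g1 (k+1)) - δ| < 1/((k:ℝ)+2) := fun k => by
    rw [hg1s k]; exact (Classical.choose_spec (key (g1 k) (1/((k:ℝ)+2)) (by positivity))).2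
  have hg1δ : Tendsto (fun k => dens E (g1 k)) atTop (𝓝 δ) := by
    apply tendsto_of_eventually_abs_le
    filter_upwards [eventually_ge_atTop 1] with k hk
    obtain ⟨k', rfl⟩ : ∃ k', k = k'+1 := ⟨k-1, by omega⟩
    have := hg1acc k'
    have hc : ((k'+1:ℕ):ℝ) + 1 = (k':ℝ) + 2 := by push_cast; ring
    rw [hc]
    exact this.le
  -- Step C: compactness/diagonal
  obtain ⟨α, hαmem, φ, hφ, hφt⟩ :=
    (isCompact_univ_pi (fun _ : ℕ => isCompact_Icc (a := (0:ℝ)) (b := 1))).tendsto_subseq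
      (x := fun i M => dens (thick E M) (g1 i))
      (fun i => by intro M _; exact ⟨dens_nonneg _ _, dens_le_one _ _⟩)
  rw [tendsto_pi_nhds] at hφt
  set 𝔪 : ℕ → ℕ := fun i => g1 (φ i) with h𝔪def
  have h𝔪mono : StrictMono 𝔪 := hg1mono.comp hφ
  have h𝔪δ : Tendsto (fun i => dens E (𝔪 i)) atTop (𝓝 δ) := hg1δ.comp hφ.tendsto_atTop
  have hα : ∀ M, Tendsto (fun i => dens (thick E M) (𝔪 i)) atTop (𝓝 (α M)) :=
    fun M => hφt M
  have hαmono : Monotone α := fun M M' h =>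
    le_of_tendsto_of_tendsto' (hα M) (hα M') (fun i => dens_mono (thick_mono E h) _)
  have hαbdd : BddAbove (Set.range α) := ⟨1, by
    rintro _ ⟨M, rfl⟩; exact (hαmem M trivial).2⟩
  set A := ⨆ M, α M with hAdef
  have hαA : Tendsto α atTop (𝓝 A) := tendsto_atTop_ciSup hαmono hαbdd
  have hαleA : ∀ M, α M ≤ A := fun M => le_ciSup hαbdd M
  -- Step D: recursive choice of the final subsequence
  have hQ : ∀ (k : ℕ) (prev : ℕ), ∃ j, prev < j ∧ (k+1) * (𝔪 prev + 1) ≤ 𝔪 j ∧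
      (∀ M ≤ k, |dens (thick E M) (𝔪 j) - α M| < 1/((k:ℝ)+1)) ∧
      |dens E (𝔪 j) - δ| < 1/((k:ℝ)+1) := by
    intro k prev
    have hε : (0:ℝ) < 1/((k:ℝ)+1) := by positivity
    have e1 : ∀ᶠ j in atTop, (k+1) * (𝔪 prev + 1) ≤ 𝔪 j :=
      h𝔪mono.tendsto_atTop.eventually_ge_atTop _
    have e2 : ∀ᶠ j in atTop, ∀ M ∈ Set.Iic k, |dens (thick E M) (𝔪 j) - α M| < 1/((k:ℝ)+1) :=
      (eventually_all_finite (Set.finite_Iic k)).mpr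
        (fun M _ => eventually_abs_lt_of_tendsto hε (hα M))
    have e3 : ∀ᶠ j in atTop, |dens E (𝔪 j) - δ| < 1/((k:ℝ)+1) :=
      eventually_abs_lt_of_tendsto hε h𝔪δ
    obtain ⟨j, h1, h2, h3, h4⟩ := ((eventually_gt_atTop prev).and (e1.and (e2.and e3))).exists
    exact ⟨j, h1, h2, fun M hM => h3 M hM, h4⟩
  let g : ℕ → ℕ := fun k => Nat.rec (motive := fun _ => ℕ) 0
    (fun k prev => Classical.choose (hQ (k+1) prev)) k
  have hgs : ∀ k, g (k+1) = Classical.choose (hQ (k+1) (g k)) := fun k => rfl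
  have hgmono : StrictMono g := strictMono_nat_of_lt_succ (fun k => by
    rw [hgs k]; exact (Classical.choose_spec (hQ (k+1) (g k))).1)
  set n : ℕ → ℕ := fun k => 𝔪 (g k) with hndef
  have hnmono : StrictMono n := h𝔪mono.comp hgmono
  have hP1 : ∀ k, (k+2) * (n k + 1) ≤ n (k+1) := fun k => by
    have h := (Classical.choose_spec (hQ (k+1) (g k))).2.1
    rw [← hgs k] at h
    exact h
  have hP2 : ∀ k, ∀ M ≤ k+1, |dens (thick E M) (n (k+1)) - α M| < 1/((k:ℝ)+2) := by
    intro k M hM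
    have h := (Classical.choose_spec (hQ (k+1) (g k))).2.2.1 M hM
    rw [← hgs k] at h
    have hc : ((k+1:ℕ):ℝ) + 1 = (k:ℝ) + 2 := by push_cast; ring
    rw [hc] at h
    exact h
  have hP3 : ∀ k, |dens E (n (k+1)) - δ| < 1/((k:ℝ)+2) := by
    intro k
    have h := (Classical.choose_spec (hQ (k+1) (g k))).2.2.2
    rw [← hgs k] at h
    have hc : ((k+1:ℕ):ℝ) + 1 = (k:ℝ) + 2 := by push_cast; ring
    rw [hc] at h
    exact h
  -- the set F
  set F := Fset E n with hFdef
  have hBd : natBd F ⊆ E := natBd_Fset_subset E n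
  have hnrTop : Tendsto (fun k => (Nat.cast (n k) : ℝ)) atTop atTop := by
    have := tendsto_natCast_atTop_atTop (R := ℝ) |>.comp hnmono.tendsto_atTop
    simpa [Function.comp_def] using this
  have hnδ : Tendsto (fun k => dens E (n k)) atTop (𝓝 δ) := by
    apply tendsto_of_eventually_abs_le
    filter_upwards [eventually_ge_atTop 1] with k hk
    obtain ⟨k', rfl⟩ : ∃ k', k = k'+1 := ⟨k-1, by omega⟩
    have := hP3 k'
    have hc : ((k'+1:ℕ):ℝ) + 1 = (k':ℝ) + 2 := by push_cast; ring
    rw [hc]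
    exact this.le
  -- (ii) density of E ∩ F along n
  have hEF : Tendsto (fun k => dens (E ∩ F) (n k)) atTop (𝓝 δ) := by
    have hup : ∀ k, dens (E ∩ F) (n k) ≤ dens E (n k) :=
      fun k => dens_mono Set.inter_subset_left _
    have hlow : ∀ k, dens E (n k) - (Nat.cast (n 0) : ℝ)/(Nat.cast (n k) : ℝ) ≤ dens (E ∩ F) (n k) := by
      intro k
      have hcov : E ∩ Set.Icc 1 (n k) ⊆
          ((E ∩ F) ∩ Set.Icc 1 (n k)) ∪ (Set.Icc 1 (n 0) ∩ Set.Icc 1 (n k)) := by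
        rintro y ⟨hyE, hy1, hy2⟩
        rcases Nat.lt_or_ge (n 0) y with h | h
        · exact Or.inl ⟨⟨hyE, mem_Fset_of_mem_E hnmono hyE h⟩, hy1, hy2⟩
        · exact Or.inr ⟨⟨hy1, h⟩, hy1, hy2⟩
      have h1 := dens_le_add (n k) hcov
      have h2 : dens (Set.Icc 1 (n 0)) (n k) ≤ (Nat.cast (n 0) : ℝ)/(Nat.cast (n k) : ℝ) := by
        apply dens_le_of_ncard_le (m := n 0) ?_ |>.trans ?_
        · exact le_trans (Set.ncard_le_ncard Set.inter_subset_left (Set.finite_Icc _ _))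
            (le_of_eq (ncard_Icc_one _))
        · exact le_rfl
      linarith
    have hlowt : Tendsto (fun k => dens E (n k) - (Nat.cast (n 0) : ℝ)/(Nat.cast (n k) : ℝ)) atTop (𝓝 δ) := by
      have := hnδ.sub (Tendsto.div_atTop (tendsto_const_nhds (x := (Nat.cast (n 0) : ℝ))) hnrTop)
      simpa using this
    exact tendsto_of_tendsto_of_tendsto_of_le_of_le hlowt hnδ hlow hup
  -- (iii) Følner property along n
  have hFol : Tendsto (fun k => dens (natBd F) (n k)) atTop (𝓝 0) := by
    have hub : ∀ᶠ k in atTop, dens (natBd F) (n k) ≤ 5/((k:ℝ)+1) := by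
      filter_upwards [eventually_ge_atTop 1] with k hk
      obtain ⟨k', rfl⟩ : ∃ k', k = k'+1 := ⟨k-1, by omega⟩
      have hcount : (natBd F ∩ Set.Icc 1 (n (k'+1))).ncard
          ≤ n k' + 2 * (n (k'+1) / (k'+2) + 1) := by
        have hsub : natBd F ∩ Set.Icc 1 (n (k'+1)) ⊆
            (Set.Icc 1 (n k')) ∪ (natBd F ∩ Set.Ioc (n k') (n (k'+1))) := by
          rintro y ⟨hy, hy1, hy2⟩
          rcases le_or_gt y (n k') with h | h
          · exact Or.inl ⟨hy1, h⟩
          · exact Or.inr ⟨hy, h, hy2⟩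
        calc (natBd F ∩ Set.Icc 1 (n (k'+1))).ncard
            ≤ ((Set.Icc 1 (n k')) ∪ (natBd F ∩ Set.Ioc (n k') (n (k'+1)))).ncard := by
              refine Set.ncard_le_ncard hsub ?_
              exact (Set.finite_Icc _ _).union
                ((Set.finite_Ioc _ _).inter_of_right _)
          _ ≤ (Set.Icc 1 (n k')).ncard + (natBd F ∩ Set.Ioc (n k') (n (k'+1))).ncard :=
              Set.ncard_union_le _ _
          _ ≤ n k' + 2 * (n (k'+1) / (k'+2) + 1) := by
              have hbc := natBd_Fset_block_count (E := E) hnmono k'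
              rw [← hFdef] at hbc
              rw [ncard_Icc_one]
              generalize n (k'+1) / (k'+2) = q at hbc ⊢
              omega
      have hd := dens_le_of_ncard_le hcount
      have hnk1 : 0 < n (k'+1) := lt_of_lt_of_le (by positivity) (hP1 k')
      have harith : ((n k' + 2 * (n (k'+1) / (k'+2) + 1) : ℕ) : ℝ) / (Nat.cast (n (k'+1)) : ℝ)
          ≤ 5/((k':ℝ)+2) := by
        have hq : (k'+2) * (n (k'+1) / (k'+2)) ≤ n (k'+1) :=
          (Nat.mul_comm _ _) ▸ Nat.div_mul_le_self (n (k'+1)) (k'+2)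
        have h1 := hP1 k'
        have : (k'+2) * (n k' + 2 * (n (k'+1) / (k'+2) + 1)) ≤ 5 * n (k'+1) := by
          nlinarith [hq, h1]
        have := nat_div_le_real (a := n k' + 2 * (n (k'+1) / (k'+2) + 1))
          (b := n (k'+1)) (c := 5) (d := k'+2) (Nat.succ_pos (k'+1)) this hnk1
        refine le_trans this (le_of_eq ?_)
        push_cast; ring
      have hc : ((k'+1:ℕ):ℝ) + 1 = (k':ℝ) + 2 := by push_cast; ring
      rw [hc]
      exact hd.trans harith
    have h5 : Tendsto (fun k : ℕ => 5/((k:ℝ)+1)) atTop (𝓝 0) := tendsto_const_div_add 5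
    exact tendsto_of_tendsto_of_tendsto_of_le_of_le' tendsto_const_nhds h5
      (Eventually.of_forall (fun k => dens_nonneg _ _)) hub
  -- (iv) key eventual bound
  have hiv : ∀ M : ℕ, ∀ᶠ k in atTop,
      dens (F \ thick E M) (n k) ≤ (A - α M) + 3/((k:ℝ)+1) := by
    intro M
    filter_upwards [eventually_ge_atTop (M+1)] with k hk
    obtain ⟨k', rfl⟩ : ∃ k', k = k'+1 := ⟨k-1, by omega⟩
    have hMk : M ≤ k'+1 := by omega
    have hcov : (F \ thick E M) ∩ Set.Icc 1 (n (k'+1)) ⊆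
        ((Set.Icc 1 (n k')) ∩ Set.Icc 1 (n (k'+1))) ∪
        ((thick E (k'+1) \ thick E M) ∩ Set.Icc 1 (n (k'+1))) := by
      rintro y ⟨⟨hyF, hyT⟩, hy1, hy2⟩
      rcases le_or_gt y (n k') with h | h
      · exact Or.inl ⟨⟨hy1, h⟩, hy1, hy2⟩
      · exact Or.inr ⟨⟨Fset_block hnmono hyF h hy2, hyT⟩, hy1, hy2⟩
    have h1 := dens_le_add (n (k'+1)) hcov
    have hnk1 : 0 < n (k'+1) := lt_of_lt_of_le (by positivity) (hP1 k')
    have h2 : dens (Set.Icc 1 (n k')) (n (k'+1)) ≤ 1/((k':ℝ)+2) := by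
      have hle : (Set.Icc 1 (n k') ∩ Set.Icc 1 (n (k'+1))).ncard ≤ n k' :=
        le_trans (Set.ncard_le_ncard Set.inter_subset_left (Set.finite_Icc _ _))
          (le_of_eq (ncard_Icc_one _))
      refine (dens_le_of_ncard_le hle).trans ?_
      have := nat_div_le_real (a := n k') (b := n (k'+1)) (c := 1) (d := k'+2)
        (Nat.succ_pos (k'+1)) (by have := hP1 k'; nlinarith) hnk1
      refine le_trans this (le_of_eq ?_)
      push_cast; ring
    have h3 : dens (thick E (k'+1) \ thick E M) (n (k'+1)) =
        dens (thick E (k'+1)) (n (k'+1)) - dens (thick E M) (n (k'+1)) :=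
      dens_diff_eq (thick_mono E hMk) _
    have h4 := hP2 k' (k'+1) le_rfl
    have h5 := hP2 k' M hMk
    have h6 := hαleA (k'+1)
    rw [abs_sub_lt_iff] at h4 h5
    have hc : ((k'+1:ℕ):ℝ) + 1 = (k':ℝ) + 2 := by push_cast; ring
    rw [hc]
    have h7 : (1:ℝ)/((k':ℝ)+2) ≤ 3/((k':ℝ)+2) := by
      gcongr <;> norm_num
    have h8 : (0:ℝ) < (k':ℝ)+2 := by positivity
    obtain ⟨h4a, h4b⟩ := h4
    obtain ⟨h5a, h5b⟩ := h5
    have := h1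
    rw [h3] at this
    calc dens (F \ thick E M) (n (k'+1))
        ≤ dens (Set.Icc 1 (n k')) (n (k'+1)) +
          (dens (thick E (k'+1)) (n (k'+1)) - dens (thick E M) (n (k'+1))) := this
      _ ≤ 1/((k':ℝ)+2) + ((α (k'+1) + 1/((k':ℝ)+2)) - (α M - 1/((k':ℝ)+2))) := by
          have hth1 : dens (thick E (k'+1)) (n (k'+1)) < α (k'+1) + 1/((k':ℝ)+2) := by
            linarith
          have hth2 : α M - 1/((k':ℝ)+2) < dens (thick E M) (n (k'+1)) := by
            linarith
          linarith [h2]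
      _ ≤ (A - α M) + 3/((k':ℝ)+2) := by
          have h9 : (3:ℝ)/((k':ℝ)+2) = 1/((k':ℝ)+2) + 1/((k':ℝ)+2) + 1/((k':ℝ)+2) := by
            ring
          linarith
  -- Final Bolzano–Weierstrass extraction for dens F
  obtain ⟨L, hLmem, ψ, hψ, hψt⟩ :=
    (isCompact_Icc (a := (0:ℝ)) (b := 1)).tendsto_subseq
      (x := fun k => dens F (n k)) (fun k => ⟨dens_nonneg _ _, dens_le_one _ _⟩)
  have hψt' : Tendsto (fun k => dens F (n (ψ k))) atTop (𝓝 L) := by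
    simpa [Function.comp_def] using hψt
  have hEF' : Tendsto (fun k => dens (E ∩ F) (n (ψ k))) atTop (𝓝 δ) := by
    simpa [Function.comp_def] using hEF.comp hψ.tendsto_atTop
  have hFol' : Tendsto (fun k => dens (natBd F) (n (ψ k))) atTop (𝓝 0) := by
    simpa [Function.comp_def] using hFol.comp hψ.tendsto_atTop
  refine ⟨n ∘ ψ, F, hnmono.comp hψ, hBd, ⟨L, ?_, hψt'⟩, hEF', hFol'.limsup_eq, ?_⟩
  · exact le_of_tendsto_of_tendsto' hEF' hψt'
      (fun k => dens_mono Set.inter_subset_right _)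
  · -- last condition
    have hub : ∀ M, limsup (fun k => dens (F \ thick E M) (n (ψ k))) atTop ≤ A - α M := by
      intro M
      have hev : ∀ᶠ k in atTop,
          dens (F \ thick E M) (n (ψ k)) ≤ (A - α M) + 3/((k:ℝ)+1) := by
        filter_upwards [hψ.tendsto_atTop.eventually (hiv M)] with k hkk
        have h3 : (3:ℝ)/((ψ k : ℝ)+1) ≤ 3/((k:ℝ)+1) := by
          gcongr
          exact_mod_cast hψ.le_apply
        linarith
      have hbt : Tendsto (fun k : ℕ => (A - α M) + 3/((k:ℝ)+1)) atTop (𝓝 (A - α M)) := by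
        have := tendsto_const_nhds (x := A - α M) (f := atTop (α := ℕ)) |>.add
          (tendsto_const_div_add 3)
        simpa using this
      calc limsup (fun k => dens (F \ thick E M) (n (ψ k))) atTop
          ≤ limsup (fun k : ℕ => (A - α M) + 3/((k:ℝ)+1)) atTop :=
            limsup_le_limsup hev
              (isCoboundedUnder_le_of_le atTop (fun k => dens_nonneg _ _))
              hbt.isBoundedUnder_le
        _ = A - α M := hbt.limsup_eq
    have hlb : ∀ M : ℕ, (0:ℝ) ≤ limsup (fun k => dens (F \ thick E M) (n (ψ k))) atTop :=
      fun M => le_limsup_of_frequently_le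
        (Frequently.of_forall (fun k => dens_nonneg _ _))
        (isBoundedUnder_of ⟨1, fun k => dens_le_one _ _⟩)
    have hubt : Tendsto (fun M => A - α M) atTop (𝓝 0) := by
      have := (tendsto_const_nhds (x := A) (f := atTop (α := ℕ))).sub hαA
      simpa using this
    exact tendsto_of_tendsto_of_tendsto_of_le_of_le tendsto_const_nhds hubt hlb hub
end

section
/- Let (X,T) be a topological system, Φ = (φ_n)_{n∈ℕ} a continuous subadditive process on (X,T), and E : X → P(ℕ) a map that is 0-large with respect to Φ. Fix x ∈ X, integers n ≥ N ≥ M ≥ 1, and a nonempty F_n ⊆ {1,…,n} with ∂F_n ⊆ E(x). Then φ_E^{F_n}(x)/#F_n ≥ (1/#F_n) Σ_{k∈F_n} φ_N⁺(T^k x)/N − [d_n(F_n∖E_M(x)) + N·d_n(∂F_n) + 4M/N] · sup_{y∈X}|φ_1(y)| / d_n(F_n), where φ_N⁺ = max(φ_N, 0). -/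
open Filter MeasureTheory Topology
open scoped ENNReal

/-- The next element of `E` strictly after `a`. -/
noncomputable def nextEl (E : Set ℕ) (a : ℕ) : ℕ := sInf {b | b ∈ E ∧ a < b}

/-- `φ_E^F(x) = ∑_𝗄 φ_{b_𝗄 - a_𝗄}(T^{a_𝗄} x)`, where `F⁻ = {k ∈ F : k+1 ∈ F}` is decomposed
into `E`-irreducible intervals `⟦a_𝗄, b_𝗄⟦`; the left endpoints `a_𝗄` are exactly the
elements of `F⁻ ∩ E` and `b_𝗄` is the next element of `E` after `a_𝗄`. -/
noncomputable def phiE {X : Type*} (φ : ℕ → X → ℝ) (T : X → X) (E : Set ℕ)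
    (F : Finset ℕ) (x : X) : ℝ := by
  classical
  exact ∑ a ∈ F.filter (fun a => a + 1 ∈ F ∧ a ∈ E), φ (nextEl E a - a) (T^[a] x)

/-- Lemma on subadditive cocycles over `0`-large geometric sets: a lower bound for
`φ_E^{Fₙ}(x)/#Fₙ` in terms of the empirical average of `φ_N⁺/N` along `Fₙ`. -/
theorem stmt3 {X : Type*} [TopologicalSpace X] [CompactSpace X]
    [TopologicalSpace.MetrizableSpace X]
    (T : X → X) (hT : Continuous T)
    (φ : ℕ → X → ℝ) (hφ0 : ∀ x, φ 0 x = 0) (hφc : ∀ n, Continuous (φ n))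
    (hsub : ∀ n m : ℕ, ∀ x : X, φ (n + m) x ≤ φ n x + φ m (T^[n] x))
    (E : X → Set ℕ)
    (hlarge : ∀ x : X, ∀ k ∈ E x, ∀ l ∈ E x, k < l → (∀ j, k < j → j < l → j ∉ E x) →
      0 ≤ φ (l - k) (T^[k] x))
    (x : X) (n N M : ℕ) (hM : 1 ≤ M) (hMN : M ≤ N) (hNn : N ≤ n)
    (F : Finset ℕ) (hFsub : F ⊆ Finset.Icc 1 n) (hFne : F.Nonempty)
    (hFbd : natBd (F : Set ℕ) ⊆ E x) :
    (∑ k ∈ F, max (φ N (T^[k] x)) 0 / (N : ℝ)) / (F.card : ℝ)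
      - (((((F : Set ℕ) \ thick (E x) M).ncard : ℝ) / (n : ℝ)
          + (N : ℝ) * (((natBd (F : Set ℕ)).ncard : ℝ) / (n : ℝ))
          + 4 * (M : ℝ) / (N : ℝ)) * (⨆ y : X, |φ 1 y|))
        / ((F.card : ℝ) / (n : ℝ))
    ≤ phiE φ T (E x) F x / (F.card : ℝ) := by
  classical
  set Ex := E x with hExdef
  set S : ℝ := ⨆ y : X, |φ 1 y| with hSdef
  have hbdd : BddAbove (Set.range fun y : X => |φ 1 y|) := by
    rw [← Set.image_univ]
    exact IsCompact.bddAbove_image isCompact_univ ((hφc 1).abs.continuousOn)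
  have hS : ∀ y, |φ 1 y| ≤ S := fun y => le_ciSup hbdd y
  have hS0 : (0:ℝ) ≤ S := le_trans (abs_nonneg _) (hS x)
  have hφ1 : ∀ y, φ 1 y ≤ S := fun y => le_trans (le_abs_self _) (hS y)
  have hgrow : ∀ m : ℕ, ∀ y : X, φ m y ≤ (m : ℝ) * S := by
    intro m
    induction m with
    | zero => intro y; simp [hφ0]
    | succ m ih =>
      intro y
      have h1 := hsub m 1 y
      have h2 := ih y
      have h3 := hφ1 (T^[m] y)
      push_cast
      calc φ (m + 1) y ≤ φ m y + φ 1 (T^[m] y) := h1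
        _ ≤ (m : ℝ) * S + S := by linarith
        _ = ((m : ℝ) + 1) * S := by ring
  have hnext_lt : ∀ a : ℕ, (∃ b ∈ Ex, a < b) → nextEl Ex a ∈ Ex ∧ a < nextEl Ex a := by
    rintro a ⟨b, hb, hab⟩
    have hne : {c | c ∈ Ex ∧ a < c}.Nonempty := ⟨b, hb, hab⟩
    exact Nat.sInf_mem hne
  have hnext_le : ∀ a : ℕ, ∀ j ∈ Ex, a < j → nextEl Ex a ≤ j := by
    intro a j hj haj
    exact Nat.sInf_le ⟨hj, haj⟩
  have hterm : ∀ a ∈ Ex, 0 ≤ φ (nextEl Ex a - a) (T^[a] x) := by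
    intro a ha
    by_cases h : ∃ b ∈ Ex, a < b
    · obtain ⟨hmem, hlt⟩ := hnext_lt a h
      refine hlarge x a ha _ hmem hlt ?_
      intro j haj hje hjE
      exact absurd (hnext_le a j hjE haj) (not_le.mpr hje)
    · have hset : {b | b ∈ Ex ∧ a < b} = ∅ := by
        ext b
        simp only [Set.mem_setOf_eq, Set.mem_empty_iff_false, iff_false, not_and]
        intro hb hab
        exact h ⟨b, hb, hab⟩
      have h0 : nextEl Ex a = 0 := by rw [nextEl, hset, Nat.sInf_empty]
      rw [h0]
      simp [hφ0]
  set A : Finset ℕ := F.filter (fun a => a + 1 ∈ F ∧ a ∈ Ex) with hA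
  set term : ℕ → ℝ := fun a => φ (nextEl Ex a - a) (T^[a] x) with htermdef
  have htermA : ∀ a ∈ A, 0 ≤ term a := by
    intro a ha
    exact hterm a (Finset.mem_filter.mp ha).2.2
  have hphiE : phiE φ T Ex F x = ∑ a ∈ A, term a := by
    unfold phiE
    rw [hA, htermdef]
  -- the chain lemma
  have chain : ∀ len k : ℕ, k ∈ Ex → Finset.Ico k (k + len) ⊆ F →
      φ len (T^[k] x) ≤ (∑ a ∈ A.filter (fun a => k ≤ a ∧ nextEl Ex a ≤ k + len), term a)
        + S * (((Finset.Ico k (k + len)).filter (fun j => j ∉ thick Ex M)).card : ℝ)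
        + S * ((M : ℝ) + 1) := by
    intro len
    induction len using Nat.strong_induction_on with
    | _ len IH =>
      intro k hk hsubW
      have hsum0 : (0:ℝ) ≤ ∑ a ∈ A.filter (fun a => k ≤ a ∧ nextEl Ex a ≤ k + len), term a :=
        Finset.sum_nonneg fun a ha => htermA a (Finset.mem_filter.mp ha).1
      have hcn0 : (0:ℝ) ≤ S * (((Finset.Ico k (k + len)).filter (fun j => j ∉ thick Ex M)).card : ℝ) :=
        mul_nonneg hS0 (Nat.cast_nonneg _)
      have hM1 : (0:ℝ) ≤ S * ((M : ℝ) + 1) := mul_nonneg hS0 (by positivity)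
      have hfin : (∀ j, k < j → j < k + len → j ∈ thick Ex M → k + len < j + M) →
          φ len (T^[k] x) ≤ (∑ a ∈ A.filter (fun a => k ≤ a ∧ nextEl Ex a ≤ k + len), term a)
            + S * (((Finset.Ico k (k + len)).filter (fun j => j ∉ thick Ex M)).card : ℝ)
            + S * ((M : ℝ) + 1) := by
        intro hth
        have hts : (Finset.Ico k (k + len)).filter (fun j => j ∈ thick Ex M)
            ⊆ insert k (Finset.Ico (k + len + 1 - M) (k + len)) := by
          intro j hj
          obtain ⟨hjW, hjth⟩ := Finset.mem_filter.mp hj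
          obtain ⟨hj1, hj2⟩ := Finset.mem_Ico.mp hjW
          rcases Nat.eq_or_lt_of_le hj1 with heq | hkj
          · rw [← heq]
            exact Finset.mem_insert_self _ _
          · refine Finset.mem_insert_of_mem (Finset.mem_Ico.mpr ⟨?_, hj2⟩)
            have := hth j hkj hj2 hjth
            omega
        have hct : ((Finset.Ico k (k + len)).filter (fun j => j ∈ thick Ex M)).card ≤ M := by
          calc ((Finset.Ico k (k + len)).filter (fun j => j ∈ thick Ex M)).card
              ≤ (insert k (Finset.Ico (k + len + 1 - M) (k + len))).card :=
                Finset.card_le_card hts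
            _ ≤ (Finset.Ico (k + len + 1 - M) (k + len)).card + 1 := Finset.card_insert_le _ _
            _ = (k + len - (k + len + 1 - M)) + 1 := by rw [Nat.card_Ico]
            _ ≤ M := by omega
        have hsplitc : ((Finset.Ico k (k + len)).filter (fun j => j ∈ thick Ex M)).card
            + ((Finset.Ico k (k + len)).filter (fun j => j ∉ thick Ex M)).card = len := by
          rw [Finset.card_filter_add_card_filter_not, Nat.card_Ico]
          omega
        have hlen : (len : ℝ)
            = (((Finset.Ico k (k + len)).filter (fun j => j ∈ thick Ex M)).card : ℝ)
              + (((Finset.Ico k (k + len)).filter (fun j => j ∉ thick Ex M)).card : ℝ) := by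
          exact_mod_cast hsplitc.symm
        have hgw := hgrow len (T^[k] x)
        have hprod : (len : ℝ) * S
            = S * (((Finset.Ico k (k + len)).filter (fun j => j ∈ thick Ex M)).card : ℝ)
              + S * (((Finset.Ico k (k + len)).filter (fun j => j ∉ thick Ex M)).card : ℝ) := by
          rw [hlen]; ring
        have hmul : S * (((Finset.Ico k (k + len)).filter (fun j => j ∈ thick Ex M)).card : ℝ)
            ≤ S * (M : ℝ) := mul_le_mul_of_nonneg_left (by exact_mod_cast hct) hS0
        have hexp : S * ((M : ℝ) + 1) = S * (M : ℝ) + S := by ring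
        linarith
      rcases Nat.lt_or_ge len 2 with hlen2 | hlen2
      · interval_cases len
        · rw [hφ0]
          linarith
        · have h1 : φ 1 (T^[k] x) ≤ S := hφ1 _
          have h2 : S ≤ S * ((M : ℝ) + 1) := by
            nlinarith [hS0, (by exact_mod_cast hM : (1:ℝ) ≤ (M:ℝ))]
          linarith
      · -- len ≥ 2
        by_cases hB : ∃ b ∈ Ex, k < b
        · obtain ⟨heEx, hke⟩ := hnext_lt k hB
          by_cases hce : nextEl Ex k ≤ k + len
          · -- consume the irreducible interval at k
            set e := nextEl Ex k with hedef
            have hkF : k ∈ F := hsubW (Finset.mem_Ico.mpr ⟨le_refl k, by omega⟩)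
            have hk1F : k + 1 ∈ F := hsubW (Finset.mem_Ico.mpr ⟨by omega, by omega⟩)
            have hkA : k ∈ A := Finset.mem_filter.mpr ⟨hkF, hk1F, hk⟩
            have hsplit : φ len (T^[k] x) ≤ term k + φ (len - (e - k)) (T^[e] x) := by
              have h := hsub (e - k) (len - (e - k)) (T^[k] x)
              have h1 : (e - k) + (len - (e - k)) = len := by omega
              rw [h1] at h
              have h2 : T^[e - k] (T^[k] x) = T^[e] x := by
                rw [← Function.iterate_add_apply]
                congr 1
                omega
              rw [h2] at h
              exact h
            have heq : e + (len - (e - k)) = k + len := by omega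
            have hIH := IH (len - (e - k)) (by omega) e heEx (by
              rw [heq]
              intro j hj
              obtain ⟨h1, h2⟩ := Finset.mem_Ico.mp hj
              exact hsubW (Finset.mem_Ico.mpr ⟨by omega, h2⟩))
            rw [heq] at hIH
            have hknotin : k ∉ A.filter (fun a => e ≤ a ∧ nextEl Ex a ≤ k + len) := by
              simp only [Finset.mem_filter]
              rintro ⟨-, h1, -⟩
              omega
            have hsum1 : term k + ∑ a ∈ A.filter (fun a => e ≤ a ∧ nextEl Ex a ≤ k + len), term a
                ≤ ∑ a ∈ A.filter (fun a => k ≤ a ∧ nextEl Ex a ≤ k + len), term a := by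
              rw [← Finset.sum_insert hknotin]
              apply Finset.sum_le_sum_of_subset_of_nonneg
              · intro a ha
                rcases Finset.mem_insert.mp ha with rfl | ha
                · exact Finset.mem_filter.mpr ⟨hkA, le_refl a, hce⟩
                · obtain ⟨haA, h1, h2⟩ := Finset.mem_filter.mp ha
                  exact Finset.mem_filter.mpr ⟨haA, by omega, h2⟩
              · intro a ha _
                exact htermA a (Finset.mem_filter.mp ha).1
            have hcnle : ((Finset.Ico e (k + len)).filter (fun j => j ∉ thick Ex M)).card
                ≤ ((Finset.Ico k (k + len)).filter (fun j => j ∉ thick Ex M)).card := by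
              apply Finset.card_le_card
              apply Finset.filter_subset_filter
              exact Finset.Ico_subset_Ico (by omega) le_rfl
            have hcnle' : S * (((Finset.Ico e (k + len)).filter (fun j => j ∉ thick Ex M)).card : ℝ)
                ≤ S * (((Finset.Ico k (k + len)).filter (fun j => j ∉ thick Ex M)).card : ℝ) :=
              mul_le_mul_of_nonneg_left (by exact_mod_cast hcnle) hS0
            linarith
          · -- gap overruns the window
            apply hfin
            intro j hkj hjlen hjth
            obtain ⟨a, b, haE, hbE, hba, haj, hjb⟩ := hjth
            have hkb : k < b := lt_of_lt_of_le hkj hjb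
            have := hnext_le k b hbE hkb
            omega
        · -- no further point of Ex at all
          apply hfin
          intro j hkj hjlen hjth
          obtain ⟨a, b, haE, hbE, hba, haj, hjb⟩ := hjth
          exact absurd ⟨b, hbE, lt_of_lt_of_le hkj hjb⟩ hB
  -- the window claim
  have claim : ∀ k : ℕ, Finset.Ico k (k + N) ⊆ F →
      max (φ N (T^[k] x)) 0 ≤ (∑ a ∈ A.filter (fun a => k ≤ a ∧ nextEl Ex a ≤ k + N), term a)
        + S * (((Finset.Ico k (k + N)).filter (fun j => j ∉ thick Ex M)).card : ℝ)
        + S * (2 * (M : ℝ) + 1) := by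
    intro k hsubW
    have hsum0 : (0:ℝ) ≤ ∑ a ∈ A.filter (fun a => k ≤ a ∧ nextEl Ex a ≤ k + N), term a :=
      Finset.sum_nonneg fun a ha => htermA a (Finset.mem_filter.mp ha).1
    have hcn0 : (0:ℝ) ≤ S * (((Finset.Ico k (k + N)).filter (fun j => j ∉ thick Ex M)).card : ℝ) :=
      mul_nonneg hS0 (Nat.cast_nonneg _)
    have h2M1 : (0:ℝ) ≤ S * (2 * (M : ℝ) + 1) := mul_nonneg hS0 (by positivity)
    apply max_le _ (by linarith)
    by_cases hWE : ((Finset.Ico k (k + N)).filter (fun j => j ∈ Ex)).Nonempty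
    · -- there is a point of Ex in the window
      set b0 := ((Finset.Ico k (k + N)).filter (fun j => j ∈ Ex)).min' hWE with hb0def
      have hb0mem := Finset.min'_mem _ hWE
      obtain ⟨hb0W, hb0Ex⟩ := Finset.mem_filter.mp hb0mem
      obtain ⟨hkb0, hb0N⟩ := Finset.mem_Ico.mp hb0W
      have hb0min : ∀ c ∈ Ex, k ≤ c → c < k + N → b0 ≤ c := by
        intro c hc h1 h2
        exact Finset.min'_le _ _ (Finset.mem_filter.mpr ⟨Finset.mem_Ico.mpr ⟨h1, h2⟩, hc⟩)
      have hsplit : φ N (T^[k] x) ≤ φ (b0 - k) (T^[k] x) + φ (N - (b0 - k)) (T^[b0] x) := by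
        have h := hsub (b0 - k) (N - (b0 - k)) (T^[k] x)
        have h1 : (b0 - k) + (N - (b0 - k)) = N := by omega
        rw [h1] at h
        have h2 : T^[b0 - k] (T^[k] x) = T^[b0] x := by
          rw [← Function.iterate_add_apply]
          congr 1
          omega
        rw [h2] at h
        exact h
      have hts : (Finset.Ico k b0).filter (fun j => j ∈ thick Ex M) ⊆ Finset.Ico (b0 - M) b0 := by
        intro j hj
        obtain ⟨hjW, hjth⟩ := Finset.mem_filter.mp hj
        obtain ⟨hj1, hj2⟩ := Finset.mem_Ico.mp hjW
        obtain ⟨a, b, haE, hbE, hba, haj, hjb⟩ := hjth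
        have hbb0 : b0 ≤ b := by
          rcases Nat.lt_or_ge b (k + N) with hbN | hbN
          · exact hb0min b hbE (by omega) hbN
          · omega
        exact Finset.mem_Ico.mpr ⟨by omega, hj2⟩
      have hctL : ((Finset.Ico k b0).filter (fun j => j ∈ thick Ex M)).card ≤ M := by
        calc ((Finset.Ico k b0).filter (fun j => j ∈ thick Ex M)).card
            ≤ (Finset.Ico (b0 - M) b0).card := Finset.card_le_card hts
          _ = b0 - (b0 - M) := Nat.card_Ico _ _
          _ ≤ M := by omega
      have hsplitcL : ((Finset.Ico k b0).filter (fun j => j ∈ thick Ex M)).card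
          + ((Finset.Ico k b0).filter (fun j => j ∉ thick Ex M)).card = b0 - k := by
        rw [Finset.card_filter_add_card_filter_not, Nat.card_Ico]
      have hlead : φ (b0 - k) (T^[k] x) ≤ S * (M : ℝ)
          + S * (((Finset.Ico k b0).filter (fun j => j ∉ thick Ex M)).card : ℝ) := by
        have hgw := hgrow (b0 - k) (T^[k] x)
        have hcast : ((b0 - k : ℕ) : ℝ)
            = (((Finset.Ico k b0).filter (fun j => j ∈ thick Ex M)).card : ℝ)
              + (((Finset.Ico k b0).filter (fun j => j ∉ thick Ex M)).card : ℝ) := by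
          exact_mod_cast hsplitcL.symm
        have hprod : ((b0 - k : ℕ) : ℝ) * S
            = S * (((Finset.Ico k b0).filter (fun j => j ∈ thick Ex M)).card : ℝ)
              + S * (((Finset.Ico k b0).filter (fun j => j ∉ thick Ex M)).card : ℝ) := by
          rw [hcast]; ring
        have hmul : S * (((Finset.Ico k b0).filter (fun j => j ∈ thick Ex M)).card : ℝ)
            ≤ S * (M : ℝ) := mul_le_mul_of_nonneg_left (by exact_mod_cast hctL) hS0
        linarith
      have heq : b0 + (N - (b0 - k)) = k + N := by omega
      have hch := chain (N - (b0 - k)) b0 hb0Ex (by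
        rw [heq]
        intro j hj
        obtain ⟨h1, h2⟩ := Finset.mem_Ico.mp hj
        exact hsubW (Finset.mem_Ico.mpr ⟨by omega, h2⟩))
      rw [heq] at hch
      have hsum1 : ∑ a ∈ A.filter (fun a => b0 ≤ a ∧ nextEl Ex a ≤ k + N), term a
          ≤ ∑ a ∈ A.filter (fun a => k ≤ a ∧ nextEl Ex a ≤ k + N), term a := by
        apply Finset.sum_le_sum_of_subset_of_nonneg
        · intro a ha
          obtain ⟨haA, h1, h2⟩ := Finset.mem_filter.mp ha
          exact Finset.mem_filter.mpr ⟨haA, by omega, h2⟩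
        · intro a ha _
          exact htermA a (Finset.mem_filter.mp ha).1
      have hdisj : Disjoint ((Finset.Ico k b0).filter (fun j => j ∉ thick Ex M))
          ((Finset.Ico b0 (k + N)).filter (fun j => j ∉ thick Ex M)) :=
        Finset.disjoint_filter_filter (Finset.Ico_disjoint_Ico_consecutive k b0 (k + N))
      have hcn : ((Finset.Ico k b0).filter (fun j => j ∉ thick Ex M)).card
          + ((Finset.Ico b0 (k + N)).filter (fun j => j ∉ thick Ex M)).card
          = ((Finset.Ico k (k + N)).filter (fun j => j ∉ thick Ex M)).card := by
        rw [← Finset.card_union_of_disjoint hdisj, ← Finset.filter_union,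
          Finset.Ico_union_Ico_eq_Ico hkb0 (by omega)]
      have hcncast : (((Finset.Ico k b0).filter (fun j => j ∉ thick Ex M)).card : ℝ)
          + (((Finset.Ico b0 (k + N)).filter (fun j => j ∉ thick Ex M)).card : ℝ)
          = (((Finset.Ico k (k + N)).filter (fun j => j ∉ thick Ex M)).card : ℝ) := by
        exact_mod_cast hcn
      have hprod2 : S * (((Finset.Ico k (k + N)).filter (fun j => j ∉ thick Ex M)).card : ℝ)
          = S * (((Finset.Ico k b0).filter (fun j => j ∉ thick Ex M)).card : ℝ)
            + S * (((Finset.Ico b0 (k + N)).filter (fun j => j ∉ thick Ex M)).card : ℝ) := by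
        rw [← hcncast]; ring
      have hexp : S * (2 * (M : ℝ) + 1) = S * (M : ℝ) + S * ((M : ℝ) + 1) := by ring
      linarith
    · -- no point of Ex in the window
      have hnoE : ∀ b, k ≤ b → b < k + N → b ∉ Ex := by
        intro b h1 h2 hbE
        exact hWE ⟨b, Finset.mem_filter.mpr ⟨Finset.mem_Ico.mpr ⟨h1, h2⟩, hbE⟩⟩
      have hts : (Finset.Ico k (k + N)).filter (fun j => j ∈ thick Ex M)
          ⊆ Finset.Ico (k + N - M) (k + N) := by
        intro j hj
        obtain ⟨hjW, hjth⟩ := Finset.mem_filter.mp hj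
        obtain ⟨hj1, hj2⟩ := Finset.mem_Ico.mp hjW
        obtain ⟨a, b, haE, hbE, hba, haj, hjb⟩ := hjth
        have hbN : k + N ≤ b := by
          by_contra hlt
          exact hnoE b (by omega) (by omega) hbE
        exact Finset.mem_Ico.mpr ⟨by omega, hj2⟩
      have hct : ((Finset.Ico k (k + N)).filter (fun j => j ∈ thick Ex M)).card ≤ M := by
        calc ((Finset.Ico k (k + N)).filter (fun j => j ∈ thick Ex M)).card
            ≤ (Finset.Ico (k + N - M) (k + N)).card := Finset.card_le_card hts
          _ = (k + N) - (k + N - M) := Nat.card_Ico _ _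
          _ ≤ M := by omega
      have hsplitc : ((Finset.Ico k (k + N)).filter (fun j => j ∈ thick Ex M)).card
          + ((Finset.Ico k (k + N)).filter (fun j => j ∉ thick Ex M)).card = N := by
        rw [Finset.card_filter_add_card_filter_not, Nat.card_Ico]
        omega
      have hgw := hgrow N (T^[k] x)
      have hcast : (N : ℝ)
          = (((Finset.Ico k (k + N)).filter (fun j => j ∈ thick Ex M)).card : ℝ)
            + (((Finset.Ico k (k + N)).filter (fun j => j ∉ thick Ex M)).card : ℝ) := by
        exact_mod_cast hsplitc.symm
      have hprod : (N : ℝ) * S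
          = S * (((Finset.Ico k (k + N)).filter (fun j => j ∈ thick Ex M)).card : ℝ)
            + S * (((Finset.Ico k (k + N)).filter (fun j => j ∉ thick Ex M)).card : ℝ) := by
        rw [hcast]; ring
      have hmul : S * (((Finset.Ico k (k + N)).filter (fun j => j ∈ thick Ex M)).card : ℝ)
          ≤ S * (M : ℝ) := mul_le_mul_of_nonneg_left (by exact_mod_cast hct) hS0
      have hexp : S * (2 * (M : ℝ) + 1) = S * (M : ℝ) + S * ((M : ℝ) + 1) := by ring
      have hM10 : (0:ℝ) ≤ S * ((M : ℝ) + 1) := mul_nonneg hS0 (by positivity)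
      linarith
  set NT : Finset ℕ := F.filter (fun j => j ∉ thick Ex M) with hNT
  set Bd : Finset ℕ := F.filter (fun m => m ∈ natBd (F : Set ℕ)) with hBd
  have hNTeq : ((F : Set ℕ) \ thick Ex M).ncard = NT.card := by
    have h1 : ((F : Set ℕ) \ thick Ex M) = (NT : Finset ℕ) := by
      ext j
      simp [hNT, Set.mem_diff]
    rw [h1, Set.ncard_coe_finset]
  have hBdeq : (natBd (F : Set ℕ)).ncard = Bd.card := by
    have h1 : natBd (F : Set ℕ) = (Bd : Finset ℕ) := by
      ext m
      constructor
      · intro hm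
        have hmF : m ∈ F := by exact_mod_cast hm.1
        simp only [hBd, Finset.coe_filter, Set.mem_setOf_eq]
        exact ⟨hmF, hm⟩
      · intro hm
        simp only [hBd, Finset.coe_filter, Set.mem_setOf_eq] at hm
        exact hm.2
    rw [h1, Set.ncard_coe_finset]
  have hNpos : 0 < N := le_trans hM hMN
  have hnpos : 0 < n := le_trans hNpos hNn
  have hFcard : F.card ≤ n := by
    calc F.card ≤ (Finset.Icc 1 n).card := Finset.card_le_card hFsub
      _ = n := by rw [Nat.card_Icc]; omega
  have hbadcard : (F.filter (fun k => ¬ Finset.Ico k (k + N) ⊆ F)).card ≤ N * Bd.card := by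
    have hsub2 : F.filter (fun k => ¬ Finset.Ico k (k + N) ⊆ F)
        ⊆ Bd.biUnion (fun b => Finset.Icc (b + 1 - N) b) := by
      intro k hk
      obtain ⟨hkF, hknot⟩ := Finset.mem_filter.mp hk
      have hBadne : ((Finset.Ico k (k + N)).filter (fun j => j ∉ F)).Nonempty := by
        by_contra hcon
        apply hknot
        intro j hj
        by_contra hjF
        exact hcon ⟨j, Finset.mem_filter.mpr ⟨hj, hjF⟩⟩
      set j0 := ((Finset.Ico k (k + N)).filter (fun j => j ∉ F)).min' hBadne with hj0def
      have hj0mem := Finset.min'_mem _ hBadne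
      obtain ⟨hj0W, hj0F⟩ := Finset.mem_filter.mp hj0mem
      obtain ⟨hkj0, hj0N⟩ := Finset.mem_Ico.mp hj0W
      have hkj0' : k < j0 := by
        rcases Nat.eq_or_lt_of_le hkj0 with heq | h
        · exact absurd (heq ▸ hkF) hj0F
        · exact h
      have hj1F : j0 - 1 ∈ F := by
        by_contra hcon
        have hmem : j0 - 1 ∈ (Finset.Ico k (k + N)).filter (fun j => j ∉ F) :=
          Finset.mem_filter.mpr ⟨Finset.mem_Ico.mpr ⟨by omega, by omega⟩, hcon⟩
        have := Finset.min'_le _ _ hmem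
        omega
      have hbd : j0 - 1 ∈ Bd := by
        refine Finset.mem_filter.mpr ⟨hj1F, ⟨Finset.mem_coe.mpr hj1F, Or.inr ?_⟩⟩
        have h1 : j0 - 1 + 1 = j0 := by omega
        rw [h1]
        exact fun hcc => hj0F (Finset.mem_coe.mp hcc)
      exact Finset.mem_biUnion.mpr ⟨j0 - 1, hbd, Finset.mem_Icc.mpr ⟨by omega, by omega⟩⟩
    calc (F.filter (fun k => ¬ Finset.Ico k (k + N) ⊆ F)).card
        ≤ (Bd.biUnion (fun b => Finset.Icc (b + 1 - N) b)).card := Finset.card_le_card hsub2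
      _ ≤ ∑ b ∈ Bd, (Finset.Icc (b + 1 - N) b).card := Finset.card_biUnion_le
      _ ≤ ∑ b ∈ Bd, N := Finset.sum_le_sum (fun b _ => by rw [Nat.card_Icc]; omega)
      _ = Bd.card * N := by rw [Finset.sum_const, smul_eq_mul]
      _ = N * Bd.card := Nat.mul_comm _ _
  have h2M1 : (0:ℝ) ≤ S * (2 * (M : ℝ) + 1) := mul_nonneg hS0 (by positivity)
  have hGsum : ∑ k ∈ F.filter (fun k => Finset.Ico k (k + N) ⊆ F), max (φ N (T^[k] x)) 0
      ≤ (N : ℝ) * (∑ a ∈ A, term a) + S * ((N : ℝ) * (NT.card : ℝ))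
        + (n : ℝ) * (S * (2 * (M : ℝ) + 1)) := by
    have hstep : ∑ k ∈ F.filter (fun k => Finset.Ico k (k + N) ⊆ F), max (φ N (T^[k] x)) 0
        ≤ ∑ k ∈ F.filter (fun k => Finset.Ico k (k + N) ⊆ F),
            ((∑ a ∈ A.filter (fun a => k ≤ a ∧ nextEl Ex a ≤ k + N), term a)
              + S * (((Finset.Ico k (k + N)).filter (fun j => j ∉ thick Ex M)).card : ℝ)
              + S * (2 * (M : ℝ) + 1)) := by
      apply Finset.sum_le_sum
      intro k hkG
      exact claim k (Finset.mem_filter.mp hkG).2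
    rw [Finset.sum_add_distrib, Finset.sum_add_distrib] at hstep
    have h1 : ∑ k ∈ F.filter (fun k => Finset.Ico k (k + N) ⊆ F),
          ∑ a ∈ A.filter (fun a => k ≤ a ∧ nextEl Ex a ≤ k + N), term a
        ≤ (N : ℝ) * ∑ a ∈ A, term a := by
      have hre : ∀ k ∈ F.filter (fun k => Finset.Ico k (k + N) ⊆ F),
          ∑ a ∈ A.filter (fun a => k ≤ a ∧ nextEl Ex a ≤ k + N), term a
            = ∑ a ∈ A, if k ≤ a ∧ nextEl Ex a ≤ k + N then term a else 0 := by
        intro k _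
        rw [Finset.sum_filter]
      rw [Finset.sum_congr rfl hre, Finset.sum_comm, Finset.mul_sum]
      apply Finset.sum_le_sum
      intro a haA
      have h2 : ∑ k ∈ F.filter (fun k => Finset.Ico k (k + N) ⊆ F),
            (if k ≤ a ∧ nextEl Ex a ≤ k + N then term a else 0)
          = (((F.filter (fun k => Finset.Ico k (k + N) ⊆ F)).filter
              (fun k => k ≤ a ∧ nextEl Ex a ≤ k + N)).card : ℝ) * term a := by
        rw [← Finset.sum_filter, Finset.sum_const, nsmul_eq_mul]
      rw [h2]
      by_cases hlt : a < nextEl Ex a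
      · have hcard : ((F.filter (fun k => Finset.Ico k (k + N) ⊆ F)).filter
            (fun k => k ≤ a ∧ nextEl Ex a ≤ k + N)).card ≤ N := by
          have hsub3 : (F.filter (fun k => Finset.Ico k (k + N) ⊆ F)).filter
              (fun k => k ≤ a ∧ nextEl Ex a ≤ k + N) ⊆ Finset.Icc (a + 1 - N) a := by
            intro kk hkk
            obtain ⟨-, hk1, hk2⟩ := Finset.mem_filter.mp hkk
            exact Finset.mem_Icc.mpr ⟨by omega, hk1⟩
          calc _ ≤ (Finset.Icc (a + 1 - N) a).card := Finset.card_le_card hsub3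
            _ = a + 1 - (a + 1 - N) := Nat.card_Icc _ _
            _ ≤ N := by omega
        exact mul_le_mul_of_nonneg_right (by exact_mod_cast hcard) (htermA a haA)
      · have h0 : nextEl Ex a - a = 0 := by omega
        have hterm0 : term a = 0 := by
          rw [htermdef]
          simp only [h0]
          rw [hφ0]
        rw [hterm0]
        simp
    have h2 : ∑ k ∈ F.filter (fun k => Finset.Ico k (k + N) ⊆ F),
          S * (((Finset.Ico k (k + N)).filter (fun j => j ∉ thick Ex M)).card : ℝ)
        ≤ S * ((N : ℝ) * (NT.card : ℝ)) := by
      rw [← Finset.mul_sum]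
      apply mul_le_mul_of_nonneg_left _ hS0
      have hnat : ∑ k ∈ F.filter (fun k => Finset.Ico k (k + N) ⊆ F),
          ((Finset.Ico k (k + N)).filter (fun j => j ∉ thick Ex M)).card ≤ N * NT.card := by
        calc ∑ k ∈ F.filter (fun k => Finset.Ico k (k + N) ⊆ F),
              ((Finset.Ico k (k + N)).filter (fun j => j ∉ thick Ex M)).card
            ≤ ∑ k ∈ F.filter (fun k => Finset.Ico k (k + N) ⊆ F),
                (NT.filter (fun j => k ≤ j ∧ j < k + N)).card := by
              apply Finset.sum_le_sum
              intro k hkG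
              apply Finset.card_le_card
              intro j hj
              obtain ⟨hjW, hjnt⟩ := Finset.mem_filter.mp hj
              exact Finset.mem_filter.mpr ⟨Finset.mem_filter.mpr
                ⟨(Finset.mem_filter.mp hkG).2 hjW, hjnt⟩, Finset.mem_Ico.mp hjW⟩
          _ = ∑ k ∈ F.filter (fun k => Finset.Ico k (k + N) ⊆ F),
                ∑ j ∈ NT, if k ≤ j ∧ j < k + N then 1 else 0 := by
              apply Finset.sum_congr rfl
              intro k _
              rw [Finset.card_filter]
          _ = ∑ j ∈ NT, ((F.filter (fun k => Finset.Ico k (k + N) ⊆ F)).filter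
                (fun k => k ≤ j ∧ j < k + N)).card := by
              rw [Finset.sum_comm]
              apply Finset.sum_congr rfl
              intro j _
              exact (Finset.card_filter _ _).symm
          _ ≤ ∑ _j ∈ NT, N := by
              apply Finset.sum_le_sum
              intro j _
              calc ((F.filter (fun k => Finset.Ico k (k + N) ⊆ F)).filter
                    (fun k => k ≤ j ∧ j < k + N)).card
                  ≤ (Finset.Icc (j + 1 - N) j).card := Finset.card_le_card (by
                    intro kk hkk
                    obtain ⟨-, h1, h2⟩ := Finset.mem_filter.mp hkk
                    exact Finset.mem_Icc.mpr ⟨by omega, h1⟩)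
                _ = j + 1 - (j + 1 - N) := Nat.card_Icc _ _
                _ ≤ N := by omega
          _ = NT.card * N := by rw [Finset.sum_const, smul_eq_mul]
          _ = N * NT.card := Nat.mul_comm _ _
      exact_mod_cast hnat
    have h3 : ∑ _k ∈ F.filter (fun k => Finset.Ico k (k + N) ⊆ F), S * (2 * (M : ℝ) + 1)
        ≤ (n : ℝ) * (S * (2 * (M : ℝ) + 1)) := by
      rw [Finset.sum_const, nsmul_eq_mul]
      apply mul_le_mul_of_nonneg_right _ h2M1
      have hle : (F.filter (fun k => Finset.Ico k (k + N) ⊆ F)).card ≤ n :=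
        le_trans (Finset.card_le_card (Finset.filter_subset _ _)) hFcard
      exact_mod_cast hle
    linarith
  have hkey : ∑ k ∈ F, max (φ N (T^[k] x)) 0
      ≤ (N : ℝ) * (∑ a ∈ A, term a) + S * ((N : ℝ) * (NT.card : ℝ))
        + (n : ℝ) * (S * (2 * (M : ℝ) + 1)) + ((N : ℝ) * (Bd.card : ℝ)) * ((N : ℝ) * S) := by
    have hbad : ∑ k ∈ F.filter (fun k => ¬ Finset.Ico k (k + N) ⊆ F), max (φ N (T^[k] x)) 0
        ≤ ((N : ℝ) * (Bd.card : ℝ)) * ((N : ℝ) * S) := by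
      calc ∑ k ∈ F.filter (fun k => ¬ Finset.Ico k (k + N) ⊆ F), max (φ N (T^[k] x)) 0
          ≤ (F.filter (fun k => ¬ Finset.Ico k (k + N) ⊆ F)).card • ((N : ℝ) * S) := by
            apply Finset.sum_le_card_nsmul
            intro k _
            exact max_le (hgrow N _) (mul_nonneg (Nat.cast_nonneg _) hS0)
        _ = ((F.filter (fun k => ¬ Finset.Ico k (k + N) ⊆ F)).card : ℝ) * ((N : ℝ) * S) :=
            nsmul_eq_mul _ _
        _ ≤ ((N : ℝ) * (Bd.card : ℝ)) * ((N : ℝ) * S) := by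
            apply mul_le_mul_of_nonneg_right _ (mul_nonneg (Nat.cast_nonneg _) hS0)
            exact_mod_cast hbadcard
    have hsplitF := Finset.sum_filter_add_sum_filter_not F
      (fun k => Finset.Ico k (k + N) ⊆ F) (fun k => max (φ N (T^[k] x)) 0)
    linarith
  -- final assembly
  have hc : (0:ℝ) < (F.card : ℝ) := by exact_mod_cast Finset.card_pos.mpr hFne
  have hnR : (0:ℝ) < (n : ℝ) := by exact_mod_cast hnpos
  have hNR : (0:ℝ) < (N : ℝ) := by exact_mod_cast hNpos
  rw [hphiE, hNTeq, hBdeq, ← Finset.sum_div, div_div_eq_mul_div, div_sub_div_same,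
    div_le_div_iff_of_pos_right hc]
  have h1 : (∑ k ∈ F, max (φ N (T^[k] x)) 0) / (N : ℝ)
      ≤ ((N : ℝ) * (∑ a ∈ A, term a) + S * ((N : ℝ) * (NT.card : ℝ))
        + (n : ℝ) * (S * (2 * (M : ℝ) + 1)) + ((N : ℝ) * (Bd.card : ℝ)) * ((N : ℝ) * S)) / (N : ℝ) :=
    div_le_div_of_nonneg_right hkey hNR.le
  have h2 : ((N : ℝ) * (∑ a ∈ A, term a) + S * ((N : ℝ) * (NT.card : ℝ))
        + (n : ℝ) * (S * (2 * (M : ℝ) + 1)) + ((N : ℝ) * (Bd.card : ℝ)) * ((N : ℝ) * S)) / (N : ℝ)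
      = (∑ a ∈ A, term a) + S * (NT.card : ℝ)
        + ((n : ℝ) * (S * (2 * (M : ℝ) + 1))) / (N : ℝ) + (N : ℝ) * (Bd.card : ℝ) * S := by
    field_simp
  have h3 : ((n : ℝ) * (S * (2 * (M : ℝ) + 1))) / (N : ℝ) ≤ 4 * (M : ℝ) * S * (n : ℝ) / (N : ℝ) := by
    apply div_le_div_of_nonneg_right _ hNR.le
    have hM1R : (1:ℝ) ≤ (M : ℝ) := by exact_mod_cast hM
    nlinarith [mul_nonneg hnR.le hS0]
  have hBn : (((NT.card : ℝ) / (n : ℝ) + (N : ℝ) * ((Bd.card : ℝ) / (n : ℝ))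
        + 4 * (M : ℝ) / (N : ℝ)) * S) * (n : ℝ)
      = S * (NT.card : ℝ) + (N : ℝ) * (Bd.card : ℝ) * S + 4 * (M : ℝ) * S * (n : ℝ) / (N : ℝ) := by
    field_simp
  linarith
end

section
/- Let (X,T) be a topological system, φ : X → ℝ continuous, and a > 0. Let A ⊆ X be Borel and E : A → P(ℕ) be a-large with respect to the additive cocycle (φ_n) with φ_n = Σ_{0≤k<n} φ∘T^k, i.e. Σ_{j=k}^{l−1} φ(T^j x) ≥ (l−k)a for all consecutive elements k < l of E(x). Let 𝔫 ⊆ ℕ be infinite, and for n ∈ 𝔫 let A_n ⊆ A be Borel and F_n ⊆ {1,…,n} be nonempty with: ∂F_n ⊆ E(x) for all x ∈ A_n; liminf_{𝔫∋n} #F_n/n > 0; limsup_{𝔫∋n} #(∂F_n)/n = 0; and lim_{M→∞} limsup_{𝔫∋n} sup_{x∈A_n} d_n(F_n∖E_M(x)) = 0. Let (μ_n)_{n∈𝔫} be Borel probability measures with μ_n(A_n) = 1. Then every weak-* limit μ of a subsequence of (μ_n^{F_n})_{n∈𝔫} satisfies: for μ-almost every x, limsup_n (1/n) Σ_{0≤k<n}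 φ(T^k x) ≥ a. -/
open Filter MeasureTheory Topology
open scoped ENNReal

/-- The empirical measure `μ^F = (1/#F) ∑_{k ∈ F} T^k_* μ`. -/
noncomputable def empMeas {X : Type*} [MeasurableSpace X] (T : X → X) (μ : Measure X)
    (F : Finset ℕ) : Measure X :=
  (F.card : ℝ≥0∞)⁻¹ • ∑ k ∈ F, Measure.map (T^[k]) μ

/-- Chaining the largeness property through consecutive elements. -/
lemma chain_sum {X : Type*} (T : X → X) (φ : X → ℝ) (a : ℝ) (x : X) (E : Set ℕ)
    (h : ∀ k ∈ E, ∀ l ∈ E, k < l → (∀ j, k < j → j < l → j ∉ E) →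
      (l - k : ℝ) * a ≤ ∑ j ∈ Finset.Ico k l, φ (T^[j] x)) :
    ∀ d p q, p ∈ E → q ∈ E → p ≤ q → q - p ≤ d →
      ((q : ℝ) - (p : ℝ)) * a ≤ ∑ j ∈ Finset.Ico p q, φ (T^[j] x) := by
  intro d
  induction d with
  | zero =>
    intro p q hp hq hpq hd
    have : q = p := by omega
    subst this
    simp
  | succ d ih =>
    intro p q hp hq hpq hd
    rcases eq_or_lt_of_le hpq with rfl | hlt
    · simp
    · have hne : {j | j ∈ E ∧ p < j ∧ j ≤ q}.Nonempty := ⟨q, hq, hlt, le_refl q⟩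
      set s := sInf {j | j ∈ E ∧ p < j ∧ j ≤ q} with hs
      have hsmem : s ∈ {j | j ∈ E ∧ p < j ∧ j ≤ q} := Nat.sInf_mem hne
      obtain ⟨hsE, hps, hsq⟩ := hsmem
      have hcons : ∀ j, p < j → j < s → j ∉ E := by
        intro j h1 h2 hjE
        have : s ≤ j := Nat.sInf_le ⟨hjE, h1, le_trans (le_of_lt h2) hsq⟩
        omega
      have h1 := h p hp s hsE hps hcons
      have h2 := ih s q hsE hq hsq (by omega)
      have hsum := Finset.sum_Ico_consecutive (fun j => φ (T^[j] x)) (le_of_lt hps) hsq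
      have hcast : ((q:ℝ) - (p:ℝ)) * a = ((s:ℝ) - (p:ℝ)) * a + ((q:ℝ) - (s:ℝ)) * a := by ring
      rw [hcast, ← hsum]
      exact add_le_add h1 h2

/-- If `k` is in the `M`-thickening and there is an element of `E` in `[k+N, k+N+2M]`, then
`T^[k] x` has a good Birkhoff time in `[N, N+2M]`. -/
lemma good_time {X : Type*} (T : X → X) (φ : X → ℝ) (a δ K : ℝ) (hδ : 0 < δ)
    (ha : 0 < a) (hK0 : 0 ≤ K)
    (x : X) (E : Set ℕ) (M N k : ℕ)
    (hK : ∀ y, |φ y| ≤ K)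
    (hchain : ∀ p q, p ∈ E → q ∈ E → p ≤ q →
      ((q:ℝ) - (p:ℝ)) * a ≤ ∑ j ∈ Finset.Ico p q, φ (T^[j] x))
    (hNδ : (M:ℝ) * K ≤ (N:ℝ) * δ)
    (hk : k ∈ thick E M) (er : ℕ) (her : er ∈ E) (h1 : k + N ≤ er) (h2 : er ≤ k + N + 2*M) :
    ∃ m, N ≤ m ∧ m ≤ N + 2*M ∧
      (a - δ) * (m:ℝ) ≤ ∑ j ∈ Finset.range m, φ (T^[j] (T^[k] x)) := by
  obtain ⟨α, β, hα, hβ, hβα, hαk, hkβ⟩ := hk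
  have hkM : k ≤ α + M := le_trans hkβ hβα
  have hker : k ≤ er := by omega
  refine ⟨er - k, by omega, by omega, ?_⟩
  have hsum1 : ∑ j ∈ Finset.Ico k er, φ (T^[j] x)
      = ∑ j ∈ Finset.range (er - k), φ (T^[j] (T^[k] x)) := by
    rw [Finset.sum_Ico_eq_sum_range]
    refine Finset.sum_congr rfl (fun i _ => ?_)
    rw [add_comm k i, Function.iterate_add_apply]
  rw [← hsum1]
  have hbig := hchain α er hα her (by omega)
  have hsplit := Finset.sum_Ico_consecutive (fun j => φ (T^[j] x)) hαk hker
  have hsmall : ∑ j ∈ Finset.Ico α k, φ (T^[j] x) ≤ (M:ℝ) * K := by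
    calc ∑ j ∈ Finset.Ico α k, φ (T^[j] x) ≤ (Finset.Ico α k).card • K :=
          Finset.sum_le_card_nsmul _ _ _ (fun j _ => le_trans (le_abs_self _) (hK _))
      _ = ((k - α : ℕ) : ℝ) * K := by rw [Nat.card_Ico, nsmul_eq_mul]
      _ ≤ (M:ℝ) * K := by
          have hle : ((k - α : ℕ) : ℝ) ≤ (M:ℝ) := by exact_mod_cast (by omega : k - α ≤ M)
          exact mul_le_mul_of_nonneg_right hle hK0
  have hcast : ((er - k : ℕ) : ℝ) = (er:ℝ) - (k:ℝ) := by
    push_cast [Nat.cast_sub hker]; ring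
  rw [hcast]
  have g1 : (N:ℝ)*δ ≤ ((er:ℝ) - (k:ℝ))*δ := by
    have : (N:ℝ) ≤ (er:ℝ) - (k:ℝ) := by
      have : ((k + N : ℕ):ℝ) ≤ (er:ℝ) := by exact_mod_cast h1
      push_cast at this; linarith
    exact mul_le_mul_of_nonneg_right this (le_of_lt hδ)
  have g2 : 0 ≤ ((k:ℝ) - (α:ℝ))*a := by
    have : (α:ℝ) ≤ (k:ℝ) := by exact_mod_cast hαk
    exact mul_nonneg (by linarith) (le_of_lt ha)
  have g3 : ((er:ℝ) - (α:ℝ))*a = ((er:ℝ) - (k:ℝ))*a + ((k:ℝ) - (α:ℝ))*a := by ring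
  have g4 : (a - δ) * ((er:ℝ) - (k:ℝ)) = ((er:ℝ) - (k:ℝ))*a - ((er:ℝ) - (k:ℝ))*δ := by ring
  rw [← hsplit] at hbig
  linarith

/-- The counting lemma. -/
lemma count_core (F : Finset ℕ) (Th : Set ℕ) (R : ℕ) (P : ℕ → Prop)
    [DecidablePred P] [DecidablePred (· ∈ Th)]
    (hgood : ∀ k ∈ F, k ∈ Th → k + R ∈ Th → P k) :
    (F.filter (fun k => ¬ P k)).card ≤
      2 * (F.filter (fun k => k ∉ Th)).card + (R+1) * (F.filter (fun q => q+1 ∉ F)).card := by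
  classical
  set B1 := F.filter (fun k => k ∉ Th) with hB1
  set B2 := F.filter (fun k => k + R ∈ F ∧ k + R ∉ Th) with hB2
  set B3 := F.filter (fun k => ∃ q ∈ F, k ≤ q ∧ q ≤ k + R ∧ q+1 ∉ F) with hB3
  have hsub : F.filter (fun k => ¬ P k) ⊆ (B1 ∪ B2) ∪ B3 := by
    intro k hk
    rw [Finset.mem_filter] at hk
    obtain ⟨hkF, hnP⟩ := hk
    by_cases h1 : k ∈ Th
    · have h2 : k + R ∉ Th := fun h => hnP (hgood k hkF h1 h)
      by_cases h3 : k + R ∈ F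
      · exact Finset.mem_union_left _ (Finset.mem_union_right _
          (Finset.mem_filter.mpr ⟨hkF, h3, h2⟩))
      · obtain ⟨q, hqF, hkq, hqkR, hq1⟩ :
            ∃ q, q ∈ F ∧ k ≤ q ∧ q ≤ k + R ∧ q + 1 ∉ F := by
          have hne : (F.filter (fun q => k ≤ q ∧ q ≤ k + R)).Nonempty :=
            ⟨k, Finset.mem_filter.mpr ⟨hkF, le_refl k, Nat.le_add_right _ _⟩⟩
          have hqmem := (F.filter (fun q => k ≤ q ∧ q ≤ k + R)).max'_mem hne
          rw [Finset.mem_filter] at hqmem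
          refine ⟨_, hqmem.1, hqmem.2.1, hqmem.2.2, ?_⟩
          intro hcon
          have hlt : (F.filter (fun q => k ≤ q ∧ q ≤ k + R)).max' hne < k + R :=
            lt_of_le_of_ne hqmem.2.2 (fun h => h3 (h ▸ hqmem.1))
          have : (F.filter (fun q => k ≤ q ∧ q ≤ k + R)).max' hne + 1
              ≤ (F.filter (fun q => k ≤ q ∧ q ≤ k + R)).max' hne :=
            Finset.le_max' _ _ (Finset.mem_filter.mpr ⟨hcon, by omega, by omega⟩)
          omega
        exact Finset.mem_union_right _
          (Finset.mem_filter.mpr ⟨hkF, q, hqF, hkq, hqkR, hq1⟩)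
    · exact Finset.mem_union_left _ (Finset.mem_union_left _ (Finset.mem_filter.mpr ⟨hkF, h1⟩))
  have hcard : (F.filter (fun k => ¬ P k)).card ≤ B1.card + B2.card + B3.card := by
    calc (F.filter (fun k => ¬ P k)).card ≤ ((B1 ∪ B2) ∪ B3).card := Finset.card_le_card hsub
      _ ≤ (B1 ∪ B2).card + B3.card := Finset.card_union_le _ _
      _ ≤ B1.card + B2.card + B3.card := by
          have := Finset.card_union_le B1 B2; omega
  have hB2le : B2.card ≤ B1.card := by
    apply Finset.card_le_card_of_injOn (fun k => k + R)
    · intro k hk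
      rw [hB2, Finset.mem_coe, Finset.mem_filter] at hk
      exact Finset.mem_coe.mpr (Finset.mem_filter.mpr ⟨hk.2.1, hk.2.2⟩)
    · intro x _ y _ hxy
      simp only at hxy
      omega
  have hB3le : B3.card ≤ (R+1) * (F.filter (fun q => q+1 ∉ F)).card := by
    have hsub3 : B3 ⊆ (F.filter (fun q => q+1 ∉ F)).biUnion (fun q => Finset.Icc (q - R) q) := by
      intro k hk
      rw [hB3, Finset.mem_filter] at hk
      obtain ⟨hkF, q, hqF, hkq, hqkR, hq1⟩ := hk
      refine Finset.mem_biUnion.mpr ⟨q, Finset.mem_filter.mpr ⟨hqF, hq1⟩, ?_⟩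
      rw [Finset.mem_Icc]
      omega
    calc B3.card ≤ _ := Finset.card_le_card hsub3
      _ ≤ ∑ q ∈ F.filter (fun q => q+1 ∉ F), (Finset.Icc (q - R) q).card :=
          Finset.card_biUnion_le
      _ ≤ ∑ _q ∈ F.filter (fun q => q+1 ∉ F), (R+1) := by
          refine Finset.sum_le_sum (fun q _ => ?_)
          rw [Nat.card_Icc]
          omega
      _ = (R+1) * (F.filter (fun q => q+1 ∉ F)).card := by
          rw [Finset.sum_const, smul_eq_mul, mul_comm]
  set t := (R+1) * (F.filter (fun q => q+1 ∉ F)).card with ht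
  omega

lemma empMeas_prob {X : Type*} [MeasurableSpace X] {T : X → X} (hT : Measurable T)
    (μ0 : Measure X) [IsProbabilityMeasure μ0] {F : Finset ℕ} (hF : F.Nonempty) :
    IsProbabilityMeasure (empMeas T μ0 F) := by
  constructor
  rw [empMeas, Measure.smul_apply, Measure.finset_sum_apply, smul_eq_mul]
  have : ∀ k ∈ F, Measure.map (T^[k]) μ0 Set.univ = 1 := by
    intro k _
    haveI := Measure.isProbabilityMeasure_map (μ := μ0) (f := T^[k]) (hT.iterate k).aemeasurable
    exact measure_univ
  rw [Finset.sum_congr rfl this, Finset.sum_const, nsmul_eq_mul, mul_one]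
  exact ENNReal.inv_mul_cancel
    (by exact_mod_cast (Finset.card_pos.mpr hF).ne')
    (ENNReal.natCast_ne_top _)

lemma emp_meas_bad {X : Type*} [MeasurableSpace X] {T : X → X} (hT : Measurable T)
    (μ0 : Measure X) [IsProbabilityMeasure μ0] (F : Finset ℕ)
    (A0 : Set X) (hA0 : MeasurableSet A0) (hμA : μ0 A0 = 1)
    (Cs : Set X) (hC : MeasurableSet Cs) (D : ℝ≥0∞)
    (hcount : ∀ x ∈ A0, ({k ∈ (F : Set ℕ) | T^[k] x ∈ Cs}.ncard : ℝ≥0∞) ≤ D) :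
    empMeas T μ0 F Cs ≤ (F.card : ℝ≥0∞)⁻¹ * D := by
  classical
  have hmk : ∀ k : ℕ, Measurable (T^[k]) := fun k => hT.iterate k
  have hstep : ∀ k ∈ F, Measure.map (T^[k]) μ0 Cs ≤ μ0 ((T^[k] ⁻¹' Cs) ∩ A0) := by
    intro k _
    rw [Measure.map_apply (hmk k) hC]
    have hsub : T^[k] ⁻¹' Cs ⊆ ((T^[k] ⁻¹' Cs) ∩ A0) ∪ A0ᶜ := by
      intro y hy
      by_cases h : y ∈ A0
      · exact Or.inl ⟨hy, h⟩
      · exact Or.inr h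
    calc μ0 (T^[k] ⁻¹' Cs) ≤ μ0 (((T^[k] ⁻¹' Cs) ∩ A0) ∪ A0ᶜ) := measure_mono hsub
      _ ≤ μ0 ((T^[k] ⁻¹' Cs) ∩ A0) + μ0 A0ᶜ := measure_union_le _ _
      _ = μ0 ((T^[k] ⁻¹' Cs) ∩ A0) := by
          rw [(prob_compl_eq_zero_iff hA0).mpr hμA, add_zero]
  have hsum : ∑ k ∈ F, μ0 ((T^[k] ⁻¹' Cs) ∩ A0) ≤ D := by
    have hms : ∀ k : ℕ, MeasurableSet ((T^[k] ⁻¹' Cs) ∩ A0) := fun k => ((hmk k) hC).inter hA0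
    have heq : ∑ k ∈ F, μ0 ((T^[k] ⁻¹' Cs) ∩ A0)
        = ∫⁻ x, ∑ k ∈ F, ((T^[k] ⁻¹' Cs) ∩ A0).indicator (1 : X → ℝ≥0∞) x ∂μ0 := by
      rw [lintegral_finset_sum _ (fun k _ => measurable_one.indicator (hms k))]
      exact Finset.sum_congr rfl fun k _ => (lintegral_indicator_one (hms k)).symm
    rw [heq]
    have hptwise : ∀ x, ∑ k ∈ F, ((T^[k] ⁻¹' Cs) ∩ A0).indicator (1 : X → ℝ≥0∞) x ≤ D := by
      intro x
      by_cases hx : x ∈ A0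
      · have hnc : {k ∈ (F : Set ℕ) | T^[k] x ∈ Cs}.ncard
            = (F.filter (fun k => T^[k] x ∈ Cs)).card := by
          rw [← Set.ncard_coe_finset]
          congr 1
          ext k
          simp [Finset.coe_filter]
        have : ∑ k ∈ F, ((T^[k] ⁻¹' Cs) ∩ A0).indicator (1 : X → ℝ≥0∞) x
            = ((F.filter (fun k => T^[k] x ∈ Cs)).card : ℝ≥0∞) := by
          rw [← Finset.sum_boole]
          refine Finset.sum_congr rfl (fun k _ => ?_)
          by_cases h : T^[k] x ∈ Cs <;>
            simp [Set.indicator_apply, Set.mem_inter_iff, h, hx]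
        rw [this, ← hnc]
        exact hcount x hx
      · have hz : ∀ k ∈ F, ((T^[k] ⁻¹' Cs) ∩ A0).indicator (1 : X → ℝ≥0∞) x = 0 := by
          intro k _
          simp [Set.indicator_apply, Set.mem_inter_iff, hx]
        rw [Finset.sum_congr rfl hz, Finset.sum_const, smul_zero]
        exact zero_le
    calc ∫⁻ x, ∑ k ∈ F, ((T^[k] ⁻¹' Cs) ∩ A0).indicator (1 : X → ℝ≥0∞) x ∂μ0
        ≤ ∫⁻ _, D ∂μ0 := lintegral_mono hptwise
      _ = D := by simp
  rw [empMeas, Measure.smul_apply, Measure.finset_sum_apply, smul_eq_mul]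
  exact mul_le_mul_right (le_trans (Finset.sum_le_sum hstep) hsum) _

/-- Positive exponent of empirical measures for additive cocycles: if `E` is `a`-large on `A`
(with `a > 0`), the `Fₙ` form a Følner sequence filled with `E` uniformly on `Aₙ`, and
`μₙ(Aₙ) = 1`, then any weak-* limit `μ` of a subsequence of `μₙ^{Fₙ}` satisfies
`limsup (1/n) ∑_{k<n} φ(T^k x) ≥ a` for `μ`-a.e. `x`. -/
theorem stmt4 {X : Type*} [TopologicalSpace X] [CompactSpace X]
    [TopologicalSpace.MetrizableSpace X] [MeasurableSpace X] [BorelSpace X]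
    (T : X → X) (hT : Continuous T)
    (φ : X → ℝ) (hφc : Continuous φ) (a : ℝ) (ha : 0 < a)
    (A : Set X) (hA : MeasurableSet A) (E : X → Set ℕ)
    (hlarge : ∀ x ∈ A, ∀ k ∈ E x, ∀ l ∈ E x, k < l → (∀ j, k < j → j < l → j ∉ E x) →
      (l - k : ℝ) * a ≤ ∑ j ∈ Finset.Ico k l, φ (T^[j] x))
    (𝔫 : ℕ → ℕ) (h𝔫 : StrictMono 𝔫)
    (As : ℕ → Set X) (hAs : ∀ k, MeasurableSet (As k) ∧ As k ⊆ A)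
    (F : ℕ → Finset ℕ) (hFsub : ∀ k, F k ⊆ Finset.Icc 1 (𝔫 k)) (hFne : ∀ k, (F k).Nonempty)
    (hFbd : ∀ k, ∀ x ∈ As k, natBd (F k : Set ℕ) ⊆ E x)
    (hpos : 0 < liminf (fun k => ((F k).card : ℝ) / (𝔫 k : ℝ)) atTop)
    (hFolner : limsup (fun k => ((natBd (F k : Set ℕ)).ncard : ℝ) / (𝔫 k : ℝ)) atTop = 0)
    (hfill : Tendsto (fun M : ℕ => limsup (fun k =>
        sSup {r : ℝ | ∃ x ∈ As k,
          r = (((F k : Set ℕ) \ thick (E x) M).ncard : ℝ) / (𝔫 k : ℝ)}) atTop)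
      atTop (nhds 0))
    (μs : ℕ → Measure X) (hμs : ∀ k, IsProbabilityMeasure (μs k))
    (hμsA : ∀ k, μs k (As k) = 1)
    (ψ : ℕ → ℕ) (hψ : StrictMono ψ)
    (μ : Measure X) [IsProbabilityMeasure μ]
    (hlim : ∀ g : C(X, ℝ),
      Tendsto (fun j => ∫ x, g x ∂(empMeas T (μs (ψ j)) (F (ψ j)))) atTop
        (𝓝 (∫ x, g x ∂μ))) :
    ∀ᵐ x ∂μ, a ≤ limsup (fun n => (∑ k ∈ Finset.range n, φ (T^[k] x)) / (n : ℝ)) atTop := by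
  classical
  have hTm : Measurable T := hT.measurable
  obtain ⟨K, hK0, hK⟩ : ∃ K : ℝ, 0 ≤ K ∧ ∀ y, |φ y| ≤ K := by
    refine ⟨‖(⟨φ, hφc⟩ : C(X,ℝ))‖, norm_nonneg _, fun y => ?_⟩
    simpa [Real.norm_eq_abs] using ContinuousMap.norm_coe_le_norm (⟨φ, hφc⟩ : C(X,ℝ)) y
  set c := liminf (fun k => ((F k).card : ℝ) / (𝔫 k : ℝ)) atTop with hcdef
  have hc : 0 < c := hpos
  have hn1 : ∀ k, 1 ≤ 𝔫 k := by
    intro k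
    obtain ⟨e, he⟩ := hFne k
    have h := Finset.mem_Icc.mp (hFsub k he)
    omega
  have hnpos : ∀ k, (0:ℝ) < (𝔫 k : ℝ) := fun k => by exact_mod_cast hn1 k
  have hcard_le : ∀ k, (F k).card ≤ 𝔫 k := by
    intro k
    calc (F k).card ≤ (Finset.Icc 1 (𝔫 k)).card := Finset.card_le_card (hFsub k)
      _ ≤ 𝔫 k := by rw [Nat.card_Icc]; omega
  -- element bound for the sSup sets
  have hrle1 : ∀ (M k : ℕ) (x' : X),
      (((F k : Set ℕ) \ thick (E x') M).ncard : ℝ) / (𝔫 k : ℝ) ≤ 1 := by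
    intro M k x'
    have h1 : ((F k : Set ℕ) \ thick (E x') M).ncard ≤ (F k).card := by
      rw [← Set.ncard_coe_finset (F k)]
      exact Set.ncard_le_ncard Set.diff_subset (Finset.finite_toSet _)
    have h2 : (((F k : Set ℕ) \ thick (E x') M).ncard : ℝ) ≤ (𝔫 k : ℝ) := by
      exact_mod_cast le_trans h1 (hcard_le k)
    exact div_le_one_of_le₀ h2 (le_of_lt (hnpos k))
  have hsx : ∀ (M k : ℕ), ∀ x ∈ As k,
      (((F k : Set ℕ) \ thick (E x) M).ncard : ℝ)
        ≤ sSup {r : ℝ | ∃ x ∈ As k,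
            r = (((F k : Set ℕ) \ thick (E x) M).ncard : ℝ) / (𝔫 k : ℝ)} * (𝔫 k : ℝ) := by
    intro M k x hx
    have hbdd : BddAbove {r : ℝ | ∃ x ∈ As k,
        r = (((F k : Set ℕ) \ thick (E x) M).ncard : ℝ) / (𝔫 k : ℝ)} := by
      refine ⟨1, fun r hr => ?_⟩
      obtain ⟨x', _, rfl⟩ := hr
      exact hrle1 M k x'
    have hle := le_csSup hbdd ⟨x, hx, rfl⟩
    calc (((F k : Set ℕ) \ thick (E x) M).ncard : ℝ)
        = (((F k : Set ℕ) \ thick (E x) M).ncard : ℝ) / (𝔫 k : ℝ) * (𝔫 k : ℝ) :=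
          (div_mul_cancel₀ _ (hnpos k).ne').symm
      _ ≤ _ := mul_le_mul_of_nonneg_right hle (le_of_lt (hnpos k))
  have hs_le_one : ∀ (M k : ℕ),
      sSup {r : ℝ | ∃ x ∈ As k,
        r = (((F k : Set ℕ) \ thick (E x) M).ncard : ℝ) / (𝔫 k : ℝ)} ≤ 1 := by
    intro M k
    rcases Set.eq_empty_or_nonempty {r : ℝ | ∃ x ∈ As k,
        r = (((F k : Set ℕ) \ thick (E x) M).ncard : ℝ) / (𝔫 k : ℝ)} with h | h
    · rw [h, Real.sSup_empty]; norm_num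
    · refine csSup_le h (fun r hr => ?_)
      obtain ⟨x', _, rfl⟩ := hr
      exact hrle1 M k x'
  -- boundary density
  have hb_le_one : ∀ k, ((natBd (F k : Set ℕ)).ncard : ℝ) / (𝔫 k : ℝ) ≤ 1 := by
    intro k
    have h1 : (natBd (F k : Set ℕ)).ncard ≤ (F k).card := by
      rw [← Set.ncard_coe_finset (F k)]
      exact Set.ncard_le_ncard (fun q hq => hq.1) (Finset.finite_toSet _)
    have h2 : ((natBd (F k : Set ℕ)).ncard : ℝ) ≤ (𝔫 k : ℝ) := by
      exact_mod_cast le_trans h1 (hcard_le k)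
    exact div_le_one_of_le₀ h2 (le_of_lt (hnpos k))
  -- probability instances
  have hPM : ∀ j : ℕ, IsProbabilityMeasure (empMeas T (μs (ψ j)) (F (ψ j))) := fun j => by
    haveI := hμs (ψ j)
    exact empMeas_prob hTm _ (hFne (ψ j))
  -- weak convergence
  let P : ℕ → ProbabilityMeasure X := fun j => ⟨empMeas T (μs (ψ j)) (F (ψ j)), hPM j⟩
  let Q : ProbabilityMeasure X := ⟨μ, inferInstance⟩
  have hconv : Tendsto P atTop (𝓝 Q) := by
    refine ProbabilityMeasure.tendsto_iff_forall_integral_tendsto.mpr (fun f => ?_)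
    exact hlim f.toContinuousMap
  have hport : ∀ Cs : Set X, IsClosed Cs →
      μ Csᶜ ≤ liminf (fun j => empMeas T (μs (ψ j)) (F (ψ j)) Csᶜ) atTop := by
    intro Cs hCs
    have h1 := ProbabilityMeasure.limsup_measure_closed_le_of_tendsto hconv hCs
    exact @le_measure_compl_liminf_of_limsup_measure_le X _ ℕ atTop μ
      (fun j => empMeas T (μs (ψ j)) (F (ψ j))) _ hPM Cs hCs.measurableSet h1
  have hev3 : ∀ᶠ k in atTop, c/2 < ((F k).card : ℝ)/(𝔫 k : ℝ) := by
    refine eventually_lt_of_lt_liminf (by linarith) ?_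
    exact isBoundedUnder_of ⟨0, fun k =>
      div_nonneg (Nat.cast_nonneg _) (Nat.cast_nonneg _)⟩
  -- THE KEY STEP
  have key : ∀ δ : ℝ, 0 < δ → ∀ η : ℝ, 0 < η → ∀ N₀ : ℕ,
      ∃ N L : ℕ, N₀ ≤ N ∧ 1 ≤ N ∧
        μ (⋃ m ∈ Finset.Icc N L,
            {y | (a - δ) * (m:ℝ) ≤ ∑ j ∈ Finset.range m, φ (T^[j] y)})ᶜ
          ≤ ENNReal.ofReal η := by
    intro δ hδ η hη N₀
    obtain ⟨M, hM⟩ : ∃ M : ℕ, limsup (fun k =>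
        sSup {r : ℝ | ∃ x ∈ As k,
          r = (((F k : Set ℕ) \ thick (E x) M).ncard : ℝ) / (𝔫 k : ℝ)}) atTop < η * c / 8 :=
      (hfill.eventually_lt_const (div_pos (mul_pos hη hc) (by norm_num))).exists
    set N : ℕ := max (max N₀ 1) ⌈(M:ℝ) * K / δ⌉₊ with hN
    set L : ℕ := N + 2*M with hL
    set R : ℕ := N + M with hR
    have hNδ : (M:ℝ) * K ≤ (N:ℝ) * δ := by
      have h1 : (M:ℝ) * K / δ ≤ (⌈(M:ℝ)*K/δ⌉₊ : ℝ) := Nat.le_ceil _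
      have h2 : ((⌈(M:ℝ)*K/δ⌉₊ : ℕ) : ℝ) ≤ (N:ℝ) := by
        exact_mod_cast le_max_right (max N₀ 1) ⌈(M:ℝ)*K/δ⌉₊
      rw [div_le_iff₀ hδ] at h1
      calc (M:ℝ)*K ≤ ((⌈(M:ℝ)*K/δ⌉₊ : ℕ) : ℝ) * δ := h1
        _ ≤ (N:ℝ)*δ := mul_le_mul_of_nonneg_right h2 (le_of_lt hδ)
    set Cs : Set X := ⋃ m ∈ Finset.Icc N L,
        {y | (a - δ) * (m:ℝ) ≤ ∑ j ∈ Finset.range m, φ (T^[j] y)} with hCsdef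
    have hclosed : IsClosed Cs := by
      apply isClosed_biUnion_finset
      intro m _
      exact isClosed_le continuous_const
        (continuous_finset_sum _ (fun j _ => hφc.comp (hT.iterate j)))
    refine ⟨N, L, le_trans (le_max_left N₀ 1) (le_max_left _ _),
      le_trans (le_max_right N₀ 1) (le_max_left _ _), ?_⟩
    have hev1 : ∀ᶠ k in atTop, sSup {r : ℝ | ∃ x ∈ As k,
        r = (((F k : Set ℕ) \ thick (E x) M).ncard : ℝ) / (𝔫 k : ℝ)} < η * c / 8 :=
      eventually_lt_of_limsup_lt hM (isBoundedUnder_of ⟨1, fun k => hs_le_one M k⟩)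
    have hη2pos : 0 < η * c / (8 * ((R:ℝ)+1)) := by
      refine div_pos (mul_pos hη hc) (by positivity)
    have hev2 : ∀ᶠ k in atTop,
        ((natBd (F k : Set ℕ)).ncard : ℝ) / (𝔫 k : ℝ) < η * c / (8 * ((R:ℝ)+1)) :=
      eventually_lt_of_limsup_lt (by rw [hFolner]; exact hη2pos)
        (isBoundedUnder_of ⟨1, fun k => hb_le_one k⟩)
    have hevj : ∀ᶠ j in atTop,
        empMeas T (μs (ψ j)) (F (ψ j)) Csᶜ ≤ ENNReal.ofReal η := by
      have hψt : Tendsto ψ atTop atTop := hψ.tendsto_atTop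
      filter_upwards [hψt.eventually hev1, hψt.eventually hev2, hψt.eventually hev3]
        with j h1 h2 h3
      set k := ψ j with hkdef
      set sk : ℝ := sSup {r : ℝ | ∃ x ∈ As k,
        r = (((F k : Set ℕ) \ thick (E x) M).ncard : ℝ) / (𝔫 k : ℝ)} with hskdef
      set bk : ℝ := ((natBd (F k : Set ℕ)).ncard : ℝ) with hbkdef
      have hcount : ∀ x ∈ As k, ({i ∈ ((F k) : Set ℕ) | T^[i] x ∈ Csᶜ}.ncard : ℝ≥0∞)
          ≤ ENNReal.ofReal (2 * (sk * (𝔫 k : ℝ)) + ((R:ℝ)+1) * bk) := by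
        intro x hx
        have hxA : x ∈ A := (hAs k).2 hx
        have hchain : ∀ p q, p ∈ E x → q ∈ E x → p ≤ q →
            ((q:ℝ) - (p:ℝ)) * a ≤ ∑ j' ∈ Finset.Ico p q, φ (T^[j'] x) := by
          intro p q hp hq hpq
          exact chain_sum T φ a x (E x) (hlarge x hxA) (q - p) p q hp hq hpq le_rfl
        have hgood : ∀ i ∈ F k, i ∈ thick (E x) M → i + R ∈ thick (E x) M →
            T^[i] x ∈ Cs := by
          intro i hiF hiTh hiRTh
          obtain ⟨α, β, hα, hβ, hβα, h1', h2'⟩ := hiRTh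
          have he1 : i + N ≤ α := by omega
          have he2 : α ≤ i + N + 2*M := by omega
          obtain ⟨m, hm1, hm2, hm3⟩ := good_time T φ a δ K hδ ha hK0 x (E x) M N i hK hchain
            hNδ hiTh α hα he1 he2
          exact Set.mem_iUnion₂.mpr ⟨m, Finset.mem_Icc.mpr ⟨hm1, by omega⟩, hm3⟩
        have hcore := count_core (F k) (thick (E x) M) R (fun i => T^[i] x ∈ Cs)
          (fun i hi hh1 hh2 => hgood i hi hh1 hh2)
        have hc1 : (Finset.filter (fun i => i ∉ thick (E x) M) (F k)).card
            = ((F k : Set ℕ) \ thick (E x) M).ncard := by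
          rw [← Set.ncard_coe_finset]
          congr 1
          ext i
          simp [Finset.coe_filter, Set.mem_diff]
        have hc2 : ((Finset.filter (fun q => q+1 ∉ F k) (F k)).card : ℝ) ≤ bk := by
          have hsub : ((Finset.filter (fun q => q+1 ∉ F k) (F k)) : Set ℕ)
              ⊆ natBd ((F k) : Set ℕ) := by
            intro q hq
            simp only [Finset.coe_filter, Set.mem_setOf_eq] at hq
            exact ⟨hq.1, Or.inr hq.2⟩
          have hfin : (natBd ((F k) : Set ℕ)).Finite :=
            Set.Finite.subset (Finset.finite_toSet (F k)) (fun q hq => hq.1)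
          have h := Set.ncard_le_ncard hsub hfin
          rw [Set.ncard_coe_finset] at h
          rw [hbkdef]
          exact_mod_cast h
        have hceq : {i ∈ ((F k) : Set ℕ) | T^[i] x ∈ Csᶜ}.ncard
            = (Finset.filter (fun i => ¬ (T^[i] x ∈ Cs)) (F k)).card := by
          rw [← Set.ncard_coe_finset]
          congr 1
          ext i
          simp [Finset.coe_filter]
        have hreal : (((Finset.filter (fun i => ¬ (T^[i] x ∈ Cs)) (F k)).card) : ℝ)
            ≤ 2 * (sk * (𝔫 k : ℝ)) + ((R:ℝ)+1) * bk := by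
          have h₁ : (((Finset.filter (fun i => ¬ (T^[i] x ∈ Cs)) (F k)).card) : ℝ)
              ≤ 2 * (((Finset.filter (fun i => i ∉ thick (E x) M) (F k)).card) : ℝ)
                + ((R:ℝ)+1) * (((Finset.filter (fun q => q+1 ∉ F k) (F k)).card) : ℝ) := by
            exact_mod_cast hcore
          have h₂ : (((Finset.filter (fun i => i ∉ thick (E x) M) (F k)).card) : ℝ)
              ≤ sk * (𝔫 k : ℝ) := by
            rw [hc1]
            exact hsx M k x hx
          have hRpos : (0:ℝ) ≤ (R:ℝ)+1 := by positivity
          have h₃ := mul_le_mul_of_nonneg_left hc2 hRpos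
          linarith
        rw [hceq]
        calc (((Finset.filter (fun i => ¬ (T^[i] x ∈ Cs)) (F k)).card) : ℝ≥0∞)
            = ENNReal.ofReal (((Finset.filter (fun i => ¬ (T^[i] x ∈ Cs)) (F k)).card) : ℝ) :=
              (ENNReal.ofReal_natCast _).symm
          _ ≤ _ := ENNReal.ofReal_le_ofReal hreal
      haveI := hμs k
      have hbad := emp_meas_bad hTm (μs k) (F k) (As k) (hAs k).1 (hμsA k) Csᶜ
        hclosed.measurableSet.compl _ hcount
      have hDle : 2 * (sk * (𝔫 k : ℝ)) + ((R:ℝ)+1) * bk ≤ η * ((F k).card : ℝ) := by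
        have hb' : bk < η * c / (8*((R:ℝ)+1)) * (𝔫 k : ℝ) := by
          have hh := h2
          rw [div_lt_iff₀ (hnpos k)] at hh
          exact hh
        have hcardn : η * (c/2) * (𝔫 k : ℝ) ≤ η * ((F k).card : ℝ) := by
          have hh := h3
          rw [lt_div_iff₀ (hnpos k)] at hh
          nlinarith
        have hs' : sk * (𝔫 k : ℝ) ≤ η*c/8 * (𝔫 k : ℝ) :=
          mul_le_mul_of_nonneg_right (le_of_lt h1) (le_of_lt (hnpos k))
        have hf2 : ((R:ℝ)+1) * bk ≤ (η*c/8) * (𝔫 k : ℝ) := by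
          have e2 : ((R:ℝ)+1) * bk ≤ ((R:ℝ)+1) * (η * c / (8*((R:ℝ)+1)) * (𝔫 k : ℝ)) :=
            mul_le_mul_of_nonneg_left (le_of_lt hb') (by positivity)
          have hid : ((R:ℝ)+1) * (η * c / (8*((R:ℝ)+1))) = η*c/8 := by
            field_simp
          calc ((R:ℝ)+1) * bk ≤ ((R:ℝ)+1) * (η * c / (8*((R:ℝ)+1)) * (𝔫 k : ℝ)) := e2
            _ = (η*c/8) * (𝔫 k : ℝ) := by rw [← mul_assoc, hid]
        have hf3 : 3 * ((η*c/8) * (𝔫 k : ℝ)) ≤ η * ((F k).card : ℝ) := by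
          nlinarith [mul_pos (mul_pos hη hc) (hnpos k)]
        linarith
      refine le_trans hbad ?_
      have hcard0 : (((F k).card : ℝ≥0∞)) ≠ 0 := by
        exact_mod_cast (Finset.card_pos.mpr (hFne k)).ne'
      calc ((F k).card : ℝ≥0∞)⁻¹ * ENNReal.ofReal (2 * (sk * (𝔫 k : ℝ)) + ((R:ℝ)+1) * bk)
          ≤ ((F k).card : ℝ≥0∞)⁻¹ * ENNReal.ofReal (η * ((F k).card : ℝ)) :=
            mul_le_mul_right (ENNReal.ofReal_le_ofReal hDle) _
        _ = ENNReal.ofReal η := by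
            rw [ENNReal.ofReal_mul (le_of_lt hη), ENNReal.ofReal_natCast,
              mul_comm (ENNReal.ofReal η) (((F k).card : ℝ≥0∞)), ← mul_assoc,
              ENNReal.inv_mul_cancel hcard0 (ENNReal.natCast_ne_top _), one_mul]
    have hlim2 : liminf (fun j => empMeas T (μs (ψ j)) (F (ψ j)) Csᶜ) atTop
        ≤ ENNReal.ofReal η :=
      liminf_le_of_frequently_le hevj.frequently
    exact le_trans (hport Cs hclosed) hlim2
  -- null sets
  have hDnull : ∀ (p : ℕ) (i₀ : ℕ),
      μ {y | ∀ m, i₀ ≤ m →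
        (∑ j ∈ Finset.range m, φ (T^[j] y)) < (a - 1/((p:ℝ)+1)) * (m:ℝ)} = 0 := by
    intro p i₀
    have hδ : (0:ℝ) < 1/((p:ℝ)+1) := by positivity
    have hle : ∀ n : ℕ, μ {y | ∀ m, i₀ ≤ m →
        (∑ j ∈ Finset.range m, φ (T^[j] y)) < (a - 1/((p:ℝ)+1)) * (m:ℝ)}
          ≤ ENNReal.ofReal (1/((n:ℝ)+1)) := by
      intro n
      obtain ⟨N, L, hN0, hN1, hkey⟩ := key (1/((p:ℝ)+1)) hδ (1/((n:ℝ)+1)) (by positivity) i₀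
      refine le_trans (measure_mono ?_) hkey
      intro y hy
      simp only [Set.mem_setOf_eq] at hy
      simp only [Set.mem_compl_iff]
      intro hyC
      obtain ⟨m, hm, hle'⟩ := Set.mem_iUnion₂.mp hyC
      have hm' := Finset.mem_Icc.mp hm
      have := hy m (le_trans hN0 hm'.1)
      simp only [Set.mem_setOf_eq] at hle'
      linarith
    refine le_antisymm ?_ zero_le
    have htend : Tendsto (fun n : ℕ => ENNReal.ofReal (1/((n:ℝ)+1))) atTop (𝓝 0) := by
      simpa using ENNReal.tendsto_ofReal tendsto_one_div_add_atTop_nhds_zero_nat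
    exact ge_of_tendsto' htend hle
  have hae : ∀ᵐ y ∂μ, ∀ (p i₀ : ℕ),
      y ∉ {y | ∀ m, i₀ ≤ m →
        (∑ j ∈ Finset.range m, φ (T^[j] y)) < (a - 1/((p:ℝ)+1)) * (m:ℝ)} := by
    rw [MeasureTheory.ae_all_iff]
    intro p
    rw [MeasureTheory.ae_all_iff]
    intro i₀
    rw [MeasureTheory.ae_iff]
    refine measure_mono_null (fun y hy => ?_) (hDnull p i₀)
    simpa using hy
  filter_upwards [hae] with y hy
  have hbd : IsBoundedUnder (· ≤ ·) atTop
      (fun m : ℕ => (∑ j ∈ Finset.range m, φ (T^[j] y)) / (m:ℝ)) := by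
    refine isBoundedUnder_of ⟨K, fun m => ?_⟩
    rcases Nat.eq_zero_or_pos m with rfl | hm
    · simpa using hK0
    · have hsum : ∑ j ∈ Finset.range m, φ (T^[j] y) ≤ (m:ℝ) * K := by
        calc ∑ j ∈ Finset.range m, φ (T^[j] y) ≤ (Finset.range m).card • K :=
            Finset.sum_le_card_nsmul _ _ _ (fun j _ => le_trans (le_abs_self _) (hK _))
          _ = (m:ℝ) * K := by rw [Finset.card_range, nsmul_eq_mul]
      have hmpos : (0:ℝ) < (m:ℝ) := by exact_mod_cast hm
      rw [div_le_iff₀ hmpos]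
      linarith
  have hstep : ∀ p : ℕ, a - 1/((p:ℝ)+1)
      ≤ limsup (fun m : ℕ => (∑ j ∈ Finset.range m, φ (T^[j] y)) / (m:ℝ)) atTop := by
    intro p
    refine le_limsup_of_frequently_le ?_ hbd
    rw [frequently_atTop]
    intro i₀
    have hmem := hy p (max i₀ 1)
    simp only [Set.mem_setOf_eq, not_forall, not_lt, exists_prop] at hmem
    obtain ⟨m, hm1, hm2⟩ := hmem
    refine ⟨m, le_trans (le_max_left _ _) hm1, ?_⟩
    have hmpos : (0:ℝ) < (m:ℝ) := by
      have h1 : 1 ≤ m := le_trans (le_max_right _ _) hm1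
      exact_mod_cast h1
    rw [le_div_iff₀ hmpos]
    exact hm2
  by_contra hcon
  push_neg at hcon
  have hpos' : 0 < a - limsup (fun n : ℕ =>
      (∑ k ∈ Finset.range n, φ (T^[k] y)) / (n:ℝ)) atTop := by linarith
  obtain ⟨p, hp⟩ := exists_nat_one_div_lt hpos'
  have hst := hstep p
  linarith
end

section
/- Let (X,T) be a topological system, 𝔫 ⊆ ℕ infinite, and for n ∈ 𝔫 let F_n ⊆ {1,…,n} be nonempty and μ_n a Borel probability measure on X. Then for every finite Borel partition P of X and every integer m ≥ 1 one has, for all n ∈ 𝔫: (1/m) H_{μ_n^{F_n}}(P^m) ≥ (1/#F_n) H_{μ_n}(P^{F_n}) − 3m (#(∂F_n)/#F_n) log #P. -/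
open Filter MeasureTheory Topology
open scoped ENNReal

/-- A finite Borel partition of `X`. -/
def IsFinPartition {X : Type*} [MeasurableSpace X] (P : Finset (Set X)) : Prop :=
  (∀ s ∈ P, MeasurableSet s) ∧ (P : Set (Set X)).PairwiseDisjoint id ∧
    ⋃₀ (P : Set (Set X)) = Set.univ

/-- The iterated partition `P^F = ⋁_{k ∈ F} T^{-k} P`. -/
noncomputable def iterP {X : Type*} (T : X → X) (P : Finset (Set X)) (F : Finset ℕ) :
    Finset (Set X) := by
  classical
  exact (F.pi (fun _ => P)).image (fun g => ⋂ k, ⋂ (h : k ∈ F), (T^[k]) ⁻¹' g k h)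

/-- The static entropy `H_ν(P) = -∑_{A ∈ P} ν(A) log ν(A)`. -/
noncomputable def statEnt {X : Type*} [MeasurableSpace X] (ν : Measure X)
    (P : Finset (Set X)) : ℝ :=
  ∑ s ∈ P, Real.negMulLog (ν s).toReal


namespace Stmt5Aux
open Real Finset

variable {X : Type*} [MeasurableSpace X]

noncomputable def pcell (T : X → X) (F : Finset ℕ) (g : ∀ k ∈ F, Set X) : Set X :=
  ⋂ k, ⋂ (h : k ∈ F), (T^[k]) ⁻¹' g k h

lemma mem_pcell {T : X → X} {F : Finset ℕ} {g : ∀ k ∈ F, Set X} {x : X} :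
    x ∈ pcell T F g ↔ ∀ k (h : k ∈ F), T^[k] x ∈ g k h := by
  simp [pcell]

noncomputable def HF (T : X → X) (P : Finset (Set X)) (ν : Measure X) (F : Finset ℕ) : ℝ :=
  ∑ g ∈ F.pi (fun _ => P), Real.negMulLog (ν (pcell T F g)).toReal

variable {T : X → X} {P : Finset (Set X)} (hT : Measurable T)
  (hPm : ∀ s ∈ P, MeasurableSet s)
  (hPd : (P : Set (Set X)).PairwiseDisjoint id)
  (hPu : ⋃₀ (P : Set (Set X)) = Set.univ)

include hT hPm hPd hPu

set_option linter.unusedSectionVars false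

lemma pcell_measurable {F : Finset ℕ} {g : ∀ k ∈ F, Set X}
    (hg : ∀ k (h : k ∈ F), g k h ∈ P) : MeasurableSet (pcell T F g) := by
  refine MeasurableSet.iInter (fun k => MeasurableSet.iInter (fun h => ?_))
  exact (hPm _ (hg k h)).preimage (hT.iterate k)

lemma pcell_subset {F : Finset ℕ} {g : ∀ k ∈ F, Set X} {k : ℕ} (h : k ∈ F) :
    pcell T F g ⊆ (T^[k]) ⁻¹' g k h := by
  intro x hx
  exact mem_pcell.1 hx k h

/-- distinct pi-functions give disjoint cells -/
lemma pcell_disjoint {F : Finset ℕ} {g g' : ∀ k ∈ F, Set X}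
    (hg : ∀ k (h : k ∈ F), g k h ∈ P) (hg' : ∀ k (h : k ∈ F), g' k h ∈ P)
    (hne : g ≠ g') : Disjoint (pcell T F g) (pcell T F g') := by
  have : ∃ k, ∃ h : k ∈ F, g k h ≠ g' k h := by
    by_contra hc
    push_neg at hc
    exact hne (funext fun k => funext fun h => hc k h)
  obtain ⟨k, h, hkne⟩ := this
  have hdisj : Disjoint (g k h) (g' k h) := hPd (hg k h) (hg' k h) hkne
  exact Disjoint.mono (pcell_subset hT hPm hPd hPu h) (pcell_subset hT hPm hPd hPu h) (hdisj.preimage (T^[k]))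

/-- the cells cover X -/
lemma pcell_cover (F : Finset ℕ) :
    ⋃ g ∈ F.pi (fun _ => P), pcell T F g = Set.univ := by
  apply Set.eq_univ_of_forall
  intro x
  have hex : ∀ k : ℕ, ∃ s ∈ P, T^[k] x ∈ s := by
    intro k
    have : T^[k] x ∈ ⋃₀ (P : Set (Set X)) := by rw [hPu]; trivial
    simpa [Set.mem_sUnion] using this
  refine Set.mem_iUnion.2 ⟨fun k _ => (hex k).choose, Set.mem_iUnion.2 ⟨?_, ?_⟩⟩
  · exact Finset.mem_pi.2 fun k h => (hex k).choose_spec.1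
  · exact mem_pcell.2 fun k h => (hex k).choose_spec.2

/-- partition-sum lemma -/
lemma pcell_sum (F : Finset ℕ) {ν : Measure X} {B : Set X} (hB : MeasurableSet B) :
    ∑ g ∈ F.pi (fun _ => P), ν (B ∩ pcell T F g) = ν B := by
  classical
  have h1 : (⋃ g ∈ F.pi (fun _ => P), (B ∩ pcell T F g)) = B := by
    rw [← Set.inter_iUnion₂]
    rw [pcell_cover hT hPm hPd hPu F, Set.inter_univ]
  calc ∑ g ∈ F.pi (fun _ => P), ν (B ∩ pcell T F g)
      = ν (⋃ g ∈ F.pi (fun _ => P), (B ∩ pcell T F g)) := by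
        refine (measure_biUnion_finset ?_ ?_).symm
        · intro g hg g' hg' hne
          refine Disjoint.mono Set.inter_subset_right Set.inter_subset_right ?_
          exact pcell_disjoint hT hPm hPd hPu (Finset.mem_pi.1 hg) (Finset.mem_pi.1 hg') hne
        · intro g hg
          exact hB.inter (pcell_measurable hT hPm hPd hPu (Finset.mem_pi.1 hg))
    _ = ν B := by rw [h1]

lemma pcell_sum_real (F : Finset ℕ) {ν : Measure X} [IsFiniteMeasure ν] {B : Set X}
    (hB : MeasurableSet B) :
    ∑ g ∈ F.pi (fun _ => P), (ν (B ∩ pcell T F g)).toReal = (ν B).toReal := by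
  rw [← ENNReal.toReal_sum (fun g _ => measure_ne_top ν _), pcell_sum hT hPm hPd hPu F hB]


omit hT hPm hPd hPu in
lemma jensen_sum_negMulLog {ι : Type*} {s : Finset ι} {p : ι → ℝ}
    (h0 : ∀ i ∈ s, 0 ≤ p i) (h1 : ∑ i ∈ s, p i = 1) :
    ∑ i ∈ s, Real.negMulLog (p i) ≤ Real.log s.card := by
  have hne : s.Nonempty := Finset.nonempty_of_sum_ne_zero (by rw [h1]; norm_num)
  have hn : (0:ℝ) < s.card := by exact_mod_cast Finset.card_pos.2 hne
  have hw : ∑ _i ∈ s, (s.card:ℝ)⁻¹ = 1 := by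
    rw [Finset.sum_const, nsmul_eq_mul]
    field_simp
  have hJ := Real.concaveOn_negMulLog.le_map_sum (t := s) (w := fun _ => (s.card:ℝ)⁻¹)
    (p := p) (fun i _ => by positivity) hw (fun i hi => h0 i hi)
  have hsum : ∑ i ∈ s, (s.card:ℝ)⁻¹ • p i = (s.card:ℝ)⁻¹ := by
    simp only [smul_eq_mul, ← Finset.mul_sum, h1, mul_one]
  rw [hsum] at hJ
  have hval : Real.negMulLog ((s.card:ℝ)⁻¹) = (s.card:ℝ)⁻¹ * Real.log s.card := by
    rw [Real.negMulLog, Real.log_inv]; ring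
  rw [hval] at hJ
  have : ∑ i ∈ s, (s.card:ℝ)⁻¹ • Real.negMulLog (p i)
      = (s.card:ℝ)⁻¹ * ∑ i ∈ s, Real.negMulLog (p i) := by
    simp only [smul_eq_mul, Finset.mul_sum]
  rw [this] at hJ
  have := (mul_le_mul_iff_right₀ (by positivity : (0:ℝ) < (s.card:ℝ)⁻¹)).1 hJ
  exact this

omit hT hPm hPd hPu in
/-- `negMulLog` of a sum is at most the sum of `negMulLog`s. -/
lemma negMulLog_sum_le {ι : Type*} {s : Finset ι} {x : ι → ℝ} (h0 : ∀ i ∈ s, 0 ≤ x i) :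
    Real.negMulLog (∑ i ∈ s, x i) ≤ ∑ i ∈ s, Real.negMulLog (x i) := by
  have hS : ∀ i ∈ s, x i ≤ ∑ j ∈ s, x j := fun i hi =>
    Finset.single_le_sum h0 hi
  rw [Real.negMulLog, neg_mul, Finset.sum_mul (s := s) (f := x)]
  rw [← Finset.sum_neg_distrib]
  apply Finset.sum_le_sum
  intro i hi
  rw [Real.negMulLog, neg_mul, neg_le_neg_iff]
  rcases eq_or_lt_of_le (h0 i hi) with h | h
  · simp [← h]
  · exact mul_le_mul_of_nonneg_left (Real.log_le_log h (hS i hi)) (h0 i hi)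

omit hT hPm hPd hPu in
/-- Gibbs-type per-term inequality. -/
lemma gibbs_term {p a b : ℝ} (hp : 0 ≤ p) (hpa : p ≤ a) (hpb : p ≤ b) :
    p - a * b ≤ p * Real.log p - p * Real.log a - p * Real.log b := by
  rcases eq_or_lt_of_le hp with h | h
  · have ha : 0 ≤ a := le_trans hp hpa
    have hb : 0 ≤ b := le_trans hp hpb
    simp [← h]
    positivity
  · have ha : 0 < a := lt_of_lt_of_le h hpa
    have hb : 0 < b := lt_of_lt_of_le h hpb
    have hq : 0 < a * b := mul_pos ha hb
    have key : Real.log (a * b / p) ≤ a * b / p - 1 :=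
      Real.log_le_sub_one_of_pos (by positivity)
    have hlog : Real.log (a * b / p) = Real.log a + Real.log b - Real.log p := by
      rw [Real.log_div (by positivity) (ne_of_gt h), Real.log_mul (ne_of_gt ha) (ne_of_gt hb)]
    rw [hlog] at key
    have := mul_le_mul_of_nonneg_left key hp
    have h2 : p * (a * b / p) = a * b := by field_simp
    nlinarith [this]


omit hT hPm hPd hPu in
lemma pi_cast {α : Type*} {S : Finset ℕ} (g : ∀ k ∈ S, α) {a b : ℕ} (h : a = b) (ha : a ∈ S) :
    g a ha = g b (h ▸ ha) := by subst h; rfl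

section Union

variable {F G : Finset ℕ}

omit hT hPm hPd hPu

noncomputable def resL (F G : Finset ℕ) (g : ∀ k ∈ F ∪ G, Set X) : ∀ k ∈ F, Set X :=
  fun k hk => g k (Finset.mem_union_left _ hk)

noncomputable def resR (F G : Finset ℕ) (g : ∀ k ∈ F ∪ G, Set X) : ∀ k ∈ G, Set X :=
  fun k hk => g k (Finset.mem_union_right _ hk)

lemma pcell_union (g : ∀ k ∈ F ∪ G, Set X) :
    pcell T (F ∪ G) g = pcell T F (resL F G g) ∩ pcell T G (resR F G g) := by
  ext x
  simp only [mem_pcell, Set.mem_inter_iff, resL, resR]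
  constructor
  · intro h
    exact ⟨fun k hk => h k _, fun k hk => h k _⟩
  · rintro ⟨h1, h2⟩ k hk
    rcases Finset.mem_union.1 hk with h | h
    · exact h1 k h
    · exact h2 k h

noncomputable def glue (F G : Finset ℕ) (g₁ : ∀ k ∈ F, Set X) (g₂ : ∀ k ∈ G, Set X) :
    ∀ k ∈ F ∪ G, Set X :=
  fun k hk => if h : k ∈ F then g₁ k h else g₂ k (by
    rcases Finset.mem_union.1 hk with h' | h'
    · exact absurd h' h
    · exact h')

lemma resL_glue (g₁ : ∀ k ∈ F, Set X) (g₂ : ∀ k ∈ G, Set X) :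
    resL F G (glue F G g₁ g₂) = g₁ := by
  funext k hk
  simp [resL, glue, hk]

lemma resR_glue (g₁ : ∀ k ∈ F, Set X) (g₂ : ∀ k ∈ G, Set X)
    (hcompat : ∀ k (h₁ : k ∈ F) (h₂ : k ∈ G), g₁ k h₁ = g₂ k h₂) :
    resR F G (glue F G g₁ g₂) = g₂ := by
  funext k hk
  by_cases h : k ∈ F
  · simp only [resR, glue, dif_pos h]
    exact hcompat k h hk
  · simp [resR, glue, h]

end Union

/-- Key double-sum formula for `HF` on a union. -/
lemma HF_union (ν : Measure X) (F G : Finset ℕ) :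
    HF T P ν (F ∪ G) = ∑ g₁ ∈ F.pi (fun _ => P), ∑ g₂ ∈ G.pi (fun _ => P),
      Real.negMulLog (ν (pcell T F g₁ ∩ pcell T G g₂)).toReal := by
  classical
  rw [← Finset.sum_product']
  set φ : (∀ k ∈ F ∪ G, Set X) → ((∀ k ∈ F, Set X) × (∀ k ∈ G, Set X)) :=
    fun g => (resL F G g, resR F G g) with hφ
  have hsub : ((F ∪ G).pi (fun _ => P)).image φ ⊆
      (F.pi (fun _ => P)) ×ˢ (G.pi (fun _ => P)) := by
    intro z hz
    obtain ⟨g, hg, rfl⟩ := Finset.mem_image.1 hz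
    have hg' := Finset.mem_pi.1 hg
    refine Finset.mem_product.2 ⟨Finset.mem_pi.2 fun k h => hg' k _, Finset.mem_pi.2 fun k h => hg' k _⟩
  have hvanish : ∀ z ∈ (F.pi (fun _ => P)) ×ˢ (G.pi (fun _ => P)),
      z ∉ ((F ∪ G).pi (fun _ => P)).image φ →
      Real.negMulLog (ν (pcell T F z.1 ∩ pcell T G z.2)).toReal = 0 := by
    rintro ⟨g₁, g₂⟩ hz hnot
    have hmem := Finset.mem_product.1 hz
    have hincompat : ∃ k, ∃ h₁ : k ∈ F, ∃ h₂ : k ∈ G, g₁ k h₁ ≠ g₂ k h₂ := by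
      by_contra hc
      push_neg at hc
      apply hnot
      refine Finset.mem_image.2 ⟨glue F G g₁ g₂, ?_, ?_⟩
      · refine Finset.mem_pi.2 fun k hk => ?_
        by_cases h : k ∈ F
        · simpa [glue, h] using Finset.mem_pi.1 hmem.1 k h
        · have h' : k ∈ G := by
            rcases Finset.mem_union.1 hk with h'' | h''
            · exact absurd h'' h
            · exact h''
          simpa [glue, h] using Finset.mem_pi.1 hmem.2 k h'
      · rw [hφ]
        exact Prod.ext (resL_glue g₁ g₂) (resR_glue g₁ g₂ hc)
    obtain ⟨k, h₁, h₂, hne⟩ := hincompat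
    have hd : Disjoint (g₁ k h₁) (g₂ k h₂) :=
      hPd (Finset.mem_pi.1 hmem.1 k h₁) (Finset.mem_pi.1 hmem.2 k h₂) hne
    have : pcell T F g₁ ∩ pcell T G g₂ = ∅ := by
      have hsub1 : pcell T F g₁ ∩ pcell T G g₂ ⊆
          ((T^[k]) ⁻¹' g₁ k h₁) ∩ ((T^[k]) ⁻¹' g₂ k h₂) :=
        Set.inter_subset_inter (pcell_subset hT hPm hPd hPu h₁) (pcell_subset hT hPm hPd hPu h₂)
      have : ((T^[k]) ⁻¹' g₁ k h₁) ∩ ((T^[k]) ⁻¹' g₂ k h₂) = ∅ := by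
        rw [← Set.preimage_inter]
        rw [Set.disjoint_iff_inter_eq_empty.1 hd]
        simp
      exact Set.subset_empty_iff.1 (this ▸ hsub1)
    rw [this]
    simp
  rw [← Finset.sum_subset hsub hvanish]
  rw [Finset.sum_image ?hinj]
  case hinj =>
    intro g hg g' hg' heq
    have hL : resL F G g = resL F G g' := congrArg Prod.fst heq
    have hR : resR F G g = resR F G g' := congrArg Prod.snd heq
    funext k hk
    rcases Finset.mem_union.1 hk with h | h
    · exact congrFun (congrFun hL k) h
    · exact congrFun (congrFun hR k) h
  apply Finset.sum_congr rfl
  intro g _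
  rw [hφ]
  simp only []
  rw [← pcell_union]


/-- Monotonicity: `HF F ≤ HF (F ∪ G)`. -/
lemma HF_le_union (ν : Measure X) [IsProbabilityMeasure ν] (F G : Finset ℕ) :
    HF T P ν F ≤ HF T P ν (F ∪ G) := by
  rw [HF_union hT hPm hPd hPu ν F G]
  unfold HF
  apply Finset.sum_le_sum
  intro g₁ hg₁
  have hA : MeasurableSet (pcell T F g₁) :=
    pcell_measurable hT hPm hPd hPu (Finset.mem_pi.1 hg₁)
  have hmarg : ∑ g₂ ∈ G.pi (fun _ => P), (ν (pcell T F g₁ ∩ pcell T G g₂)).toReal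
      = (ν (pcell T F g₁)).toReal := pcell_sum_real hT hPm hPd hPu G hA
  rw [← hmarg]
  exact negMulLog_sum_le (fun g₂ _ => ENNReal.toReal_nonneg)

/-- Subadditivity: `HF (F ∪ G) ≤ HF F + HF G`. -/
lemma HF_union_le (ν : Measure X) [IsProbabilityMeasure ν] (F G : Finset ℕ) :
    HF T P ν (F ∪ G) ≤ HF T P ν F + HF T P ν G := by
  classical
  set piF := F.pi (fun _ => P) with hpiF
  set piG := G.pi (fun _ => P) with hpiG
  set p : (∀ k ∈ F, Set X) → (∀ k ∈ G, Set X) → ℝ :=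
    fun g₁ g₂ => (ν (pcell T F g₁ ∩ pcell T G g₂)).toReal with hp
  set a : (∀ k ∈ F, Set X) → ℝ := fun g₁ => (ν (pcell T F g₁)).toReal with ha
  set b : (∀ k ∈ G, Set X) → ℝ := fun g₂ => (ν (pcell T G g₂)).toReal with hb
  have hmargA : ∀ g₁ ∈ piF, ∑ g₂ ∈ piG, p g₁ g₂ = a g₁ := by
    intro g₁ hg₁
    exact pcell_sum_real hT hPm hPd hPu G
      (pcell_measurable hT hPm hPd hPu (Finset.mem_pi.1 hg₁))
  have hmargB : ∀ g₂ ∈ piG, ∑ g₁ ∈ piF, p g₁ g₂ = b g₂ := by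
    intro g₂ hg₂
    have h := pcell_sum_real hT hPm hPd hPu F
      (ν := ν) (B := pcell T G g₂)
      (pcell_measurable hT hPm hPd hPu (Finset.mem_pi.1 hg₂))
    show ∑ g₁ ∈ piF, p g₁ g₂ = (ν (pcell T G g₂)).toReal
    rw [← h]
    apply Finset.sum_congr rfl
    intro g₁ _
    show (ν (pcell T F g₁ ∩ pcell T G g₂)).toReal = _
    rw [Set.inter_comm]
  have hsum_a : ∑ g₁ ∈ piF, a g₁ = 1 := by
    have := pcell_sum_real hT hPm hPd hPu F (ν := ν) (B := Set.univ) MeasurableSet.univ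
    simpa [measure_univ] using this.trans (by simp)
  have hsum_b : ∑ g₂ ∈ piG, b g₂ = 1 := by
    have := pcell_sum_real hT hPm hPd hPu G (ν := ν) (B := Set.univ) MeasurableSet.univ
    simpa [measure_univ] using this.trans (by simp)
  -- rewrite HF F as a double sum
  have e1 : HF T P ν F = ∑ g₁ ∈ piF, ∑ g₂ ∈ piG, -(p g₁ g₂ * Real.log (a g₁)) := by
    unfold HF
    apply Finset.sum_congr rfl
    intro g₁ hg₁
    show Real.negMulLog (a g₁) = ∑ g₂ ∈ piG, -(p g₁ g₂ * Real.log (a g₁))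
    rw [Finset.sum_neg_distrib, ← Finset.sum_mul, hmargA g₁ hg₁, Real.negMulLog, neg_mul]
  have e2 : HF T P ν G = ∑ g₁ ∈ piF, ∑ g₂ ∈ piG, -(p g₁ g₂ * Real.log (b g₂)) := by
    unfold HF
    rw [Finset.sum_comm (s := piF) (t := piG)]
    apply Finset.sum_congr rfl
    intro g₂ hg₂
    show Real.negMulLog (b g₂) = ∑ g₁ ∈ piF, -(p g₁ g₂ * Real.log (b g₂))
    rw [Finset.sum_neg_distrib, ← Finset.sum_mul, hmargB g₂ hg₂, Real.negMulLog, neg_mul]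
  have e0 : HF T P ν (F ∪ G) = ∑ g₁ ∈ piF, ∑ g₂ ∈ piG, -(p g₁ g₂ * Real.log (p g₁ g₂)) := by
    rw [HF_union hT hPm hPd hPu ν F G]
    apply Finset.sum_congr rfl; intro g₁ _
    apply Finset.sum_congr rfl; intro g₂ _
    show Real.negMulLog (p g₁ g₂) = -(p g₁ g₂ * Real.log (p g₁ g₂))
    rw [Real.negMulLog, neg_mul]
  have hgibbs : ∑ g₁ ∈ piF, ∑ g₂ ∈ piG, (p g₁ g₂ - a g₁ * b g₂)
      ≤ ∑ g₁ ∈ piF, ∑ g₂ ∈ piG,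
        (p g₁ g₂ * Real.log (p g₁ g₂) - p g₁ g₂ * Real.log (a g₁) - p g₁ g₂ * Real.log (b g₂)) := by
    apply Finset.sum_le_sum; intro g₁ hg₁
    apply Finset.sum_le_sum; intro g₂ hg₂
    apply gibbs_term ENNReal.toReal_nonneg
    · exact ENNReal.toReal_mono (measure_ne_top ν _) (measure_mono Set.inter_subset_left)
    · exact ENNReal.toReal_mono (measure_ne_top ν _) (measure_mono Set.inter_subset_right)
  have hzero : ∑ g₁ ∈ piF, ∑ g₂ ∈ piG, (p g₁ g₂ - a g₁ * b g₂) = 0 := by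
    have h1 : ∑ g₁ ∈ piF, ∑ g₂ ∈ piG, p g₁ g₂ = 1 := by
      rw [Finset.sum_congr rfl hmargA, hsum_a]
    have h2 : ∑ g₁ ∈ piF, ∑ g₂ ∈ piG, (a g₁ * b g₂) = 1 := by
      rw [← Finset.sum_mul_sum, hsum_a, hsum_b, one_mul]
    simp only [Finset.sum_sub_distrib, h1, h2, sub_self]
  have hsplit : ∑ g₁ ∈ piF, ∑ g₂ ∈ piG,
        (p g₁ g₂ * Real.log (p g₁ g₂) - p g₁ g₂ * Real.log (a g₁) - p g₁ g₂ * Real.log (b g₂))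
      = (- HF T P ν (F ∪ G)) - (- HF T P ν F) - (- HF T P ν G) := by
    rw [e0, e1, e2]
    simp only [Finset.sum_sub_distrib, Finset.sum_neg_distrib]
    ring
  rw [hsplit] at hgibbs
  rw [hzero] at hgibbs
  linarith

omit hPd hPu in
lemma HF_empty (ν : Measure X) [IsProbabilityMeasure ν] : HF T P ν (∅ : Finset ℕ) = 0 := by
  unfold HF
  rw [Finset.pi_empty, Finset.sum_singleton]
  have : pcell T (∅ : Finset ℕ) (Finset.Pi.empty (fun _ => Set X)) = Set.univ := by
    ext x; simp [mem_pcell]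
  rw [this, measure_univ]
  simp

lemma HF_biUnion_le (ν : Measure X) [IsProbabilityMeasure ν] {ι : Type*}
    (s : Finset ι) (f : ι → Finset ℕ) :
    HF T P ν (s.biUnion f) ≤ ∑ i ∈ s, HF T P ν (f i) := by
  classical
  induction s using Finset.induction_on with
  | empty => simp [HF_empty hT hPm]
  | insert _ _ hx ih =>
    rename_i x s'
    rw [Finset.biUnion_insert, Finset.sum_insert hx]
    calc HF T P ν (f x ∪ s'.biUnion f) ≤ HF T P ν (f x) + HF T P ν (s'.biUnion f) :=
          HF_union_le hT hPm hPd hPu ν _ _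
      _ ≤ HF T P ν (f x) + ∑ i ∈ s', HF T P ν (f i) := by linarith


/-- `HF` is at most `#F log #P`. -/
lemma HF_le_card (ν : Measure X) [IsProbabilityMeasure ν] (F : Finset ℕ) :
    HF T P ν F ≤ (F.card : ℝ) * Real.log (P.card : ℝ) := by
  classical
  have h1 : ∑ g ∈ F.pi (fun _ => P), (ν (pcell T F g)).toReal = 1 := by
    have := pcell_sum_real hT hPm hPd hPu F (ν := ν) (B := Set.univ) MeasurableSet.univ
    simpa [measure_univ] using this.trans (by simp)
  have hJ := jensen_sum_negMulLog (s := F.pi (fun _ => P))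
    (p := fun g => (ν (pcell T F g)).toReal) (fun g _ => ENNReal.toReal_nonneg) h1
  have hcard : ((F.pi (fun _ => P)).card : ℝ) = ((P.card : ℝ)) ^ (F.card) := by
    rw [Finset.card_pi, Finset.prod_const]
    push_cast
    rfl
  calc HF T P ν F ≤ Real.log ((F.pi (fun _ => P)).card) := hJ
    _ = (F.card : ℝ) * Real.log (P.card : ℝ) := by
        rw [hcard, Real.log_pow]

omit hPd hPu in
lemma HF_nonneg (ν : Measure X) [IsProbabilityMeasure ν] (F : Finset ℕ) :
    0 ≤ HF T P ν F := by
  apply Finset.sum_nonneg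
  intro g _
  exact Real.negMulLog_nonneg ENNReal.toReal_nonneg (by
    exact ENNReal.toReal_le_of_le_ofReal zero_le_one (by simpa using prob_le_one (μ := ν)))

/-- `statEnt` of `iterP` equals `HF`. -/
lemma statEnt_iterP (ν : Measure X) (F : Finset ℕ) :
    statEnt ν (iterP T P F) = HF T P ν F := by
  classical
  have hiter : iterP T P F = (F.pi (fun _ => P)).image (pcell T F) := rfl
  set s₁ := (F.pi (fun _ => P)).filter (fun g => pcell T F g ≠ ∅) with hs₁
  have hsub : s₁.image (pcell T F) ⊆ (F.pi (fun _ => P)).image (pcell T F) :=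
    Finset.image_subset_image (Finset.filter_subset _ _)
  have hstep1 : statEnt ν (iterP T P F)
      = ∑ s ∈ s₁.image (pcell T F), Real.negMulLog (ν s).toReal := by
    unfold statEnt
    rw [hiter]
    refine (Finset.sum_subset hsub ?_).symm
    intro s hs hns
    obtain ⟨g, hg, rfl⟩ := Finset.mem_image.1 hs
    by_cases hne : pcell T F g = ∅
    · rw [hne]; simp
    · exact absurd (Finset.mem_image.2 ⟨g, Finset.mem_filter.2 ⟨hg, hne⟩, rfl⟩) hns
  have hstep2 : ∑ s ∈ s₁.image (pcell T F), Real.negMulLog (ν s).toReal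
      = ∑ g ∈ s₁, Real.negMulLog (ν (pcell T F g)).toReal := by
    refine Finset.sum_image ?_
    intro g hg g' hg' heq
    by_contra hne
    have hd := pcell_disjoint hT hPm hPd hPu
      (Finset.mem_pi.1 (Finset.mem_filter.1 hg).1) (Finset.mem_pi.1 (Finset.mem_filter.1 hg').1) hne
    rw [heq] at hd
    exact (Finset.mem_filter.1 hg').2 (disjoint_self.1 hd)
  have hstep3 : ∑ g ∈ s₁, Real.negMulLog (ν (pcell T F g)).toReal
      = ∑ g ∈ F.pi (fun _ => P), Real.negMulLog (ν (pcell T F g)).toReal := by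
    refine Finset.sum_filter_of_ne ?_
    intro g _ hne
    intro hc
    rw [hc] at hne
    simp at hne
  rw [hstep1, hstep2, hstep3]
  rfl


/-- Shift lemma: `HF μ (k + G) = HF (T^k_* μ) G`. -/
lemma HF_shift (ν : Measure X) (k : ℕ) (G : Finset ℕ) :
    HF T P ν (G.image (fun i => k + i)) = HF T P (Measure.map (T^[k]) ν) G := by
  classical
  set S := G.image (fun i => k + i) with hS
  refine Finset.sum_nbij'
    (i := fun (g : ∀ a ∈ S, Set X) => (fun a ha => g (k + a) (Finset.mem_image_of_mem _ ha) :
        ∀ a ∈ G, Set X))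
    (j := fun (g : ∀ a ∈ G, Set X) => (fun b hb => g (b - k) (by
        obtain ⟨a, ha, hak⟩ := Finset.mem_image.1 hb
        have : b - k = a := by omega
        rw [this]; exact ha) : ∀ b ∈ S, Set X))
    ?_ ?_ ?_ ?_ ?_
  · intro g hg
    exact Finset.mem_pi.2 fun a ha => Finset.mem_pi.1 hg _ _
  · intro g hg
    exact Finset.mem_pi.2 fun b hb => Finset.mem_pi.1 hg _ _
  · intro g hg
    funext b hb
    have hkb : k + (b - k) = b := by
      obtain ⟨a, ha, hak⟩ := Finset.mem_image.1 hb
      omega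
    exact pi_cast g hkb _
  · intro g hg
    funext a ha
    have hka : (k + a) - k = a := by omega
    exact pi_cast g hka _
  · intro g hg
    have hgmem : ∀ a (ha : a ∈ G), g (k + a) (Finset.mem_image_of_mem _ ha) ∈ P :=
      fun a ha => Finset.mem_pi.1 hg _ _
    have hcell : pcell T S g = (T^[k]) ⁻¹' pcell T G
        (fun a ha => g (k + a) (Finset.mem_image_of_mem _ ha)) := by
      ext x
      simp only [mem_pcell, Set.mem_preimage]
      constructor
      · intro h a ha
        have := h (k + a) (Finset.mem_image_of_mem _ ha)
        rwa [show (T^[k+a]) x = T^[a] (T^[k] x) from by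
          rw [Nat.add_comm k a]; exact Function.iterate_add_apply T a k x] at this
      · intro h b hb
        obtain ⟨a, ha, rfl⟩ := Finset.mem_image.1 hb
        have := h a ha
        rwa [show (T^[a]) (T^[k] x) = T^[k+a] x from by
          rw [Nat.add_comm k a]; exact (Function.iterate_add_apply T a k x).symm] at this
    rw [hcell, Measure.map_apply (hT.iterate k)
      (pcell_measurable hT hPm hPd hPu hgmem)]


omit hPm hPd hPu in
/-- Concavity of entropy: the empirical measure has larger entropy than the average. -/
lemma sum_statEnt_le_emp (μ : Measure X) [IsProbabilityMeasure μ] (F : Finset ℕ)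
    (hFne : F.Nonempty) (Q : Finset (Set X)) :
    ∑ k ∈ F, statEnt (Measure.map (T^[k]) μ) Q
      ≤ (F.card : ℝ) * statEnt (empMeas T μ F) Q := by
  classical
  have hN : (0:ℝ) < (F.card : ℝ) := by exact_mod_cast Finset.card_pos.2 hFne
  have hfin : ∀ (k : ℕ) (s : Set X), (Measure.map (T^[k]) μ) s ≠ ⊤ := by
    intro k s
    haveI := Measure.isProbabilityMeasure_map (μ := μ) ((hT.iterate k).aemeasurable)
    exact measure_ne_top _ _
  unfold statEnt
  rw [Finset.sum_comm, Finset.mul_sum]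
  apply Finset.sum_le_sum
  intro s _
  have hemp : (empMeas T μ F s).toReal
      = ∑ k ∈ F, (F.card:ℝ)⁻¹ • (Measure.map (T^[k]) μ s).toReal := by
    unfold empMeas
    rw [Measure.smul_apply, Measure.finset_sum_apply, smul_eq_mul, ENNReal.toReal_mul,
      ENNReal.toReal_sum (fun k _ => hfin k s)]
    rw [Finset.mul_sum]
    apply Finset.sum_congr rfl
    intro k _
    rw [smul_eq_mul, ENNReal.toReal_inv]
    norm_num
  have hJ := Real.concaveOn_negMulLog.le_map_sum (t := F)
    (w := fun _ => (F.card:ℝ)⁻¹)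
    (p := fun k => (Measure.map (T^[k]) μ s).toReal)
    (fun _ _ => by positivity)
    (by rw [Finset.sum_const, nsmul_eq_mul]; field_simp)
    (fun k _ => ENNReal.toReal_nonneg)
  rw [← hemp] at hJ
  have hL : ∑ k ∈ F, (F.card:ℝ)⁻¹ • Real.negMulLog ((Measure.map (T^[k]) μ s).toReal)
      = (F.card:ℝ)⁻¹ * ∑ k ∈ F, Real.negMulLog ((Measure.map (T^[k]) μ s).toReal) := by
    simp only [smul_eq_mul, Finset.mul_sum]
  rw [hL] at hJ
  calc ∑ k ∈ F, Real.negMulLog ((Measure.map (T^[k]) μ s).toReal)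
      = (F.card:ℝ) * ((F.card:ℝ)⁻¹ * ∑ k ∈ F, Real.negMulLog ((Measure.map (T^[k]) μ s).toReal)) := by
        field_simp
    _ ≤ (F.card:ℝ) * Real.negMulLog (empMeas T μ F s).toReal := by
        apply mul_le_mul_of_nonneg_left hJ hN.le


omit hT hPm hPd hPu in
lemma Icc_eq_image (k m : ℕ) (hm : 1 ≤ m) :
    Finset.Icc k (k + (m-1)) = (Finset.range m).image (fun i => k + i) := by
  ext j
  simp only [Finset.mem_Icc, Finset.mem_image, Finset.mem_range]
  constructor
  · intro h
    exact ⟨j - k, by omega, by omega⟩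
  · rintro ⟨i, hi, rfl⟩
    omega

omit hT hPm hPd hPu in
/-- The covering lemma: every element of `F` is either within `m` of a left boundary point,
or inside a full block `[k, k+m)` starting at a point `k ∈ F` with `k ≡ j [MOD m]`. -/
lemma covering {F : Finset ℕ} (h0 : 0 ∉ F) {m j : ℕ} (hm : 1 ≤ m) (hj : j < m) :
    F ⊆ (F.filter (fun t => ((t-1) ∉ F) ∨ ((t+1) ∉ F))).biUnion
          (fun a => Finset.Icc a (a + (m-1)))
      ∪ (F.filter (fun k => k % m = j)).biUnion (fun k => Finset.Icc k (k + (m-1))) := by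
  intro i hi
  classical
  have hQex : ∃ b, Finset.Icc b i ⊆ F := ⟨i, by
    intro t ht
    have : t = i := by simp [Finset.mem_Icc] at ht; omega
    rwa [this]⟩
  set a := Nat.find hQex with ha
  have hQa : Finset.Icc a i ⊆ F := Nat.find_spec hQex
  have ha_le : a ≤ i := Nat.find_le (by
    intro t ht
    have : t = i := by simp [Finset.mem_Icc] at ht; omega
    rwa [this])
  have haF : a ∈ F := hQa (by simp [Finset.mem_Icc, ha_le])
  have ha_pos : 1 ≤ a := by
    by_contra hc
    push_neg at hc
    interval_cases a
    exact h0 haF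
  have ha1 : (a - 1) ∉ F := by
    have hmin := Nat.find_min hQex (m := a - 1) (by omega)
    intro hcon
    apply hmin
    intro t ht
    simp only [Finset.mem_Icc] at ht
    by_cases h : t = a - 1
    · rwa [h]
    · exact hQa (by simp [Finset.mem_Icc]; omega)
  have habd : a ∈ F.filter (fun t => ((t-1) ∉ F) ∨ ((t+1) ∉ F)) :=
    Finset.mem_filter.2 ⟨haF, Or.inl ha1⟩
  by_cases hcase : i < a + m
  · refine Finset.mem_union_left _ (Finset.mem_biUnion.2 ⟨a, habd, ?_⟩)
    simp only [Finset.mem_Icc]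
    omega
  · -- full block case
    push_neg at hcase
    set r := (i - j) % m with hr
    have hrm : r < m := Nat.mod_lt _ (by omega)
    set k := i - r with hk
    have hij : j ≤ i := by omega
    have hk_eq : k = j + m * ((i - j) / m) := by
      have := Nat.div_add_mod (i - j) m
      omega
    have hkm : k % m = j := by
      rw [hk_eq, Nat.add_mul_mod_self_left, Nat.mod_eq_of_lt hj]
    have hkF : k ∈ F := hQa (by simp only [Finset.mem_Icc]; omega)
    refine Finset.mem_union_right _ (Finset.mem_biUnion.2
      ⟨k, Finset.mem_filter.2 ⟨hkF, hkm⟩, ?_⟩)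
    simp only [Finset.mem_Icc]
    omega

end Stmt5Aux

open Stmt5Aux in
/-- Misiurewicz-type estimate: for every finite Borel partition `P` and `m ≥ 1`,
`(1/m) H_{μₙ^{Fₙ}}(P^m) ≥ (1/#Fₙ) H_{μₙ}(P^{Fₙ}) − 3m (#∂Fₙ/#Fₙ) log #P`. -/
theorem stmt5 {X : Type*} [TopologicalSpace X] [CompactSpace X]
    [TopologicalSpace.MetrizableSpace X] [MeasurableSpace X] [BorelSpace X]
    (T : X → X) (hT : Continuous T)
    (𝔫 : ℕ → ℕ) (h𝔫 : StrictMono 𝔫)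
    (F : ℕ → Finset ℕ) (hFsub : ∀ k, F k ⊆ Finset.Icc 1 (𝔫 k)) (hFne : ∀ k, (F k).Nonempty)
    (μs : ℕ → Measure X) (hμs : ∀ k, IsProbabilityMeasure (μs k))
    (P : Finset (Set X)) (hP : IsFinPartition P)
    (m : ℕ) (hm : 1 ≤ m) :
    ∀ k : ℕ,
      statEnt (μs k) (iterP T P (F k)) / ((F k).card : ℝ)
        - 3 * (m : ℝ) * (((natBd ((F k) : Set ℕ)).ncard : ℝ) / ((F k).card : ℝ))
            * Real.log (P.card : ℝ)
      ≤ statEnt (empMeas T (μs k) (F k)) (iterP T P (Finset.range m)) / (m : ℝ) := by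
  intro n
  classical
  haveI := hμs n
  obtain ⟨hPm, hPd, hPu⟩ := hP
  have hTm : Measurable T := hT.measurable
  set μ := μs n with hμ
  set Fn := F n with hFn
  have h0F : 0 ∉ Fn := fun h => by simpa using (hFsub n h)
  -- nonemptiness of X and P
  have hXne : Nonempty X := by
    by_contra h
    rw [not_nonempty_iff] at h
    have h1 : μ Set.univ = 1 := measure_univ
    rw [Set.univ_eq_empty_iff.2 h] at h1
    simp at h1
  have hPne : P.Nonempty := by
    obtain ⟨x⟩ := hXne
    have hx : x ∈ ⋃₀ (P : Set (Set X)) := by rw [hPu]; trivial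
    obtain ⟨s, hs, -⟩ := hx
    exact ⟨s, hs⟩
  have hlog : 0 ≤ Real.log (P.card : ℝ) :=
    Real.log_nonneg (by exact_mod_cast Nat.one_le_iff_ne_zero.2 hPne.card_pos.ne')
  set bdF := Fn.filter (fun t => ((t-1) ∉ Fn) ∨ ((t+1) ∉ Fn)) with hbdF
  set D := bdF.biUnion (fun a => Finset.Icc a (a + (m-1))) with hD
  have hDcard : (D.card : ℝ) ≤ (m : ℝ) * (bdF.card : ℝ) := by
    have h1 : D.card ≤ ∑ a ∈ bdF, (Finset.Icc a (a + (m-1))).card := Finset.card_biUnion_le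
    have h2 : ∀ a ∈ bdF, (Finset.Icc a (a + (m-1))).card = m := by
      intro a _
      rw [Nat.card_Icc]
      omega
    rw [Finset.sum_congr rfl h2, Finset.sum_const, smul_eq_mul] at h1
    have := (Nat.cast_le (α := ℝ)).2 h1
    push_cast at this ⊢
    linarith
  -- per-residue-class bound
  have hj_bound : ∀ j ∈ Finset.range m, HF T P μ Fn ≤
      (m:ℝ) * (bdF.card:ℝ) * Real.log (P.card:ℝ)
        + ∑ k ∈ Fn.filter (fun k => k % m = j), HF T P μ (Finset.Icc k (k + (m-1))) := by
    intro j hj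
    set U := (Fn.filter (fun k => k % m = j)).biUnion (fun k => Finset.Icc k (k + (m-1))) with hU
    have hcov : Fn ⊆ D ∪ U := covering h0F hm (Finset.mem_range.1 hj)
    have h1 : HF T P μ Fn ≤ HF T P μ (D ∪ U) := by
      have h' := HF_le_union hTm hPm hPd hPu μ Fn (D ∪ U)
      rwa [Finset.union_eq_right.mpr hcov] at h'
    have h2 : HF T P μ (D ∪ U) ≤ HF T P μ D + HF T P μ U :=
      HF_union_le hTm hPm hPd hPu μ D U
    have h3 : HF T P μ U ≤ ∑ k ∈ Fn.filter (fun k => k % m = j),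
        HF T P μ (Finset.Icc k (k + (m-1))) :=
      HF_biUnion_le hTm hPm hPd hPu μ _ _
    have h4 : HF T P μ D ≤ (m:ℝ) * (bdF.card:ℝ) * Real.log (P.card:ℝ) := by
      calc HF T P μ D ≤ (D.card : ℝ) * Real.log (P.card : ℝ) :=
            HF_le_card hTm hPm hPd hPu μ D
        _ ≤ (m:ℝ) * (bdF.card:ℝ) * Real.log (P.card:ℝ) :=
            mul_le_mul_of_nonneg_right hDcard hlog
    linarith
  -- sum over residues
  have hfib : ∑ j ∈ Finset.range m, ∑ k ∈ Fn.filter (fun k => k % m = j),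
        HF T P μ (Finset.Icc k (k + (m-1)))
      = ∑ k ∈ Fn, HF T P μ (Finset.Icc k (k + (m-1))) :=
    Finset.sum_fiberwise_of_maps_to
      (fun k _ => Finset.mem_range.2 (Nat.mod_lt _ (by omega))) _
  have hsumj : (m:ℝ) * HF T P μ Fn ≤
      (m:ℝ) * ((m:ℝ) * (bdF.card:ℝ) * Real.log (P.card:ℝ))
        + ∑ k ∈ Fn, HF T P μ (Finset.Icc k (k + (m-1))) := by
    have h := Finset.sum_le_sum hj_bound
    rw [Finset.sum_add_distrib, Finset.sum_const, Finset.sum_const, Finset.card_range,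
      hfib, nsmul_eq_mul, nsmul_eq_mul] at h
    linarith
  -- shift
  have hshift : ∑ k ∈ Fn, HF T P μ (Finset.Icc k (k + (m-1)))
      = ∑ k ∈ Fn, statEnt (Measure.map (T^[k]) μ) (iterP T P (Finset.range m)) := by
    apply Finset.sum_congr rfl
    intro k _
    rw [Icc_eq_image k m hm, HF_shift hTm hPm hPd hPu μ k (Finset.range m),
      statEnt_iterP hTm hPm hPd hPu _ _]
  -- concavity
  have hconc : ∑ k ∈ Fn, statEnt (Measure.map (T^[k]) μ) (iterP T P (Finset.range m))
      ≤ (Fn.card : ℝ) * statEnt (empMeas T μ Fn) (iterP T P (Finset.range m)) :=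
    sum_statEnt_le_emp hTm μ Fn (hFne n) _
  have hkey : (m:ℝ) * statEnt μ (iterP T P Fn)
      ≤ (Fn.card:ℝ) * statEnt (empMeas T μ Fn) (iterP T P (Finset.range m))
        + (m:ℝ) * (m:ℝ) * (bdF.card:ℝ) * Real.log (P.card:ℝ) := by
    rw [statEnt_iterP hTm hPm hPd hPu μ Fn]
    rw [hshift] at hsumj
    linarith
  -- boundary identification
  have hbd_eq : ((natBd (Fn : Set ℕ)).ncard : ℝ) = (bdF.card : ℝ) := by
    have : natBd (Fn : Set ℕ) = (bdF : Set ℕ) := by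
      ext t
      simp [natBd, hbdF, Finset.coe_filter]
    rw [this, Set.ncard_coe_finset]
  -- final arithmetic
  have hNf : (0:ℝ) < (Fn.card : ℝ) := by exact_mod_cast Finset.card_pos.2 (hFne n)
  have hM : (0:ℝ) < (m:ℝ) := by exact_mod_cast hm
  have hc : (0:ℝ) ≤ (bdF.card : ℝ) := by positivity
  rw [hbd_eq]
  have hre : statEnt μ (iterP T P Fn) / (Fn.card:ℝ)
        - 3 * (m:ℝ) * ((bdF.card:ℝ) / (Fn.card:ℝ)) * Real.log (P.card:ℝ)
      = (statEnt μ (iterP T P Fn) - 3 * (m:ℝ) * (bdF.card:ℝ) * Real.log (P.card:ℝ))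
          / (Fn.card:ℝ) := by
    ring
  rw [hre, div_le_div_iff₀ hNf hM]
  nlinarith [hkey, mul_nonneg (mul_nonneg (mul_nonneg hM.le hM.le) hc) hlog]
end

section
/- Fix an integer r ≥ 2 and let γ : [−1,1] → ℝ² be a C^r bounded curve with ‖dγ‖_∞ > 0. Let t* ∈ [−1,1] satisfy ‖dγ(t*)‖ = ‖dγ‖_∞. Then for every s ∈ [−1,1] the vectors dγ(t*) and dγ(s) are nonzero and the angle between dγ(t*) and dγ(s) is at most π/6. -/
/-- `‖d^sγ‖_∞`: sup over `[-1,1]` of the norm of the `s`-th derivative of `γ` on `[-1,1]`. -/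
noncomputable def dnorm (γ : ℝ → EuclideanSpace ℝ (Fin 2)) (s : ℕ) : ℝ :=
  ⨆ t : Set.Icc (-1 : ℝ) 1, ‖iteratedDerivWithin s γ (Set.Icc (-1 : ℝ) 1) t‖

/-- A `C^r` curve `γ : [-1,1] → ℝ²` is bounded if `max_{2 ≤ s ≤ r} ‖d^sγ‖_∞ ≤ (1/6)‖dγ‖_∞`. -/
def IsBddCurve (r : ℕ) (γ : ℝ → EuclideanSpace ℝ (Fin 2)) : Prop :=
  ∀ s : ℕ, 2 ≤ s → s ≤ r → dnorm γ s ≤ (1 / 6) * dnorm γ 1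

/-- The projective component of a bounded curve oscillates slowly: if
`‖dγ(t*)‖ = ‖dγ‖_∞ > 0` then for every `s ∈ [-1,1]` the derivatives `dγ(t*)` and `dγ(s)`
are nonzero and the angle between them is at most `π/6`. -/
theorem stmt9 (r : ℕ) (hr : 2 ≤ r) (γ : ℝ → EuclideanSpace ℝ (Fin 2))
    (hsm : ContDiffOn ℝ r γ (Set.Icc (-1 : ℝ) 1)) (hbdd : IsBddCurve r γ)
    (hpos : 0 < dnorm γ 1)
    (tstar : ℝ) (htstar : tstar ∈ Set.Icc (-1 : ℝ) 1)
    (hmax : ‖iteratedDerivWithin 1 γ (Set.Icc (-1 : ℝ) 1) tstar‖ = dnorm γ 1) :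
    ∀ s ∈ Set.Icc (-1 : ℝ) 1,
      iteratedDerivWithin 1 γ (Set.Icc (-1 : ℝ) 1) tstar ≠ 0 ∧
      iteratedDerivWithin 1 γ (Set.Icc (-1 : ℝ) 1) s ≠ 0 ∧
      InnerProductGeometry.angle (iteratedDerivWithin 1 γ (Set.Icc (-1 : ℝ) 1) tstar)
        (iteratedDerivWithin 1 γ (Set.Icc (-1 : ℝ) 1) s) ≤ Real.pi / 6 := by
  intro s hs
  set I : Set ℝ := Set.Icc (-1 : ℝ) 1 with hI
  have hU : UniqueDiffOn ℝ I := uniqueDiffOn_Icc (by norm_num)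
  set M : ℝ := dnorm γ 1 with hM
  set u := iteratedDerivWithin 1 γ I tstar with hu
  set v := iteratedDerivWithin 1 γ I s with hv
  -- bound on second derivative pointwise
  have hb2 : dnorm γ 2 ≤ (1/6) * M := hbdd 2 le_rfl hr
  -- continuity of 2nd derivative on compact set gives BddAbove
  have hcont2 : ContinuousOn (iteratedDerivWithin 2 γ I) I :=
    hsm.continuousOn_iteratedDerivWithin (by exact_mod_cast hr) hU
  have hBdd2 : BddAbove (Set.range fun t : I => ‖iteratedDerivWithin 2 γ I t‖) := by
    obtain ⟨C, hC⟩ := (isCompact_Icc.image_of_continuousOn hcont2.norm).bddAbove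
    exact ⟨C, by rintro x ⟨t, rfl⟩; exact hC ⟨t, t.2, rfl⟩⟩
  have hpt2 : ∀ x ∈ I, ‖iteratedDerivWithin 2 γ I x‖ ≤ (1/6) * M := by
    intro x hx
    exact le_trans (le_ciSup hBdd2 (⟨x, hx⟩ : I)) hb2
  -- mean value inequality for first derivative
  have hdiff : DifferentiableOn ℝ (iteratedDerivWithin 1 γ I) I :=
    hsm.differentiableOn_iteratedDerivWithin (by exact_mod_cast hr) hU
  have hmvt : ‖v - u‖ ≤ (1/6) * M * ‖s - tstar‖ := by
    apply Convex.norm_image_sub_le_of_norm_derivWithin_le hdiff _ (convex_Icc _ _) htstar hs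
    intro x hx
    have : derivWithin (iteratedDerivWithin 1 γ I) I x = iteratedDerivWithin 2 γ I x :=
      (congrFun iteratedDerivWithin_succ x).symm
    rw [this]
    exact hpt2 x hx
  have hst : ‖s - tstar‖ ≤ 2 := by
    rw [Real.norm_eq_abs]
    obtain ⟨h1, h2⟩ := hs; obtain ⟨h3, h4⟩ := htstar
    rw [abs_le]; constructor <;> linarith
  have hvu : ‖v - u‖ ≤ M / 3 := by
    calc ‖v - u‖ ≤ (1/6) * M * ‖s - tstar‖ := hmvt
      _ ≤ (1/6) * M * 2 := by
          apply mul_le_mul_of_nonneg_left hst; positivity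
      _ = M / 3 := by ring
  have hunorm : ‖u‖ = M := hmax
  have hvnorm : 2 / 3 * M ≤ ‖v‖ := by
    have := norm_sub_norm_le u v
    have h2 : ‖u - v‖ = ‖v - u‖ := norm_sub_rev u v
    linarith [h2 ▸ this]
  have hune : u ≠ 0 := by
    intro h; rw [h, norm_zero] at hunorm; linarith
  have hvne : v ≠ 0 := by
    intro h; rw [h, norm_zero] at hvnorm; linarith
  refine ⟨hune, hvne, ?_⟩
  -- inner product lower bound
  have hinner : Real.sqrt 3 / 2 * (‖u‖ * ‖v‖) ≤ (inner ℝ u v : ℝ) := by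
    have hpoly : ‖u - v‖ ^ 2 = ‖u‖ ^ 2 - 2 * (inner ℝ u v : ℝ) + ‖v‖ ^ 2 := norm_sub_sq_real u v
    have hc : ‖u - v‖ ≤ M / 3 := by rw [norm_sub_rev]; exact hvu
    have hc0 : (0:ℝ) ≤ ‖u - v‖ := norm_nonneg _
    have hv0 : (0:ℝ) ≤ ‖v‖ := norm_nonneg _
    have hs3 : Real.sqrt 3 ^ 2 = 3 := Real.sq_sqrt (by norm_num)
    have hs3n : (0:ℝ) ≤ Real.sqrt 3 := Real.sqrt_nonneg 3
    rw [hunorm]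
    nlinarith [sq_nonneg (‖v‖ - Real.sqrt 3 / 2 * M), sq_nonneg (‖u - v‖),
      mul_le_mul hc hc hc0 (by linarith : (0:ℝ) ≤ M / 3)]
  have hcos : Real.sqrt 3 / 2 ≤ Real.cos (InnerProductGeometry.angle u v) := by
    rw [InnerProductGeometry.cos_angle]
    rw [le_div_iff₀ (mul_pos (norm_pos_iff.mpr hune) (norm_pos_iff.mpr hvne))]
    exact hinner
  by_contra hcon
  push_neg at hcon
  have h1 : Real.pi / 6 ∈ Set.Icc 0 Real.pi :=
    ⟨by positivity, by linarith [Real.pi_pos]⟩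
  have h2 : InnerProductGeometry.angle u v ∈ Set.Icc 0 Real.pi :=
    ⟨InnerProductGeometry.angle_nonneg u v, InnerProductGeometry.angle_le_pi u v⟩
  have := Real.strictAntiOn_cos h1 h2 hcon
  rw [Real.cos_pi_div_six] at this
  linarith
end

section
/- Fix an integer r ≥ 2 and ε > 0, and let γ : [−1,1] → ℝ² be a C^r bounded curve with ‖dγ‖_∞ ≥ ε. Then there exist finite disjoint index sets L̲ and L̄, and affine maps ι_j : [−1,1] → [−1,1] for j ∈ L := L̲ ∪ L̄, such that: (i) for each j ∈ L, γ∘ι_j is strongly ε-bounded and ‖d(γ∘ι_j)(0)‖ ≥ ε/6; (ii) [−1,1] is the union of ⋃_{j∈L̲} ι_j([−1,1]) and ⋃_{j∈L̄} ι_j([−1/3,1/3]); (iii) #L̲ ≤ 2 and #L̄ ≤ 6(‖dγ‖_∞/ε + 1); (iv) for every x in the image of γ, #{j ∈ L : image(γ∘ι_j) ∩ B(x,ε) ≠ ∅} ≤ 100, where B(x,ε) is the open ball of radius ε around x. -/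
/-- A curve is strongly `ε`-bounded if it is bounded and `‖dγ‖_∞ ≤ ε`. -/
def IsStrongBddCurve (r : ℕ) (ε : ℝ) (γ : ℝ → EuclideanSpace ℝ (Fin 2)) : Prop :=
  IsBddCurve r γ ∧ dnorm γ 1 ≤ ε

open Set

local notation "II" => Set.Icc (-1 : ℝ) 1

lemma myUD : UniqueDiffOn ℝ (Set.Icc (-1 : ℝ) 1) := uniqueDiffOn_Icc (by norm_num)

instance : Nonempty ↥(Set.Icc (-1 : ℝ) 1) := ⟨⟨0, by norm_num⟩⟩

lemma dnorm_le_of {γ : ℝ → EuclideanSpace ℝ (Fin 2)} {s : ℕ} {C : ℝ}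
    (h : ∀ t ∈ II, ‖iteratedDerivWithin s γ II t‖ ≤ C) : dnorm γ s ≤ C :=
  ciSup_le fun t => h t t.2

lemma le_dnorm_of {γ : ℝ → EuclideanSpace ℝ (Fin 2)} {s : ℕ} {C : ℝ}
    (h : ∀ t ∈ II, ‖iteratedDerivWithin s γ II t‖ ≤ C) {t : ℝ} (ht : t ∈ II) :
    ‖iteratedDerivWithin s γ II t‖ ≤ dnorm γ s := by
  have := le_ciSup (f := fun t : ↥II => ‖iteratedDerivWithin s γ II t‖) ⟨C, ?_⟩ (⟨t, ht⟩ : ↥II)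
  · exact this
  · rintro y ⟨u, rfl⟩; exact h u u.2

lemma dnorm_bdd {γ : ℝ → EuclideanSpace ℝ (Fin 2)} {r s : ℕ}
    (hsm : ContDiffOn ℝ r γ II) (hs : s ≤ r) :
    ∃ C : ℝ, ∀ t ∈ II, ‖iteratedDerivWithin s γ II t‖ ≤ C := by
  have hcont : ContinuousOn (iteratedDerivWithin s γ II) II :=
    hsm.continuousOn_iteratedDerivWithin (by exact_mod_cast hs) myUD
  exact isCompact_Icc.exists_bound_of_continuousOn hcont

lemma le_dnorm {γ : ℝ → EuclideanSpace ℝ (Fin 2)} {r s : ℕ}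
    (hsm : ContDiffOn ℝ r γ II) (hs : s ≤ r) {t : ℝ} (ht : t ∈ II) :
    ‖iteratedDerivWithin s γ II t‖ ≤ dnorm γ s := by
  obtain ⟨C, hC⟩ := dnorm_bdd hsm hs
  exact le_dnorm_of hC ht

/-- the derivative has norm in `[2M/3, M]` everywhere and is `M/6`-Lipschitz. -/
lemma deriv_facts {γ : ℝ → EuclideanSpace ℝ (Fin 2)} {r : ℕ} (hr : 2 ≤ r)
    (hsm : ContDiffOn ℝ r γ II) (hbdd : IsBddCurve r γ) :
    (∀ u ∈ II, ∀ v ∈ II,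
      ‖iteratedDerivWithin 1 γ II u - iteratedDerivWithin 1 γ II v‖ ≤ dnorm γ 1 / 6 * ‖u - v‖) ∧
    (∀ t ∈ II, 2 / 3 * dnorm γ 1 ≤ ‖iteratedDerivWithin 1 γ II t‖) := by
  set g := iteratedDerivWithin 1 γ II with hg
  have hdiffg : DifferentiableOn ℝ g II := by
    refine hsm.differentiableOn_iteratedDerivWithin ?_ myUD
    exact_mod_cast Nat.lt_of_lt_of_le one_lt_two hr
  have hder2 : ∀ u ∈ II, ‖derivWithin g II u‖ ≤ dnorm γ 1 / 6 := by
    intro u hu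
    have h2 : derivWithin g II u = iteratedDerivWithin 2 γ II u :=
      (congrFun iteratedDerivWithin_succ u).symm
    rw [h2]
    calc ‖iteratedDerivWithin 2 γ II u‖ ≤ dnorm γ 2 := le_dnorm hsm hr hu
      _ ≤ 1 / 6 * dnorm γ 1 := hbdd 2 le_rfl hr
      _ = dnorm γ 1 / 6 := by ring
  have hlip : ∀ u ∈ II, ∀ v ∈ II, ‖g u - g v‖ ≤ dnorm γ 1 / 6 * ‖u - v‖ := fun u hu v hv =>
    (convex_Icc _ _).norm_image_sub_le_of_norm_derivWithin_le hdiffg hder2 hv hu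
  refine ⟨hlip, ?_⟩
  -- sup is attained
  have hcont : ContinuousOn (fun t => ‖g t‖) II :=
    (hsm.continuousOn_iteratedDerivWithin (by exact_mod_cast Nat.one_le_of_lt hr) myUD).norm
  obtain ⟨t₀, ht₀, hmax⟩ := isCompact_Icc.exists_isMaxOn (nonempty_Icc.2 (by norm_num)) hcont
  have hM : dnorm γ 1 ≤ ‖g t₀‖ := ciSup_le fun t => hmax t.2
  have hM0 : 0 ≤ dnorm γ 1 :=
    le_trans (norm_nonneg _) (le_dnorm hsm (Nat.one_le_of_lt hr) (by norm_num : (0:ℝ) ∈ II))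
  intro t ht
  have h1 : ‖g t₀ - g t‖ ≤ dnorm γ 1 / 6 * ‖t₀ - t‖ := hlip t₀ ht₀ t ht
  have h2 : ‖t₀ - t‖ ≤ 2 := by
    rw [Real.norm_eq_abs]
    rw [abs_le]
    constructor <;> [linarith [ht₀.1, ht.2]; linarith [ht₀.2, ht.1]]
  have h4 : dnorm γ 1 / 6 * ‖t₀ - t‖ ≤ dnorm γ 1 / 6 * 2 :=
    mul_le_mul_of_nonneg_left h2 (by linarith)
  have h5 := norm_sub_norm_le (g t₀) (g t)
  linarith

/-- The curve is bilipschitz-below with constant `M/3`. -/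
lemma bilip {γ : ℝ → EuclideanSpace ℝ (Fin 2)} {r : ℕ} (hr : 2 ≤ r)
    (hsm : ContDiffOn ℝ r γ II) (hbdd : IsBddCurve r γ) :
    ∀ u ∈ II, ∀ v ∈ II, dnorm γ 1 / 3 * |u - v| ≤ ‖γ u - γ v‖ := by
  obtain ⟨hlip, hlb⟩ := deriv_facts hr hsm hbdd
  set g := iteratedDerivWithin 1 γ II with hgdef
  set M := dnorm γ 1 with hMdef
  have hM0 : 0 ≤ M :=
    le_trans (norm_nonneg _) (le_dnorm hsm (Nat.one_le_of_lt hr) (by norm_num : (0:ℝ) ∈ II))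
  intro u hu v hv
  have hγd : ∀ w ∈ II, HasDerivWithinAt γ (g w) II w := by
    intro w hw
    have h1 : DifferentiableWithinAt ℝ γ II w :=
      (hsm.differentiableOn (by exact_mod_cast (show r ≠ 0 by omega))) w hw
    have h2 := h1.hasDerivWithinAt
    rwa [hgdef, iteratedDerivWithin_one]
  set f := fun w : ℝ => γ w - w • g v with hfdef
  have hfd : ∀ w ∈ II, HasDerivWithinAt f (g w - g v) II w := by
    intro w hw
    have h2 : HasDerivWithinAt (fun w : ℝ => w • g v) ((1:ℝ) • g v) II w :=
      (hasDerivWithinAt_id w II).smul_const (g v)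
    have := (hγd w hw).sub h2; rw [one_smul] at this; exact this
  have hbound : ∀ w ∈ II, ‖g w - g v‖ ≤ M / 3 := by
    intro w hw
    have h1 := hlip w hw v hv
    have h2 : ‖w - v‖ ≤ 2 := by
      rw [Real.norm_eq_abs, abs_le]
      constructor <;> [linarith [hw.1, hv.2]; linarith [hw.2, hv.1]]
    have h4 : M / 6 * ‖w - v‖ ≤ M / 6 * 2 := mul_le_mul_of_nonneg_left h2 (by linarith)
    linarith
  have hmvt := (convex_Icc (-1:ℝ) 1).norm_image_sub_le_of_norm_hasDerivWithin_le
    (f' := fun w => g w - g v) hfd hbound hv hu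
  have hfuv : f u - f v = γ u - γ v - (u - v) • g v := by
    simp only [hfdef, sub_smul]; abel
  have hns : ‖(u - v) • g v‖ = |u - v| * ‖g v‖ := by
    rw [norm_smul, Real.norm_eq_abs]
  have htri : ‖(u - v) • g v‖ ≤ ‖γ u - γ v‖ + ‖f u - f v‖ := by
    have : (u - v) • g v = (γ u - γ v) - (f u - f v) := by rw [hfuv]; abel
    rw [this]; exact norm_sub_le _ _
  have h6 : |u - v| * (2 / 3 * M) ≤ |u - v| * ‖g v‖ :=
    mul_le_mul_of_nonneg_left (hlb v hv) (abs_nonneg _)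
  have h7 : ‖f u - f v‖ ≤ M / 3 * ‖u - v‖ := hmvt
  rw [Real.norm_eq_abs] at h7
  nlinarith [abs_nonneg (u - v)]

lemma chainrule {E : Type*} [NormedAddCommGroup E] [NormedSpace ℝ E]
    (γ : ℝ → E) {R : WithTop ℕ∞} (hsm : ContDiffOn ℝ R γ II)
    (c d : ℝ) (hmap : Set.MapsTo (fun t => c * t + d) II II)
    (n : ℕ) (hn : (n : WithTop ℕ∞) ≤ R) :
    ∀ t ∈ II, iteratedDerivWithin n (fun t => γ (c * t + d)) II t
      = c ^ n • iteratedDerivWithin n γ II (c * t + d) := by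
  induction n with
  | zero => intro t ht; simp
  | succ n ih =>
    have hn' : (n : WithTop ℕ∞) ≤ R := le_trans (by exact_mod_cast Nat.cast_le.2 n.le_succ) hn
    intro t ht
    have h1 : iteratedDerivWithin (n+1) (fun t => γ (c * t + d)) II t
        = derivWithin (iteratedDerivWithin n (fun t => γ (c * t + d)) II) II t :=
      congrFun iteratedDerivWithin_succ t
    rw [h1]
    have heq : Set.EqOn (iteratedDerivWithin n (fun t => γ (c * t + d)) II)
        (fun u => c ^ n • iteratedDerivWithin n γ II (c * u + d)) II := fun u hu => ih hn' u hu
    rw [derivWithin_congr heq (ih hn' t ht)]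
    have hdiff : DifferentiableWithinAt ℝ (iteratedDerivWithin n γ II) II (c * t + d) := by
      refine (hsm.differentiableOn_iteratedDerivWithin ?_ myUD) _ (hmap ht)
      exact lt_of_lt_of_le (by exact_mod_cast Nat.lt_succ_self n) hn
    have hι : HasDerivWithinAt (fun u : ℝ => c * u + d) c II t := by
      simpa using ((hasDerivWithinAt_id t II).const_mul c).add_const d
    have hc : HasDerivWithinAt (fun u => iteratedDerivWithin n γ II (c * u + d))
        (c • derivWithin (iteratedDerivWithin n γ II) II (c * t + d)) II t :=
      hdiff.hasDerivWithinAt.scomp_of_eq t hι hmap rfl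
    have this : derivWithin (fun u => c ^ n • iteratedDerivWithin n γ II (c * u + d)) II t = c ^ n • c • derivWithin (iteratedDerivWithin n γ II) II (c * t + d) := (hc.const_smul (c ^ n)).derivWithin (myUD t ht)
    rw [this]
    rw [smul_smul, ← pow_succ c n]
    rw [iteratedDerivWithin_succ]

lemma curve_props {γ : ℝ → EuclideanSpace ℝ (Fin 2)} {r : ℕ} (hr : 2 ≤ r)
    (hsm : ContDiffOn ℝ r γ II) (hbdd : IsBddCurve r γ) {ε c δ : ℝ} (hε : 0 < ε)
    (hc0 : 0 < c) (hc14 : c ≤ 1/4)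
    (hcM2 : c * dnorm γ 1 ≤ ε/2) (hcM4 : ε/4 ≤ c * dnorm γ 1)
    (hδ : δ ∈ Set.Icc (-1+c) (1-c)) :
    Set.MapsTo (fun t => c*t+δ) II II ∧
    IsStrongBddCurve r ε (fun t => γ (c*t+δ)) ∧
    ε/6 ≤ ‖iteratedDerivWithin 1 (fun t => γ (c*t+δ)) II 0‖ := by
  set M := dnorm γ 1 with hMdef
  have hM0 : 0 ≤ M :=
    le_trans (norm_nonneg _) (le_dnorm hsm (Nat.one_le_of_lt hr) (by norm_num : (0:ℝ) ∈ II))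
  obtain ⟨hlip, hlb⟩ := deriv_facts hr hsm hbdd
  have hmap : Set.MapsTo (fun t => c*t+δ) II II := by
    intro t ht
    simp only [Set.mem_Icc] at *
    constructor <;> nlinarith [hδ.1, hδ.2, ht.1, ht.2]
  have hδI : δ ∈ II := by
    simp only [Set.mem_Icc] at *
    constructor <;> [linarith [hδ.1]; linarith [hδ.2]]
  refine ⟨hmap, ?_⟩
  set Γ := fun t => γ (c*t+δ) with hΓdef
  have key : ∀ n : ℕ, n ≤ r → ∀ t ∈ II,
      iteratedDerivWithin n Γ II t = c ^ n • iteratedDerivWithin n γ II (c*t+δ) := by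
    intro n hn
    exact chainrule γ hsm c δ hmap n (by exact_mod_cast hn)
  have hptbd : ∀ n : ℕ, n ≤ r → ∀ t ∈ II,
      ‖iteratedDerivWithin n Γ II t‖ ≤ c ^ n * dnorm γ n := by
    intro n hn t ht
    rw [key n hn t ht, norm_smul, Real.norm_eq_abs, abs_of_pos (pow_pos hc0 n)]
    exact mul_le_mul_of_nonneg_left (le_dnorm hsm hn (hmap ht)) (pow_nonneg hc0.le n)
  have hr1 : (1:ℕ) ≤ r := Nat.one_le_of_lt hr
  have hΓ1_le : dnorm Γ 1 ≤ c * M := by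
    refine dnorm_le_of fun t ht => ?_
    calc ‖iteratedDerivWithin 1 Γ II t‖ ≤ c ^ 1 * dnorm γ 1 := hptbd 1 hr1 t ht
      _ = c * M := by rw [pow_one]
  have hat0 : ‖iteratedDerivWithin 1 Γ II 0‖ = c * ‖iteratedDerivWithin 1 γ II δ‖ := by
    have h0 : (0:ℝ) ∈ II := by norm_num
    rw [key 1 hr1 0 h0]
    rw [norm_smul, Real.norm_eq_abs, pow_one, abs_of_pos hc0]
    norm_num
  have hat0_ge : ε/6 ≤ ‖iteratedDerivWithin 1 Γ II 0‖ := by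
    rw [hat0]
    have h1 := hlb δ hδI
    nlinarith
  have hΓ1_ge : ε/6 ≤ dnorm Γ 1 := by
    refine le_trans hat0_ge ?_
    refine le_dnorm_of (C := c * M) ?_ (by norm_num : (0:ℝ) ∈ II)
    intro t ht
    calc ‖iteratedDerivWithin 1 Γ II t‖ ≤ c ^ 1 * dnorm γ 1 := hptbd 1 hr1 t ht
      _ = c * M := by rw [pow_one]
  refine ⟨⟨?_, by linarith⟩, hat0_ge⟩
  -- IsBddCurve Γ
  intro s hs2 hsr
  have h1 : dnorm Γ s ≤ c ^ s * dnorm γ s := dnorm_le_of (hptbd s hsr)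
  have h2 : dnorm γ s ≤ 1/6 * M := hbdd s hs2 hsr
  have h3 : c ^ s ≤ c ^ 2 := pow_le_pow_of_le_one hc0.le (by linarith) hs2
  have h4 : (0:ℝ) < c ^ s := pow_pos hc0 s
  have h5 : 2/3 * (c * M) ≤ dnorm Γ 1 := by
    refine le_trans ?_ (le_dnorm_of (C := c * M) ?_ (by norm_num : (0:ℝ) ∈ II))
    · rw [hat0]
      have h1 := hlb δ hδI
      nlinarith
    · intro t ht
      calc ‖iteratedDerivWithin 1 Γ II t‖ ≤ c ^ 1 * dnorm γ 1 := hptbd 1 hr1 t ht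
        _ = c * M := by rw [pow_one]
  have h6 : c ^ s * dnorm γ s ≤ c ^ s * (1/6 * M) :=
    mul_le_mul_of_nonneg_left h2 h4.le
  have h7 : c ^ s * (1/6 * M) ≤ c ^ 2 * (1/6 * M) :=
    mul_le_mul_of_nonneg_right h3 (by linarith)
  have h8 : c ^ 2 * (1/6 * M) ≤ (1/6) * (2/3 * (c * M)) := by nlinarith
  calc dnorm Γ s ≤ c ^ s * dnorm γ s := h1
    _ ≤ (1/6) * (2/3 * (c * M)) := by linarith
    _ ≤ (1/6) * dnorm Γ 1 := by linarith


set_option maxHeartbeats 1000000 in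
open Classical in
/-- Reparametrization of a bounded curve with `‖dγ‖_∞ ≥ ε` by affine maps
`ι_j(t) = c_j t + d_j` of `[-1,1]`: the reparametrized curves are strongly `ε`-bounded with
derivative at `0` of norm at least `ε/6`, they cover `[-1,1]`, their number is controlled,
and every `ε`-ball meets at most `100` of their images. -/
theorem stmt11 (r : ℕ) (hr : 2 ≤ r) (ε : ℝ) (hε : 0 < ε)
    (γ : ℝ → EuclideanSpace ℝ (Fin 2))
    (hsm : ContDiffOn ℝ r γ (Set.Icc (-1 : ℝ) 1)) (hbdd : IsBddCurve r γ)
    (hlow : ε ≤ dnorm γ 1) :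
    ∃ (L1 L2 : Finset ℕ) (c d : ℕ → ℝ),
      Disjoint L1 L2 ∧
      (∀ j ∈ L1 ∪ L2,
        Set.MapsTo (fun t => c j * t + d j) (Set.Icc (-1 : ℝ) 1) (Set.Icc (-1 : ℝ) 1)) ∧
      (∀ j ∈ L1 ∪ L2,
        IsStrongBddCurve r ε (fun t => γ (c j * t + d j)) ∧
        ε / 6 ≤ ‖iteratedDerivWithin 1 (fun t => γ (c j * t + d j))
          (Set.Icc (-1 : ℝ) 1) 0‖) ∧
      Set.Icc (-1 : ℝ) 1 ⊆
        (⋃ j ∈ L1, (fun t => c j * t + d j) '' Set.Icc (-1 : ℝ) 1) ∪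
        (⋃ j ∈ L2, (fun t => c j * t + d j) '' Set.Icc (-(1 / 3) : ℝ) (1 / 3)) ∧
      L1.card ≤ 2 ∧
      (L2.card : ℝ) ≤ 6 * (dnorm γ 1 / ε + 1) ∧
      ∀ x ∈ γ '' Set.Icc (-1 : ℝ) 1,
        (((L1 ∪ L2).filter (fun j =>
          (((fun t => γ (c j * t + d j)) '' Set.Icc (-1 : ℝ) 1)
            ∩ Metric.ball x ε).Nonempty)).card) ≤ 100 := by
  set M := dnorm γ 1 with hMdef
  have hM : 0 < M := lt_of_lt_of_le hε hlow
  set c := min (1/4 : ℝ) (ε/(2*M)) with hcdef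
  have hc0 : 0 < c := lt_min (by norm_num) (by positivity)
  have hc14 : c ≤ 1/4 := min_le_left _ _
  have hcM2 : c * M ≤ ε/2 := by
    have h1 : c ≤ ε/(2*M) := min_le_right _ _
    have h2 : c * M ≤ (ε/(2*M)) * M := mul_le_mul_of_nonneg_right h1 hM.le
    have h3 : (ε/(2*M)) * M = ε/2 := by field_simp
    linarith
  have hcM4 : ε/4 ≤ c * M := by
    rcases le_total (1/4 : ℝ) (ε/(2*M)) with h | h
    · have hc : c = 1/4 := min_eq_left h
      rw [hc]; linarith
    · have hc : c = ε/(2*M) := min_eq_right h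
      rw [hc]
      have h3 : (ε/(2*M)) * M = ε/2 := by field_simp
      linarith
  set K := ⌈(3:ℝ)/c⌉₊ with hKdef
  have h3c : (12:ℝ) ≤ 3/c := by
    rw [le_div_iff₀ hc0]; linarith
  have hKge : (3:ℝ)/c ≤ K := Nat.le_ceil _
  have hKle : (K:ℝ) ≤ 3/c + 1 := le_of_lt (Nat.ceil_lt_add_one (by positivity))
  have hK1 : (11:ℝ) ≤ (K:ℝ) - 1 := by linarith
  set sp := (2 - 4*c)/((K:ℝ) - 1) with hspdef
  have hsp0 : 0 < sp := div_pos (by linarith) (by linarith)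
  have hspK : sp * ((K:ℝ) - 1) = 2 - 4*c := by
    rw [hspdef]; field_simp
  have hsp_le : sp ≤ 2*c/3 := by
    rw [hspdef, div_le_iff₀ (by linarith)]
    have h2 : (2*c/3) * (3/c - 1) = 2 - 2*c/3 := by field_simp
    nlinarith
  have hsp_ge : c/3 ≤ sp := by
    rw [hspdef, le_div_iff₀ (by linarith)]
    have h2 : c/3 * (3/c) = 1 := by field_simp
    nlinarith
  set dd : ℕ → ℝ := fun j => if j = 0 then -1+c else if j = 1 then 1-c
    else -1+2*c + sp*((j:ℝ)-2) with hdd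
  set cf : ℕ → ℝ := fun _ => c with hcf
  set L1 : Finset ℕ := {0, 1} with hL1
  set L2 : Finset ℕ := Finset.Ico 2 (K+2) with hL2
  have hdisj : Disjoint L1 L2 := by
    rw [Finset.disjoint_left]
    intro j hj hj2
    rw [hL2, Finset.mem_Ico] at hj2
    rw [hL1] at hj
    fin_cases hj <;> omega
  have hddL2 : ∀ j ∈ L2, dd j = -1+2*c + sp*((j:ℝ)-2) := by
    intro j hj
    rw [hL2, Finset.mem_Ico] at hj
    rw [hdd]
    have h0 : j ≠ 0 := by omega
    have h1 : j ≠ 1 := by omega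
    simp [h0, h1]
  have hcen : ∀ j ∈ L1 ∪ L2, dd j ∈ Set.Icc (-1+c) (1-c) := by
    intro j hj
    rw [Finset.mem_union] at hj
    rcases hj with hj | hj
    · rw [hL1] at hj
      fin_cases hj <;> simp [hdd] <;> linarith
    · rw [hddL2 j hj]
      rw [hL2, Finset.mem_Ico] at hj
      have hj2 : (2:ℝ) ≤ (j:ℝ) := by exact_mod_cast hj.1
      have hjK : (j:ℝ) ≤ (K:ℝ) + 1 := by
        have : j ≤ K + 1 := by omega
        exact_mod_cast this
      have hnn : 0 ≤ sp*((j:ℝ)-2) := mul_nonneg hsp0.le (by linarith)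
      have hub : sp*((j:ℝ)-2) ≤ 2 - 4*c := by
        calc sp*((j:ℝ)-2) ≤ sp * ((K:ℝ) - 1) :=
          mul_le_mul_of_nonneg_left (by linarith) hsp0.le
          _ = 2 - 4*c := hspK
      constructor <;> [linarith; linarith]
  have hprops : ∀ j ∈ L1 ∪ L2,
      Set.MapsTo (fun t => c*t+ dd j) (Set.Icc (-1:ℝ) 1) (Set.Icc (-1:ℝ) 1) ∧
      IsStrongBddCurve r ε (fun t => γ (c*t+ dd j)) ∧
      ε/6 ≤ ‖iteratedDerivWithin 1 (fun t => γ (c*t+ dd j)) (Set.Icc (-1:ℝ) 1) 0‖ :=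
    fun j hj => curve_props hr hsm hbdd hε hc0 hc14 hcM2 hcM4 (hcen j hj)
  refine ⟨L1, L2, cf, dd, hdisj, fun j hj => (hprops j hj).1, fun j hj => (hprops j hj).2, ?_, ?_, ?_, ?_⟩
  · -- coverage
    intro x hx
    rw [Set.mem_Icc] at hx
    by_cases hxa : x ≤ -1 + 2*c
    · left
      simp only [Set.mem_iUnion]
      refine ⟨0, by simp [hL1], (x - dd 0)/c, ?_, ?_⟩
      · have hd0 : dd 0 = -1 + c := by simp [hdd]
        rw [Set.mem_Icc, hd0]
        constructor
        · rw [le_div_iff₀ hc0]; linarith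
        · rw [div_le_iff₀ hc0]; linarith
      · show cf 0 * ((x - dd 0)/c) + dd 0 = x
        simp only [hcf]; field_simp; ring
    by_cases hxb : 1 - 2*c ≤ x
    · left
      simp only [Set.mem_iUnion]
      refine ⟨1, by simp [hL1], (x - dd 1)/c, ?_, ?_⟩
      · have hd1 : dd 1 = 1 - c := by simp [hdd]
        rw [Set.mem_Icc, hd1]
        constructor
        · rw [le_div_iff₀ hc0]; linarith
        · rw [div_le_iff₀ hc0]; linarith
      · show cf 1 * ((x - dd 1)/c) + dd 1 = x
        simp only [hcf]; field_simp; ring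
    push_neg at hxa hxb
    set y := (x + 1 - 2*c)/sp with hydef
    have hy0 : 0 ≤ y := div_nonneg (by linarith) hsp0.le
    have hyub : y < (K:ℝ) - 1 := by
      rw [hydef, div_lt_iff₀ hsp0]
      have := hspK
      nlinarith
    set k := ⌊y + 1/2⌋₊ with hkdef
    have hkley : (k:ℝ) ≤ y + 1/2 := Nat.floor_le (by linarith)
    have hylt : y + 1/2 < (k:ℝ) + 1 := Nat.lt_floor_add_one _
    have hkK : k < K := by
      have h1 : (k:ℝ) < (K:ℝ) := by linarith
      exact_mod_cast h1
    have hjL2 : k + 2 ∈ L2 := by rw [hL2, Finset.mem_Ico]; omega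
    have hdj : dd (k+2) = -1 + 2*c + sp*(k:ℝ) := by
      rw [hddL2 _ hjL2]; push_cast; ring
    have hspy : sp * y = x + 1 - 2*c := by
      rw [hydef, mul_div_cancel₀ _ hsp0.ne']
    have hx_eq : x = -1 + 2*c + sp*y := by rw [hspy]; ring
    have p1 : sp * (-(1/2)) ≤ sp*(y - (k:ℝ)) :=
      mul_le_mul_of_nonneg_left (by linarith) hsp0.le
    have p2 : sp*(y - (k:ℝ)) ≤ sp*(1/2) :=
      mul_le_mul_of_nonneg_left (by linarith) hsp0.le
    right
    simp only [Set.mem_iUnion]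
    refine ⟨k+2, hjL2, (x - dd (k+2))/c, ?_, ?_⟩
    · rw [Set.mem_Icc, hdj]
      have hnum : x - (-1 + 2*c + sp*(k:ℝ)) = sp*(y - (k:ℝ)) := by rw [hx_eq]; ring
      rw [hnum]
      constructor
      · rw [le_div_iff₀ hc0]; nlinarith
      · rw [div_le_iff₀ hc0]; nlinarith
    · show cf (k+2) * ((x - dd (k+2))/c) + dd (k+2) = x
      simp only [hcf]; field_simp; ring
  · -- card L1
    rw [hL1]; decide
  · -- card L2
    have hcard : L2.card = K := by rw [hL2, Nat.card_Ico]; omega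
    rw [hcard]
    rcases le_total (1/4 : ℝ) (ε/(2*M)) with h | h
    · have hc : c = 1/4 := min_eq_left h
      have hK12' : K ≤ 12 := Nat.ceil_le.mpr (by rw [hc]; norm_num)
      have hεM : 1 ≤ M/ε := (one_le_div hε).mpr hlow
      have h12 : (K:ℝ) ≤ 12 := by exact_mod_cast hK12'
      linarith
    · have hc : c = ε/(2*M) := min_eq_right h
      have h6 : 3/c = 6*(M/ε) := by
        rw [hc]; field_simp; ring
      linarith
  · -- counting
    intro x hx
    have hgen : ∀ (P : ℕ → Prop) (_ : DecidablePred P),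
        (∀ j ∈ L2, P j → ∃ u ∈ Set.Icc (-1:ℝ) 1, |u - dd j| ≤ c ∧ dist (γ u) x < ε) →
        (L2.filter P).card ≤ 79 := by
      intro P instP hext
      by_cases hne : (L2.filter P).Nonempty
      · set j₀ := (L2.filter P).min' hne with hj₀def
        have hj₀mem := (L2.filter P).min'_mem hne
        have hsub : L2.filter P ⊆ Finset.Icc j₀ (j₀ + 78) := by
          intro j hjm
          rw [Finset.mem_Icc]
          refine ⟨Finset.min'_le _ _ hjm, ?_⟩
          obtain ⟨hjL, hjP⟩ := Finset.mem_filter.mp hjm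
          obtain ⟨hj0L, hj0P⟩ := Finset.mem_filter.mp hj₀mem
          obtain ⟨u, hu, hud, hub⟩ := hext j hjL hjP
          obtain ⟨v, hv, hvd, hvb⟩ := hext j₀ hj0L hj0P
          have hγd : ‖γ u - γ v‖ < 2*ε := by
            have h1 : dist (γ u) (γ v) ≤ dist (γ u) x + dist x (γ v) := dist_triangle _ _ _
            rw [dist_comm x (γ v)] at h1
            rw [← dist_eq_norm]
            linarith
          have hbil := bilip hr hsm hbdd u hu v hv
          have huv24 : |u - v| < 24*c := by nlinarith
          have hdd' : |dd j - dd j₀| < 26*c := by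
            have t1 : |dd j - dd j₀| ≤ |dd j - u| + |u - dd j₀| := abs_sub_le _ _ _
            have t2 : |u - dd j₀| ≤ |u - v| + |v - dd j₀| := abs_sub_le _ _ _
            have t3 : |dd j - u| = |u - dd j| := abs_sub_comm _ _
            linarith
          have heq : dd j - dd j₀ = sp*((j:ℝ) - (j₀:ℝ)) := by
            rw [hddL2 j hjL, hddL2 j₀ hj0L]; ring
          have habs : sp*|(j:ℝ) - (j₀:ℝ)| < 26*c := by
            rw [heq, abs_mul, abs_of_pos hsp0] at hdd'
            exact hdd'
          have hfin : |(j:ℝ) - (j₀:ℝ)| < 78 := by nlinarith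
          have hle : (j:ℝ) ≤ (j₀:ℝ) + 78 := by
            have := le_abs_self ((j:ℝ) - (j₀:ℝ))
            linarith
          exact_mod_cast hle
        calc (L2.filter P).card ≤ (Finset.Icc j₀ (j₀ + 78)).card := Finset.card_le_card hsub
          _ = 79 := by rw [Nat.card_Icc]; omega
      · rw [Finset.not_nonempty_iff_eq_empty] at hne
        rw [hne]; simp
    rw [Finset.filter_union]
    refine le_trans (Finset.card_union_le _ _) ?_
    have h1 : ∀ (Q : ℕ → Prop) (_ : DecidablePred Q), (L1.filter Q).card ≤ 2 := by
      intro Q _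
      refine le_trans (Finset.card_le_card (Finset.filter_subset _ _)) ?_
      rw [hL1]; decide
    refine le_trans (add_le_add (h1 _ _) (hgen _ _ ?_)) (by norm_num)
    · intro j hj hPj
      obtain ⟨z, ⟨t, ht, hzt⟩, hz⟩ := hPj
      refine ⟨c*t + dd j, (hprops j (Finset.mem_union_right _ hj)).1 ht, ?_, ?_⟩
      · have h3 : c*t + dd j - dd j = c*t := by ring
        rw [h3, abs_mul, abs_of_pos hc0]
        have h4 : |t| ≤ 1 := abs_le.mpr ⟨ht.1, ht.2⟩
        nlinarith
      · rw [Metric.mem_ball] at hz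
        have hzz : z = γ (c*t + dd j) := by rw [← hzt]
        rw [← hzz]
        exact hz
end

section
/- Let d ≥ 1 and let (A_n)_{n∈ℕ} be a sequence of d×d real matrices; set A^n = A_{n−1}⋯A_1A_0 for n ≥ 1. Then sup_{v∈ℝ^d∖{0}} limsup_n (1/n) log ‖A^n v‖ = limsup_n (1/n) log ‖A^n‖, where ‖A^n‖ denotes the operator norm, the limsups are taken in [−∞,+∞] with the convention log 0 = −∞; moreover the supremum is attained at some unit vector v. -/
open Filter

/-- Extended-real logarithm with the convention `log 0 = -∞`. -/
noncomputable def elog (x : ℝ) : EReal := if x = 0 then ⊥ else ((Real.log x : ℝ) : EReal)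

lemma elog_mono {x y : ℝ} (hx : 0 ≤ x) (h : x ≤ y) : elog x ≤ elog y := by
  unfold elog
  rcases eq_or_lt_of_le hx with h0 | h0
  · simp [← h0]
  · rw [if_neg h0.ne', if_neg (h0.trans_le h).ne']
    exact_mod_cast Real.log_le_log h0 h

lemma elog_le_coe_iff {x b : ℝ} (hx : 0 ≤ x) : elog x ≤ (b : EReal) ↔ x ≤ Real.exp b := by
  unfold elog
  rcases eq_or_lt_of_le hx with h0 | h0
  · simp [← h0, (Real.exp_pos b).le]
  · rw [if_neg h0.ne', EReal.coe_le_coe_iff, Real.log_le_iff_le_exp h0]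

lemma natCast_EReal_pos {n : ℕ} (hn : 1 ≤ n) : (0 : EReal) < (n : EReal) := by
  rw [← EReal.coe_coe_eq_natCast]
  exact_mod_cast Nat.cast_pos.2 hn

lemma limsupA (u w : ℕ → ℝ) (hu : ∀ n, 0 ≤ u n) (hw : ∀ n, 0 ≤ w n) (c : ℝ) (hc : 0 < c)
    (h : ∀ n, u n ≤ c * w n) :
    limsup (fun n : ℕ => elog (u n) / (n : EReal)) atTop
      ≤ limsup (fun n : ℕ => elog (w n) / (n : EReal)) atTop := by
  rw [← EReal.le_of_forall_lt_iff_le]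
  intro b hb
  obtain ⟨z, hz1, hz2⟩ := exists_between hb
  lift z to ℝ using ⟨hz2.ne_top, fun hbot => by simp [hbot] at hz1⟩ with z₀
  have hzb : z₀ < b := EReal.coe_lt_coe_iff.1 hz2
  -- choose N
  obtain ⟨N₀, hN₀⟩ := exists_nat_ge (Real.log c / (b - z₀))
  set N := max N₀ 1 with hN
  have hev := eventually_lt_of_limsup_lt hz1
  apply limsup_le_of_le (by isBoundedDefault)
  filter_upwards [hev, eventually_ge_atTop N] with n hn hnN
  have hn1 : 1 ≤ n := le_trans (le_max_right _ _) hnN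
  have hnp : (0 : EReal) < (n : EReal) := natCast_EReal_pos hn1
  have hnt : (n : EReal) ≠ ⊤ := EReal.natCast_ne_top n
  -- from hn : elog (w n) / n < z₀ deduce w n ≤ exp (z₀ * n)
  have h1 : elog (w n) ≤ ((z₀ * n : ℝ) : EReal) := by
    have := (not_le.2 hn)
    rw [EReal.le_div_iff_mul_le hnp hnt] at this
    have h2 : elog (w n) ≤ (z₀ : EReal) * (n : EReal) := (not_le.1 this).le
    rwa [← EReal.coe_coe_eq_natCast, ← EReal.coe_mul] at h2
  have hwn : w n ≤ Real.exp (z₀ * n) := (elog_le_coe_iff (hw n)).1 h1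
  have hun : u n ≤ Real.exp (b * n) := by
    calc u n ≤ c * w n := h n
    _ ≤ c * Real.exp (z₀ * n) := by nlinarith [Real.exp_pos (z₀ * n)]
    _ = Real.exp (Real.log c + z₀ * n) := by rw [Real.exp_add, Real.exp_log hc]
    _ ≤ Real.exp (b * n) := by
        apply Real.exp_le_exp.2
        have hN' : Real.log c ≤ n * (b - z₀) := by
          have h3 : (N₀ : ℝ) ≤ n := by exact_mod_cast le_trans (le_max_left _ _) hnN
          have h4 : Real.log c / (b - z₀) ≤ n := le_trans hN₀ h3
          rw [div_le_iff₀ (by linarith)] at h4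
          linarith
        nlinarith
  rw [EReal.div_le_iff_le_mul hnp hnt]
  calc elog (u n) ≤ ((b * n : ℝ) : EReal) := (elog_le_coe_iff (hu n)).2 hun
  _ = (n : EReal) * (b : EReal) := by
      rw [← EReal.coe_coe_eq_natCast, ← EReal.coe_mul, mul_comm]

lemma my_limsup_finset_sup' {ι : Type*} (s : Finset ι) (hs : s.Nonempty) (f : ι → ℕ → EReal) :
    limsup (fun n => s.sup' hs (fun i => f i n)) atTop
      = s.sup' hs (fun i => limsup (f i) atTop) := by
  apply le_antisymm
  · rw [← EReal.le_of_forall_lt_iff_le]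
    intro b hb
    have : ∀ i ∈ s, limsup (f i) atTop < (b : EReal) := by
      intro i hi
      exact lt_of_le_of_lt (Finset.le_sup' (fun j => limsup (f j) atTop) hi) hb
    have hev : ∀ᶠ n in atTop, ∀ i ∈ s, f i n ≤ (b : EReal) := by
      rw [eventually_all_finset]
      exact fun i hi => (eventually_lt_of_limsup_lt (this i hi)).mono fun n h => h.le
    apply limsup_le_of_le (by isBoundedDefault)
    filter_upwards [hev] with n hn
    exact Finset.sup'_le _ _ hn
  · apply Finset.sup'_le
    intro i hi
    exact limsup_le_limsup (Eventually.of_forall fun n => Finset.le_sup' (fun j => f j n) hi)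

lemma coord_abs_le_norm {d : ℕ} (v : EuclideanSpace ℝ (Fin d)) (i : Fin d) : |v i| ≤ ‖v‖ := by
  have h := abs_real_inner_le_norm (EuclideanSpace.single i (1:ℝ)) v
  rw [EuclideanSpace.inner_single_left, EuclideanSpace.norm_single] at h
  simpa using h

lemma euclidean_decomp {d : ℕ} (v : EuclideanSpace ℝ (Fin d)) :
    v = ∑ i, v i • EuclideanSpace.single i (1:ℝ) := by
  have h := (EuclideanSpace.basisFun (Fin d) ℝ).sum_repr v
  simp only [EuclideanSpace.basisFun_repr, EuclideanSpace.basisFun_apply] at h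
  exact h.symm

lemma opnorm_le_bound' {d : ℕ} (hne : (Finset.univ : Finset (Fin d)).Nonempty)
    (B : EuclideanSpace ℝ (Fin d) →L[ℝ] EuclideanSpace ℝ (Fin d)) :
    ‖B‖ ≤ d * Finset.univ.sup' hne (fun i => ‖B (EuclideanSpace.single i (1:ℝ))‖) := by
  set m := Finset.univ.sup' hne (fun i => ‖B (EuclideanSpace.single i (1:ℝ))‖) with hm
  obtain ⟨i₀, -⟩ := hne
  have hm0 : 0 ≤ m :=
    le_trans (norm_nonneg _) (Finset.le_sup' (fun i => ‖B (EuclideanSpace.single i (1:ℝ))‖)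
      (Finset.mem_univ i₀))
  apply ContinuousLinearMap.opNorm_le_bound _ (by positivity)
  intro v
  have hdecomp : B v = ∑ i, v i • B (EuclideanSpace.single i (1:ℝ)) := by
    conv_lhs => rw [euclidean_decomp v]
    rw [map_sum]
    simp only [map_smul]
  calc ‖B v‖ ≤ ∑ i, ‖v i • B (EuclideanSpace.single i (1:ℝ))‖ := by
        rw [hdecomp]; exact norm_sum_le _ _
  _ = ∑ i, |v i| * ‖B (EuclideanSpace.single i (1:ℝ))‖ := by
        simp [norm_smul]
  _ ≤ ∑ _i : Fin d, ‖v‖ * m := by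
        apply Finset.sum_le_sum
        intro i _
        exact mul_le_mul (coord_abs_le_norm v i)
          (Finset.le_sup' (fun j => ‖B (EuclideanSpace.single j (1:ℝ))‖) (Finset.mem_univ i))
          (norm_nonneg _) (norm_nonneg _)
  _ = ↑d * m * ‖v‖ := by
        rw [Finset.sum_const, Finset.card_univ, Fintype.card_fin, nsmul_eq_mul]; ring

/-- The product `A^n = A_{n-1} ⋯ A_1 A_0` of a sequence of linear maps of `ℝ^d`. -/
noncomputable def prodCLM {d : ℕ}
    (A : ℕ → (EuclideanSpace ℝ (Fin d) →L[ℝ] EuclideanSpace ℝ (Fin d))) :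
    ℕ → (EuclideanSpace ℝ (Fin d) →L[ℝ] EuclideanSpace ℝ (Fin d))
  | 0 => ContinuousLinearMap.id ℝ (EuclideanSpace ℝ (Fin d))
  | n + 1 => (A n).comp (prodCLM A n)

/-- For a sequence of `d×d` real matrices (acting on Euclidean `ℝ^d`),
`sup_{v ≠ 0} limsup (1/n) log ‖Aⁿ v‖ = limsup (1/n) log ‖Aⁿ‖` (operator norm), with values
in `[-∞,+∞]` and the convention `log 0 = -∞`; moreover the supremum is attained at a unit
vector. -/
theorem stmt13 (d : ℕ) (hd : 1 ≤ d)
    (A : ℕ → (EuclideanSpace ℝ (Fin d) →L[ℝ] EuclideanSpace ℝ (Fin d))) :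
    (⨆ v : {v : EuclideanSpace ℝ (Fin d) // v ≠ 0},
        limsup (fun n : ℕ => elog ‖(prodCLM A n) v.1‖ / (n : EReal)) atTop)
      = limsup (fun n : ℕ => elog ‖prodCLM A n‖ / (n : EReal)) atTop ∧
    ∃ v : EuclideanSpace ℝ (Fin d), ‖v‖ = 1 ∧
      limsup (fun n : ℕ => elog ‖(prodCLM A n) v‖ / (n : EReal)) atTop
        = limsup (fun n : ℕ => elog ‖prodCLM A n‖ / (n : EReal)) atTop := by
  have hne : (Finset.univ : Finset (Fin d)).Nonempty := ⟨⟨0, hd⟩, Finset.mem_univ _⟩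
  set e : Fin d → EuclideanSpace ℝ (Fin d) := fun i => EuclideanSpace.single i (1:ℝ) with he
  have he_norm : ∀ i, ‖e i‖ = 1 := fun i => by
    rw [he]; simp [EuclideanSpace.norm_single]
  have he_ne : ∀ i, e i ≠ 0 := fun i => by
    intro h0
    have := he_norm i
    rw [h0, norm_zero] at this
    norm_num at this
  set P := prodCLM A with hP
  set Li : EuclideanSpace ℝ (Fin d) → EReal :=
    fun v => limsup (fun n : ℕ => elog ‖(P n) v‖ / (n : EReal)) atTop with hLi
  set L : EReal := limsup (fun n : ℕ => elog ‖P n‖ / (n : EReal)) atTop with hL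
  -- Step 1
  have step1 : ∀ v : EuclideanSpace ℝ (Fin d), v ≠ 0 → Li v ≤ L := by
    intro v hv
    apply limsupA _ _ (fun n => norm_nonneg _) (fun n => norm_nonneg _) ‖v‖ (norm_pos_iff.2 hv)
    intro n
    rw [mul_comm]
    exact (P n).le_opNorm v
  -- Step 2
  have step2 : L ≤ limsup (fun n : ℕ =>
      elog (Finset.univ.sup' hne (fun i => ‖(P n) (e i)‖)) / (n : EReal)) atTop := by
    apply limsupA _ _ (fun n => norm_nonneg _)
    · intro n
      obtain ⟨i₀, -⟩ := hne
      exact le_trans (norm_nonneg _)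
        (Finset.le_sup' (fun i => ‖(P n) (e i)‖) (Finset.mem_univ i₀))
    · exact_mod_cast Nat.cast_pos.2 hd
    · intro n
      exact opnorm_le_bound' hne (P n)
  -- Step 3
  have step3 : (fun n : ℕ => elog (Finset.univ.sup' hne (fun i => ‖(P n) (e i)‖)) / (n : EReal))
      = fun n : ℕ => Finset.univ.sup' hne (fun i => elog ‖(P n) (e i)‖ / (n : EReal)) := by
    funext n
    have hn0 : (0 : EReal) ≤ (n : EReal) := by
      rw [← EReal.coe_coe_eq_natCast]
      exact EReal.coe_nonneg.2 (Nat.cast_nonneg n)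
    apply le_antisymm
    · obtain ⟨i₁, -, hi₁⟩ := Finset.exists_mem_eq_sup' hne (fun i => ‖(P n) (e i)‖)
      rw [hi₁]
      exact Finset.le_sup' (fun i => elog ‖(P n) (e i)‖ / (n : EReal)) (Finset.mem_univ i₁)
    · apply Finset.sup'_le
      intro i _
      exact EReal.div_le_div_right_of_nonneg hn0
        (elog_mono (norm_nonneg _)
          (Finset.le_sup' (fun j => ‖(P n) (e j)‖) (Finset.mem_univ i)))
  have step3' : limsup (fun n : ℕ =>
      elog (Finset.univ.sup' hne (fun i => ‖(P n) (e i)‖)) / (n : EReal)) atTop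
      = Finset.univ.sup' hne (fun i => Li (e i)) := by
    rw [step3]
    exact my_limsup_finset_sup' Finset.univ hne (fun i => fun n => elog ‖(P n) (e i)‖ / (n : EReal))
  obtain ⟨istar, -, hstar⟩ := Finset.exists_mem_eq_sup' hne (fun i => Li (e i))
  have key : Li (e istar) = L := by
    apply le_antisymm (step1 _ (he_ne istar))
    calc L ≤ _ := step2
    _ = Finset.univ.sup' hne (fun i => Li (e i)) := step3'
    _ = Li (e istar) := hstar
  refine ⟨le_antisymm (iSup_le fun v => step1 v.1 v.2) ?_, e istar, he_norm istar, key⟩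
  calc L = Li (e istar) := key.symm
  _ ≤ ⨆ v : {v : EuclideanSpace ℝ (Fin d) // v ≠ 0}, Li v.1 :=
      le_iSup (fun v : {v : EuclideanSpace ℝ (Fin d) // v ≠ 0} => Li v.1) ⟨e istar, he_ne istar⟩
end
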